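/- arXiv:2305.14013 — 5 statements merged into one kernel-verified Lean document; each statement's English description precedes it below -/
import Mathlib

section
/- For every infinite cardinal κ there are at least κ⁺ distinct topological types of rayless trees of size κ. Precisely: if V is a type of cardinality κ, then the quotient of the set of rayless trees with vertex set V by the equivalence relation ≡ (same topological type) has cardinality at least κ⁺. -/
universe u v

structure TopMinorEmb {V : Type u} {W : Type v} (H : SimpleGraph V) (G : SimpleGraph W) where
  toFun : V → W
  inj : Function.Injective toFun
  path : ∀ ⦃a b : V⦄, H.Adj a b → G.Walk (toFun a) (toFun b)
  path_isPath : ∀ ⦃a b : V⦄ (h : H.Adj a b), (path h).IsPath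
  path_symm : ∀ ⦃a b : V⦄ (h : H.Adj a b), path h.symm = (path h).reverse
  internal_avoid_image : ∀ ⦃a b : V⦄ (h : H.Adj a b) (w : W),
      w ∈ (path h).support → w ≠ toFun a → w ≠ toFun b → ∀ x : V, toFun x ≠ w
  internally_disjoint : ∀ ⦃a b a' b' : V⦄ (h : H.Adj a b) (h' : H.Adj a' b'),
      s(a, b) ≠ s(a', b') → ∀ w : W,
        w ∈ (path h).support → w ∈ (path h').support → w = toFun a ∨ w = toFun b

def TopMinorLE {V : Type u} {W : Type v} (H : SimpleGraph V) (G : SimpleGraph W) : Prop :=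
  Nonempty (TopMinorEmb H G)

open SimpleGraph

/-- single-edge-path embedding from an injective edge-preserving map -/
def TopMinorEmb.ofHom {V : Type u} {W : Type v} {H : SimpleGraph V} {G : SimpleGraph W}
    (f : V → W) (hf : Function.Injective f)
    (hadj : ∀ ⦃a b : V⦄, H.Adj a b → G.Adj (f a) (f b)) : TopMinorEmb H G where
  toFun := f
  inj := hf
  path := fun {a b} h => Walk.cons (hadj h) Walk.nil
  path_isPath := fun {a b} h => by
    simp only [Walk.cons_isPath_iff]
    refine ⟨Walk.IsPath.nil, ?_⟩
    simp only [Walk.support_nil, List.mem_singleton]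
    exact fun e => h.ne (hf e)
  path_symm := fun {a b} h => by simp
  internal_avoid_image := fun {a b} h w hw hwa hwb x => by
    have hw' : w ∈ [f a, f b] := hw
    rcases List.mem_pair.mp hw' with rfl | rfl
    · exact absurd rfl hwa
    · exact absurd rfl hwb
  internally_disjoint := fun {a b a' b'} h h' hne w hw hw' => by
    have hw2 : w ∈ [f a, f b] := hw
    rcases List.mem_pair.mp hw2 with rfl | rfl
    · exact Or.inl rfl
    · exact Or.inr rfl

def del {W : Type u} (G : SimpleGraph W) (S : Finset W) : SimpleGraph W where
  Adj x y := G.Adj x y ∧ x ∉ S ∧ y ∉ S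
  symm := ⟨fun x y ⟨h, hx, hy⟩ => ⟨h.symm, hy, hx⟩⟩
  loopless := ⟨fun x ⟨h, _, _⟩ => G.loopless.irrefl x h⟩

lemma del_adj {W : Type u} {G : SimpleGraph W} {S : Finset W} {x y : W} :
    (del G S).Adj x y ↔ G.Adj x y ∧ x ∉ S ∧ y ∉ S := Iff.rfl

def comp {W : Type u} (G : SimpleGraph W) (S : Finset W) (v : W) : SimpleGraph W where
  Adj x y := (del G S).Adj x y ∧ (del G S).Reachable v x ∧ (del G S).Reachable v y
  symm := ⟨fun x y ⟨h, hx, hy⟩ => ⟨h.symm, hy, hx⟩⟩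
  loopless := ⟨fun x ⟨h, _, _⟩ => (del G S).loopless.irrefl x h⟩

lemma comp_adj {W : Type u} {G : SimpleGraph W} {S : Finset W} {v x y : W} :
    (comp G S v).Adj x y ↔
      (del G S).Adj x y ∧ (del G S).Reachable v x ∧ (del G S).Reachable v y := Iff.rfl

def rankLE (α : Ordinal.{u}) {W : Type u} (G : SimpleGraph W) : Prop :=
  G = ⊥ ∨ ∃ S : Finset W, ∀ v ∉ S, ∃ β : Ordinal.{u}, ∃ _ : β < α, rankLE β (comp G S v)
termination_by α

lemma rankLE_def {α : Ordinal.{u}} {W : Type u} {G : SimpleGraph W} :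
    rankLE α G ↔
      (G = ⊥ ∨ ∃ S : Finset W, ∀ v ∉ S, ∃ β : Ordinal.{u}, ∃ _ : β < α, rankLE β (comp G S v)) := by
  rw [rankLE]

lemma rankLE_bot {α : Ordinal.{u}} {W : Type u} : rankLE α (⊥ : SimpleGraph W) :=
  rankLE_def.mpr (Or.inl rfl)

lemma walk_bot {W : Type u} {x y : W} (p : (⊥ : SimpleGraph W).Walk x y) : x = y := by
  cases p with
  | nil => rfl
  | cons h _ => exact absurd h (by simp)

lemma TopMinorEmb.eq_bot {V : Type u} {W : Type v} {H : SimpleGraph V}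
    (E : TopMinorEmb H (⊥ : SimpleGraph W)) : H = ⊥ := by
  ext a b
  simp only [SimpleGraph.bot_adj, iff_false]
  intro h
  have := walk_bot (E.path h)
  exact (H.loopless.irrefl a (E.inj this ▸ h))
lemma transfer_congr {W : Type u} {G C : SimpleGraph W} {a b : W} {p q : G.Walk a b}
    (h : p = q) (hp : ∀ e, e ∈ p.edges → e ∈ C.edgeSet) :
    p.transfer C hp = q.transfer C (h ▸ hp) := by subst h; rfl

lemma del_reach {W : Type u} {G : SimpleGraph W} {S : Finset W} {x y : W}
    (p : G.Walk x y) (hp : ∀ u ∈ p.support, u ∉ S) :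
    ∀ u ∈ p.support, (del G S).Reachable x u := by
  induction p with
  | nil =>
    intro u hu
    rw [Walk.support_nil, List.mem_singleton] at hu
    subst hu; rfl
  | @cons a c d h q ih =>
    intro u hu
    rw [Walk.support_cons, List.mem_cons] at hu
    rcases hu with rfl | hu
    · rfl
    · have hadj : (del G S).Adj a c :=
        ⟨h, hp a (Walk.start_mem_support _), hp c (by rw [Walk.support_cons]; exact List.mem_cons_of_mem _ (Walk.start_mem_support _))⟩
      exact hadj.reachable.trans
        (ih (fun z hz => hp z (by rw [Walk.support_cons]; exact List.mem_cons_of_mem _ hz)) u hu)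

section Mono

variable {V : Type u} {W : Type u} {H : SimpleGraph V} {G : SimpleGraph W}
  (E : TopMinorEmb H G) (S : Finset W) (S' : Finset V)

variable (key : ∀ ⦃a b : V⦄ (h : H.Adj a b), a ∉ S' → b ∉ S' →
    ∀ u ∈ (E.path h).support, u ∉ S)

include key

lemma mreach : ∀ {v x : V}, (del H S').Reachable v x →
    (del G S).Reachable (E.toFun v) (E.toFun x) := by
  intro v x hr
  obtain ⟨q⟩ := hr
  induction q with
  | nil => exact Reachable.refl _
  | @cons a c d h q ih =>
    obtain ⟨hH, ha, hc⟩ := h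
    exact (del_reach (E.path hH) (key hH ha hc) _ (Walk.end_mem_support _)).trans ih

lemma edges_sub {v x y : V} (hH : H.Adj x y) (hx : x ∉ S') (hy : y ∉ S')
    (hrx : (del H S').Reachable v x) :
    ∀ e, e ∈ (E.path hH).edges → e ∈ (comp G S (E.toFun v)).edgeSet := by
  have hreach : ∀ u ∈ (E.path hH).support, (del G S).Reachable (E.toFun v) u :=
    fun u hu => (mreach E S S' key hrx).trans (del_reach (E.path hH) (key hH hx hy) u hu)
  intro e
  induction e with
  | _ p q =>
    intro he
    rw [mem_edgeSet, comp_adj]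
    exact ⟨⟨(E.path hH).edges_subset_edgeSet he,
        key hH hx hy p (Walk.fst_mem_support_of_mem_edges _ he),
        key hH hx hy q (Walk.snd_mem_support_of_mem_edges _ he)⟩,
      hreach p (Walk.fst_mem_support_of_mem_edges _ he),
      hreach q (Walk.snd_mem_support_of_mem_edges _ he)⟩

def TopMinorEmb.compRestrict (v : V) :
    TopMinorEmb (comp H S' v) (comp G S (E.toFun v)) where
  toFun := E.toFun
  inj := E.inj
  path := fun {x y} h =>
    (E.path h.1.1).transfer _ (edges_sub E S S' key h.1.1 h.1.2.1 h.1.2.2 h.2.1)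
  path_isPath := fun {x y} h => Walk.IsPath.transfer _ (E.path_isPath h.1.1)
  path_symm := fun {x y} h => by
    rw [Walk.reverse_transfer]
    exact transfer_congr (E.path_symm h.1.1) _
  internal_avoid_image := fun {x y} h w hw hwa hwb z =>
    E.internal_avoid_image h.1.1 w (by rwa [Walk.support_transfer] at hw) hwa hwb z
  internally_disjoint := fun {a b a' b'} h h' hne w hw hw' =>
    E.internally_disjoint h.1.1 h'.1.1 hne w (by rwa [Walk.support_transfer] at hw)
      (by rwa [Walk.support_transfer] at hw')

end Mono

theorem rankLE_mono (α : Ordinal.{u}) :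
    ∀ {V W : Type u} [Infinite W] (H : SimpleGraph V) (G : SimpleGraph W),
      TopMinorLE H G → rankLE α G → rankLE α H := by
  induction α using Ordinal.induction with
  | _ α IH =>
    intro V W _ H G hle hG
    obtain ⟨E⟩ := hle
    rcases rankLE_def.mp hG with rfl | ⟨S, hS⟩
    · rw [E.eq_bot]; exact rankLE_bot
    classical
    obtain ⟨w0, hw0⟩ := Infinite.exists_notMem_finset S
    obtain ⟨β₀, hβ₀, -⟩ := hS w0 hw0
    have hα : (0 : Ordinal) < α := lt_of_le_of_lt zero_le hβ₀
    set f := E.toFun with hf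
    let Bad : W → Set V := fun s =>
      {a | ∃ b, ∃ h : H.Adj a b, s ∈ (E.path h).support ∧ s ≠ f a ∧ s ≠ f b}
    have hBad : ∀ s, (Bad s).Finite := by
      intro s
      rcases Set.eq_empty_or_nonempty (Bad s) with he | ⟨a₀, b₀, h₀, hs₀, hna₀, hnb₀⟩
      · rw [he]; exact Set.finite_empty
      · refine Set.Finite.subset ((Set.finite_singleton b₀).insert a₀) ?_
        rintro a ⟨b, h, hs, hna, hnb⟩
        by_cases hsym : s(a, b) = s(a₀, b₀)
        · rcases Sym2.eq_iff.mp hsym with ⟨rfl, rfl⟩ | ⟨rfl, rfl⟩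
          · exact Set.mem_insert _ _
          · exact Set.mem_insert_of_mem _ rfl
        · rcases E.internally_disjoint h h₀ hsym s hs hs₀ with h1 | h1
          · exact absurd h1 hna
          · exact absurd h1 hnb
    have hA : ((f ⁻¹' ↑S) ∪ ⋃ s ∈ (S : Set W), Bad s).Finite :=
      Set.Finite.union (Set.Finite.preimage E.inj.injOn S.finite_toSet)
        (Set.Finite.biUnion S.finite_toSet fun s _ => hBad s)
    set S' : Finset V := hA.toFinset with hS'def
    have hmemS' : ∀ {a : V}, a ∈ S' ↔ (f a ∈ S ∨ ∃ s ∈ S, a ∈ Bad s) := by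
      intro a
      rw [hS'def, Set.Finite.mem_toFinset, Set.mem_union, Set.mem_preimage, Finset.mem_coe]
      simp only [Set.mem_iUnion, Finset.mem_coe, exists_prop]
    have key : ∀ ⦃a b : V⦄ (h : H.Adj a b), a ∉ S' → b ∉ S' →
        ∀ u ∈ (E.path h).support, u ∉ S := by
      intro a b h ha hb u hu huS
      by_cases h1 : u = f a
      · exact ha (hmemS'.mpr (Or.inl (h1 ▸ huS)))
      by_cases h2 : u = f b
      · exact hb (hmemS'.mpr (Or.inl (h2 ▸ huS)))
      · exact ha (hmemS'.mpr (Or.inr ⟨u, huS, b, h, hu, h1, h2⟩))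
    refine rankLE_def.mpr (Or.inr ⟨S', fun v hv => ?_⟩)
    have hfv : f v ∉ S := fun hc => hv (hmemS'.mpr (Or.inl hc))
    obtain ⟨β, hβ, hcompG⟩ := hS (f v) hfv
    exact ⟨β, hβ, IH β hβ _ _ ⟨TopMinorEmb.compRestrict E S S' key v⟩ hcompG⟩

def TopEquiv {V : Type u} {W : Type v} (G : SimpleGraph V) (H : SimpleGraph W) : Prop :=
  TopMinorLE G H ∧ TopMinorLE H G

def HasRay {V : Type u} (G : SimpleGraph V) : Prop :=
  ∃ f : ℕ → V, Function.Injective f ∧ ∀ n, G.Adj (f n) (f (n + 1))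

def Rayless {V : Type u} (G : SimpleGraph V) : Prop := ¬ HasRay G

lemma rankLE_iff_of_topEquiv {V W : Type u} [Infinite V] [Infinite W]
    {G : SimpleGraph V} {H : SimpleGraph W} (h : TopEquiv G H) (α : Ordinal.{u}) :
    rankLE α G ↔ rankLE α H :=
  ⟨rankLE_mono α H G h.2, rankLE_mono α G H h.1⟩

lemma length_zero_of_nodup {W : Type u} {G : SimpleGraph W} {a : W} (r : G.Walk a a)
    (h : r.support.Nodup) : r.length = 0 := by
  cases r with
  | nil => rfl
  | cons hadj r' =>
    exfalso
    rw [SimpleGraph.Walk.support_cons, List.nodup_cons] at h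
    exact h.1 (SimpleGraph.Walk.end_mem_support r')

lemma no_cycle_at_max {W : Type u} {G : SimpleGraph W} (ht : W → ℕ)
    (hne : ∀ ⦃x y⦄, G.Adj x y → ht x ≠ ht y)
    (huniq : ∀ v : W, {w | G.Adj v w ∧ ht w < ht v}.Subsingleton)
    {w : W} (c : G.Walk w w) (hc : c.IsCycle)
    (hmax : ∀ x ∈ c.support, ht x ≤ ht w) : False := by
  cases c with
  | nil => exact hc.ne_nil rfl
  | @cons _ u _ h p =>
    have h3 := hc.three_le_length
    rw [SimpleGraph.Walk.length_cons] at h3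
    have hp3 : 2 ≤ p.length := by omega
    cases hrev : p.reverse with
    | nil =>
      have : p.length = 0 := by
        rw [← SimpleGraph.Walk.length_reverse, hrev]; rfl
      omega
    | @cons _ z _ h' q =>
      have hzmem : z ∈ p.support := by
        have : z ∈ p.reverse.support := by
          rw [hrev, SimpleGraph.Walk.support_cons]
          exact List.mem_cons_of_mem _ (SimpleGraph.Walk.start_mem_support _)
        rwa [SimpleGraph.Walk.support_reverse, List.mem_reverse] at this
      have humem : u ∈ p.support := SimpleGraph.Walk.start_mem_support _
      have hmax' : ∀ x ∈ p.support, ht x ≤ ht w := by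
        intro x hx
        exact hmax x (by rw [SimpleGraph.Walk.support_cons]; exact List.mem_cons_of_mem _ hx)
      have hu : ht u < ht w := (hmax' u humem).lt_of_ne (Ne.symm (hne h))
      have hz : ht z < ht w := (hmax' z hzmem).lt_of_ne (Ne.symm (hne h'))
      have huz : u = z := huniq w ⟨h, hu⟩ ⟨h', hz⟩
      subst huz
      have hp : p = q.reverse.append (SimpleGraph.Walk.cons h'.symm SimpleGraph.Walk.nil) := by
        have h2 := congrArg SimpleGraph.Walk.reverse hrev
        rwa [SimpleGraph.Walk.reverse_reverse, SimpleGraph.Walk.reverse_cons] at h2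
      have hnd : p.support.Nodup := by
        have := hc.support_nodup
        rwa [SimpleGraph.Walk.support_cons, List.tail_cons] at this
      rw [hp, SimpleGraph.Walk.support_append] at hnd
      have hqnd : q.reverse.support.Nodup := (List.nodup_append.mp hnd).1
      have hq0 : q.reverse.length = 0 := length_zero_of_nodup _ hqnd
      have : p.length = q.reverse.length + 1 := by
        rw [hp, SimpleGraph.Walk.length_append]; rfl
      omega

lemma acyclic_of_ht {W : Type u} (G : SimpleGraph W) (ht : W → ℕ)
    (hne : ∀ ⦃x y⦄, G.Adj x y → ht x ≠ ht y)
    (huniq : ∀ v : W, {w | G.Adj v w ∧ ht w < ht v}.Subsingleton) :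
    G.IsAcyclic := by
  classical
  intro v0 c hc
  obtain ⟨w, hw0⟩ : ∃ w, c.support.argmax ht = some w := by
    cases h : c.support.argmax ht with
    | none =>
      exfalso
      rw [List.argmax_eq_none] at h
      exact (c.support_ne_nil) h
    | some w => exact ⟨w, rfl⟩
  have hw : w ∈ c.support.argmax ht := Option.mem_def.mpr hw0
  have hwmem : w ∈ c.support := List.argmax_mem hw
  have hmax : ∀ x ∈ c.support, ht x ≤ ht w := fun x hx => List.le_of_mem_argmax hx hw
  refine no_cycle_at_max ht hne huniq (c.rotate w hwmem) (hc.rotate hwmem) ?_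
  intro x hx
  apply hmax
  rw [SimpleGraph.Walk.support_eq_cons (c.rotate w hwmem)] at hx
  rcases List.mem_cons.mp hx with rfl | hx
  · exact hwmem
  · exact List.mem_of_mem_tail
      (((SimpleGraph.Walk.support_rotate c w hwmem).mem_iff).mp hx)

section Trees

open SimpleGraph

variable {O : Type u} [LinearOrder O] [IsWellOrder O (· < ·)] {I : Type u}

/-- validity: strictly increasing first components (head is smallest = deepest) -/
def vld : List (O × I) → Prop := List.IsChain (fun p q => p.1 < q.1)

def bnd (c : WithTop O) (l : List (O × I)) : Prop := ∀ p ∈ l, (p.1 : WithTop O) < c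

lemma vld_tail {x : O × I} {l : List (O × I)} (h : vld (x :: l)) : vld l :=
  List.IsChain.tail h

lemma bnd_tail {c : WithTop O} {x : O × I} {l : List (O × I)} (h : bnd c (x :: l)) : bnd c l :=
  fun p hp => h p (List.mem_cons_of_mem _ hp)

/-- The rayless tree of rank `ordOf c` : lists bounded by `c`, cons-at-head edges. -/
def RR (c : WithTop O) : SimpleGraph (List (O × I)) where
  Adj l m := (∃ x, m = x :: l ∧ vld m ∧ bnd c m) ∨ (∃ x, l = x :: m ∧ vld l ∧ bnd c l)
  symm := by
    constructor
    rintro l m (⟨x, h⟩ | ⟨x, h⟩)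
    · exact Or.inr ⟨x, h⟩
    · exact Or.inl ⟨x, h⟩
  loopless := by
    constructor
    rintro l (⟨x, h, -⟩ | ⟨x, h, -⟩) <;>
      exact absurd (congrArg List.length h) (by simp)

def ordOf : WithTop O → Ordinal.{u}
  | ⊤ => Ordinal.type ((· < ·) : O → O → Prop)
  | (some b) => Ordinal.typein ((· < ·) : O → O → Prop) b

lemma ordOf_lt {b : O} {c : WithTop O} (h : (b : WithTop O) < c) :
    ordOf (b : WithTop O) < ordOf c := by
  cases c with
  | top => exact Ordinal.typein_lt_type _ b
  | coe c' =>
    exact (Ordinal.typein_lt_typein _).mpr (WithTop.coe_lt_coe.mp h)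

lemma ordOf_le_type (c : WithTop O) : ordOf c ≤ Ordinal.type ((· < ·) : O → O → Prop) := by
  cases c with
  | top => exact le_rfl
  | coe c' => exact (Ordinal.typein_lt_type _ c').le

lemma exists_ordOf {c : WithTop O} {β : Ordinal.{u}} (h : β < ordOf c) :
    ∃ b : O, (b : WithTop O) < c ∧ ordOf (b : WithTop O) = β := by
  have hβ : β < Ordinal.type ((· < ·) : O → O → Prop) := lt_of_lt_of_le h (ordOf_le_type c)
  refine ⟨Ordinal.enum _ ⟨β, hβ⟩, ?_, Ordinal.typein_enum _ _⟩
  cases c with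
  | top => exact WithTop.coe_lt_top _
  | coe c' =>
    rw [WithTop.coe_lt_coe]
    have : Ordinal.typein ((· < ·) : O → O → Prop) (Ordinal.enum _ ⟨β, hβ⟩) <
        Ordinal.typein ((· < ·) : O → O → Prop) c' := by
      rw [Ordinal.typein_enum]; exact h
    exact (Ordinal.typein_lt_typein _).mp this

end Trees

section Trees2

open SimpleGraph

variable {O : Type u} [LinearOrder O] [IsWellOrder O (· < ·)] {I : Type u} [DecidableEq I]

local notation "M" => List (O × I)

instance : IsTrans (O × I) (fun p q => p.1 < q.1) :=
  ⟨fun _ _ _ h1 h2 => lt_trans h1 h2⟩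

lemma vld_dropLast {l : M} (h : vld l) : vld l.dropLast := by
  rcases eq_or_ne l [] with rfl | hne
  · exact h
  · have hd := List.dropLast_append_getLast? _ (List.getLast?_eq_getLast_of_ne_nil hne)
    rw [← hd] at h
    exact (List.isChain_append.mp h).1

lemma vld_last_gt {l : M} {z : O × I} (h : vld l) (hz : l.getLast? = some z) :
    ∀ p ∈ l.dropLast, p.1 < z.1 := by
  have hd := List.dropLast_append_getLast? _ hz
  rw [← hd, vld, List.isChain_iff_pairwise] at h
  intro p hp
  exact (List.pairwise_append.mp h).2.2 p hp z (List.mem_singleton_self z)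

lemma dropLast_not_ends {l : M} {z : O × I} (h : vld l) (hz : l.getLast? = some z) :
    l.dropLast.getLast? ≠ some z := by
  intro hc
  have := vld_last_gt h hz z (by
    have := List.dropLast_append_getLast? _ hc
    conv_lhs => rw [← this]
    exact List.mem_append_right _ (List.mem_singleton_self z))
  exact lt_irrefl _ this

lemma RR_adj_vld {c : WithTop O} {l m : M} (h : (RR c).Adj l m) :
    (vld l ∧ bnd c l) ∧ (vld m ∧ bnd c m) := by
  rcases h with ⟨x, rfl, hv, hb⟩ | ⟨x, rfl, hv, hb⟩
  · exact ⟨⟨hv.tail, bnd_tail hb⟩, ⟨hv, hb⟩⟩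
  · exact ⟨⟨hv, hb⟩, ⟨hv.tail, bnd_tail hb⟩⟩

lemma getLast?_eq_of_del_reach {c : WithTop O} {v x : M}
    (h : (del (RR c) ({[]} : Finset M)).Reachable v x) : v.getLast? = x.getLast? := by
  obtain ⟨q⟩ := h
  induction q with
  | nil => rfl
  | @cons a a' d hadj q ih =>
    refine Eq.trans ?_ ih
    obtain ⟨hRR, ha, ha'⟩ := hadj
    rw [Finset.mem_singleton] at ha ha'
    rcases hRR with ⟨x', rfl, -, -⟩ | ⟨x', rfl, -, -⟩
    · -- a' = x' :: a, a ≠ []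
      obtain ⟨y, t, rfl⟩ := List.exists_cons_of_ne_nil ha
      exact (List.getLast?_cons_cons).symm
    · obtain ⟨y, t, rfl⟩ := List.exists_cons_of_ne_nil ha'
      exact List.getLast?_cons_cons

lemma comp_eq_bot_of_isolated {W : Type u} {G : SimpleGraph W} {S : Finset W} {v : W}
    (h : ∀ x, ¬ (del G S).Adj v x) : comp G S v = ⊥ := by
  ext x y
  simp only [SimpleGraph.bot_adj, iff_false]
  rintro ⟨hadj, hx, -⟩
  obtain ⟨q⟩ := hx
  cases q with
  | nil => exact h y hadj
  | cons h' q => exact h _ h'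

/-- the involution swapping a `z`-suffix. -/
def swapEnd (z : O × I) (l : M) : M :=
  if l.getLast? = some z then (if l.dropLast.getLast? = some z then l else l.dropLast)
  else l ++ [z]

lemma swapEnd_invol (z : O × I) : Function.Involutive (swapEnd z) := by
  intro l
  by_cases h1 : l.getLast? = some z
  · by_cases h2 : l.dropLast.getLast? = some z
    · have e1 : swapEnd z l = l := by rw [swapEnd, if_pos h1, if_pos h2]
      rw [e1, e1]
    · have e1 : swapEnd z l = l.dropLast := by rw [swapEnd, if_pos h1, if_neg h2]
      have hl : l.dropLast ++ [z] = l := List.dropLast_append_getLast? _ h1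
      rw [e1, swapEnd, if_neg h2, hl]
  · have e1 : swapEnd z l = l ++ [z] := by rw [swapEnd, if_neg h1]
    have hgl : (l ++ [z]).getLast? = some z := List.getLast?_concat
    have hdl : (l ++ [z]).dropLast = l := List.dropLast_concat
    rw [e1, swapEnd, if_pos hgl, hdl, if_neg h1]

lemma swapEnd_of_ends {z : O × I} {l : M} (hv : vld l) (hz : l.getLast? = some z) :
    swapEnd z l = l.dropLast := by
  rw [swapEnd, if_pos hz, if_neg (dropLast_not_ends hv hz)]

end Trees2

section Trees3

open SimpleGraph

variable {O : Type u} [LinearOrder O] [IsWellOrder O (· < ·)] {I : Type u} [DecidableEq I]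

local notation "M" => List (O × I)

lemma infinite_list {X : Type u} (x : X) : Infinite (List X) :=
  Infinite.of_injective (fun n => List.replicate n x)
    (fun a b h => by simpa using congrArg List.length h)

/-- upper bound embedding: a deleted component embeds into the corresponding `RR`. -/
noncomputable def emb_comp_to_RR {c : WithTop O} {v : M} {z : O × I}
    (hvv : vld v) (hvb : bnd c v) (hz : v.getLast? = some z) :
    TopMinorEmb (comp (RR c) ({[]} : Finset M) v) (RR (I := I) (some z.1)) := by
  refine TopMinorEmb.ofHom (swapEnd z) (swapEnd_invol z).injective ?_
  intro l m h
  obtain ⟨⟨hRR, hl0, hm0⟩, hrl, hrm⟩ := h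
  rw [Finset.mem_singleton] at hl0 hm0
  have hlz : l.getLast? = some z := (getLast?_eq_of_del_reach hrl).symm.trans hz
  have hmz : m.getLast? = some z := (getLast?_eq_of_del_reach hrm).symm.trans hz
  obtain ⟨⟨hvl, hbl⟩, hvm, hbm⟩ := RR_adj_vld hRR
  rw [swapEnd_of_ends hvl hlz, swapEnd_of_ends hvm hmz]
  rcases hRR with ⟨x, rfl, hv2, hb2⟩ | ⟨x, rfl, hv2, hb2⟩
  · left
    rw [List.dropLast_cons_of_ne_nil hl0]
    refine ⟨x, rfl, ?_, ?_⟩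
    · rw [← List.dropLast_cons_of_ne_nil hl0]
      exact vld_dropLast hv2
    · rw [← List.dropLast_cons_of_ne_nil hl0]
      intro p hp
      exact WithTop.coe_lt_coe.mpr (vld_last_gt hv2 hmz p hp)
  · right
    rw [List.dropLast_cons_of_ne_nil hm0]
    refine ⟨x, rfl, ?_, ?_⟩
    · rw [← List.dropLast_cons_of_ne_nil hm0]
      exact vld_dropLast hv2
    · rw [← List.dropLast_cons_of_ne_nil hm0]
      intro p hp
      exact WithTop.coe_lt_coe.mpr (vld_last_gt hv2 hlz p hp)

lemma reach_append {c : WithTop O} {S : Finset M} {z : O × I}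
    (hfresh : ∀ t : M, z ∈ t → t ∉ S) :
    ∀ (l : M), vld (l ++ [z]) → bnd c (l ++ [z]) →
      (del (RR c) S).Reachable [z] (l ++ [z]) := by
  intro l
  induction l with
  | nil => intro _ _; exact Reachable.refl _
  | cons x t ih =>
    intro hv hb
    have h1 : vld (t ++ [z]) := (vld_tail (x := x) hv)
    have hb1 : bnd c (t ++ [z]) := bnd_tail (x := x) hb
    refine (ih h1 hb1).trans (SimpleGraph.Adj.reachable ?_)
    refine ⟨Or.inl ⟨x, rfl, hv, hb⟩, ?_, ?_⟩
    · exact hfresh _ (List.mem_append_right _ (List.mem_singleton_self _))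
    · exact hfresh _ (List.mem_cons_of_mem _ (List.mem_append_right _ (List.mem_singleton_self _)))

/-- lower bound embedding: a fresh copy of `RR b` inside a deleted component. -/
noncomputable def emb_RR_to_comp {c : WithTop O} {S : Finset M} {b : O}
    (hbc : (b : WithTop O) < c) {i : I}
    (hfresh : ∀ t : M, (b, i) ∈ t → t ∉ S) :
    TopMinorEmb (RR (I := I) (some b)) (comp (RR c) S [(b, i)]) := by
  have hmk : ∀ {l : M}, vld (l ++ [(b, i)]) → bnd c (l ++ [(b, i)]) →
      (del (RR c) S).Reachable [(b, i)] (l ++ [(b, i)]) := fun hv hb => reach_append hfresh _ hv hb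
  have hvext : ∀ {l : M}, vld l → bnd (some b) l → vld (l ++ [(b, i)]) := by
    intro l hv hb
    rw [vld, List.isChain_append]
    refine ⟨hv, List.isChain_singleton _, ?_⟩
    intro p hp q hq
    rw [List.head?_cons, Option.mem_some_iff] at hq
    subst hq
    exact WithTop.coe_lt_coe.mp (hb p (List.mem_of_getLast? hp))
  have hbext : ∀ {l : M}, bnd (some b) l → bnd c (l ++ [(b, i)]) := by
    intro l hb p hp
    rcases List.mem_append.mp hp with hp | hp
    · exact lt_trans (lt_of_lt_of_le (hb p hp) le_rfl) hbc
    · rw [List.mem_singleton] at hp; subst hp; exact hbc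
  refine TopMinorEmb.ofHom (fun l => l ++ [(b, i)]) (List.append_left_injective _) ?_
  intro l m h
  rcases h with ⟨x, rfl, hv, hb'⟩ | ⟨x, rfl, hv, hb'⟩
  · have hvm : vld ((x :: l) ++ [(b, i)]) := hvext hv hb'
    have hbm : bnd c ((x :: l) ++ [(b, i)]) := hbext hb'
    refine ⟨⟨Or.inl ⟨x, rfl, hvm, hbm⟩, ?_, ?_⟩, hmk (vld_tail hvm) (bnd_tail hbm), hmk hvm hbm⟩
    · exact hfresh _ (List.mem_append_right _ (List.mem_singleton_self _))
    · exact hfresh _ (List.mem_cons_of_mem _ (List.mem_append_right _ (List.mem_singleton_self _)))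
  · have hvl : vld ((x :: m) ++ [(b, i)]) := hvext hv hb'
    have hbl : bnd c ((x :: m) ++ [(b, i)]) := hbext hb'
    refine ⟨⟨Or.inr ⟨x, rfl, hvl, hbl⟩, ?_, ?_⟩, hmk hvl hbl, hmk (vld_tail hvl) (bnd_tail hbl)⟩
    · exact hfresh _ (List.mem_cons_of_mem _ (List.mem_append_right _ (List.mem_singleton_self _)))
    · exact hfresh _ (List.mem_append_right _ (List.mem_singleton_self _))

theorem rr_up (γ : Ordinal.{u}) :
    ∀ c : WithTop O, ordOf c = γ → rankLE γ (RR (I := I) c) := by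
  induction γ using Ordinal.induction with
  | _ γ IH =>
    rintro c rfl
    by_cases hbot : RR (I := I) c = ⊥
    · rw [hbot]; exact rankLE_bot
    · obtain ⟨l, m, hlm⟩ : ∃ l m, (RR (I := I) c).Adj l m := by
        by_contra h
        push_neg at h
        exact hbot (by ext x y; simp only [SimpleGraph.bot_adj, iff_false]; exact h x y)
      obtain ⟨x0, hx0⟩ : ∃ x0 : O × I, (x0.1 : WithTop O) < c := by
        rcases hlm with ⟨x, rfl, -, hb⟩ | ⟨x, rfl, -, hb⟩ <;>
          exact ⟨x, hb x (List.mem_cons_self)⟩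
      haveI : Infinite M := infinite_list x0
      have hpos : (0 : Ordinal) < ordOf c :=
        lt_of_le_of_lt zero_le (ordOf_lt hx0)
      refine rankLE_def.mpr (Or.inr ⟨{[]}, fun v hv => ?_⟩)
      rw [Finset.mem_singleton] at hv
      by_cases hvv : vld v ∧ bnd c v
      · have hz : v.getLast? = some (v.getLast hv) := List.getLast?_eq_getLast_of_ne_nil hv
        have hbc : ((v.getLast hv).1 : WithTop O) < c := hvv.2 _ (List.getLast_mem hv)
        refine ⟨ordOf (some (v.getLast hv).1), ordOf_lt hbc, ?_⟩
        exact rankLE_mono _ _ _ ⟨emb_comp_to_RR hvv.1 hvv.2 hz⟩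
          (IH _ (ordOf_lt hbc) (some (v.getLast hv).1) rfl)
      · refine ⟨0, hpos, ?_⟩
        rw [comp_eq_bot_of_isolated (fun x hx => hvv ((RR_adj_vld hx.1).1))]
        exact rankLE_bot

theorem rr_low [Infinite I] (γ : Ordinal.{u}) :
    ∀ c : WithTop O, ordOf c = γ → ∀ β < γ, ¬ rankLE β (RR (I := I) c) := by
  induction γ using Ordinal.induction with
  | _ γ IH =>
    rintro c rfl β hβ hrank
    obtain ⟨b, hbc, hbβ⟩ := exists_ordOf hβ
    obtain ⟨i0⟩ : Nonempty I := inferInstance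
    haveI : Infinite M := infinite_list ((b, i0) : O × I)
    rcases rankLE_def.mp hrank with hbot | ⟨S, hS⟩
    · have hadj : (RR (I := I) c).Adj [] [(b, i0)] :=
        Or.inl ⟨(b, i0), rfl, List.isChain_singleton _, by
          intro p hp; rw [List.mem_singleton] at hp; subst hp; exact hbc⟩
      rw [hbot] at hadj
      exact hadj
    · have hUfin : (⋃ l ∈ (S : Set M), {j : I | ∃ p : O × I, p ∈ l ∧ p.2 = j}).Finite := by
        refine Set.Finite.biUnion S.finite_toSet (fun l _ => ?_)
        have : {j : I | ∃ p : O × I, p ∈ l ∧ p.2 = j} = Prod.snd '' {p : O × I | p ∈ l} := by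
          ext j; simp [Set.mem_image]
        rw [this]
        exact (l.finite_toSet).image _
      obtain ⟨i, hi⟩ := (hUfin.infinite_compl).nonempty
      have hfresh : ∀ t : M, (b, i) ∈ t → t ∉ S := by
        intro t hbt htS
        exact hi (Set.mem_biUnion htS ⟨(b, i), hbt, rfl⟩)
      have hv : [(b, i)] ∉ S := hfresh _ (List.mem_singleton_self _)
      obtain ⟨γ', hγ', hcv⟩ := hS [(b, i)] hv
      exact IH β hβ (some b) hbβ γ' hγ'
        (rankLE_mono γ' _ _ ⟨emb_RR_to_comp hbc hfresh⟩ hcv)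

end Trees3

section Trees4

open SimpleGraph

variable {O : Type u} [LinearOrder O] [IsWellOrder O (· < ·)] {I : Type u} [DecidableEq I]

local notation "M" => List (O × I)

lemma bnd_top (l : M) : bnd (⊤ : WithTop O) l := fun p _ => WithTop.coe_lt_top _

/-- the full tree: `RR ⊤` with all junk lists attached to the root as leaves. -/
def TT (O : Type u) [LinearOrder O] (I : Type u) : SimpleGraph (List (O × I)) where
  Adj l m := (∃ x, m = x :: l ∧ vld m) ∨ (∃ x, l = x :: m ∧ vld l) ∨
    (l = [] ∧ m ≠ [] ∧ ¬ vld m) ∨ (m = [] ∧ l ≠ [] ∧ ¬ vld l)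
  symm := by
    constructor
    rintro l m (h | h | h | h)
    · exact Or.inr (Or.inl h)
    · exact Or.inl h
    · exact Or.inr (Or.inr (Or.inr h))
    · exact Or.inr (Or.inr (Or.inl h))
  loopless := by
    constructor
    rintro l (⟨x, h, -⟩ | ⟨x, h, -⟩ | ⟨h1, h2, -⟩ | ⟨h1, h2, -⟩)
    · exact absurd (congrArg List.length h) (by simp)
    · exact absurd (congrArg List.length h) (by simp)
    · exact h2 h1
    · exact h2 h1

lemma RR_top_le_TT {l m : M} (h : (RR (I := I) (⊤ : WithTop O)).Adj l m) : (TT O I).Adj l m := by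
  rcases h with ⟨x, h1, h2, -⟩ | ⟨x, h1, h2, -⟩
  · exact Or.inl ⟨x, h1, h2⟩
  · exact Or.inr (Or.inl ⟨x, h1, h2⟩)

lemma TT_adj_of_vld {l m : M} (h : (TT O I).Adj l m) (hl : vld l) (hm : vld m) :
    (RR (I := I) (⊤ : WithTop O)).Adj l m := by
  rcases h with ⟨x, h1, h2⟩ | ⟨x, h1, h2⟩ | ⟨-, -, h3⟩ | ⟨-, -, h3⟩
  · exact Or.inl ⟨x, h1, h2, bnd_top _⟩
  · exact Or.inr ⟨x, h1, h2, bnd_top _⟩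
  · exact absurd hm h3
  · exact absurd hl h3

lemma vld_nil : vld ([] : M) := List.IsChain.nil

lemma reach_root_vld : ∀ l : M, vld l → (TT O I).Reachable l [] := by
  intro l
  induction l with
  | nil => intro _; exact Reachable.refl _
  | cons x t ih =>
    intro hv
    exact (SimpleGraph.Adj.reachable (Or.inr (Or.inl ⟨x, rfl, hv⟩))).trans (ih hv.tail)

lemma reach_root : ∀ l : M, (TT O I).Reachable l [] := by
  intro l
  by_cases hv : vld l
  · exact reach_root_vld l hv
  · have hl : l ≠ [] := fun h => hv (h ▸ vld_nil)
    exact SimpleGraph.Adj.reachable (Or.inr (Or.inr (Or.inr ⟨rfl, hl, hv⟩)))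

lemma TT_connected : (TT O I).Connected := by
  rw [SimpleGraph.connected_iff]
  exact ⟨fun u v => (reach_root u).trans (reach_root v).symm, ⟨[]⟩⟩

lemma TT_acyclic : (TT O I).IsAcyclic := by
  classical
  apply acyclic_of_ht _ List.length
  · rintro x y (⟨z, rfl, -⟩ | ⟨z, rfl, -⟩ | ⟨rfl, hy, -⟩ | ⟨rfl, hx, -⟩)
    · simp
    · simp
    · exact fun h => hy (List.length_eq_zero_iff.mp h.symm)
    · exact fun h => hx (List.length_eq_zero_iff.mp h)
  · intro v x hx y hy
    rcases eq_or_ne v [] with rfl | hv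
    · exact absurd hx.2 (by simp)
    have key : ∀ w, (TT O I).Adj v w → w.length < v.length →
        w = (if vld v then v.tail else []) := by
      intro w hw hlen
      rcases hw with ⟨z, rfl, -⟩ | ⟨z, hz, hvv⟩ | ⟨rfl, -, -⟩ | ⟨rfl, -, hnv⟩
      · simp at hlen
      · rw [if_pos hvv, hz]; rfl
      · exact absurd rfl hv
      · rw [if_neg hnv]
    rw [key x hx.1 hx.2, key y hy.1 hy.2]

lemma TT_junk_nbr {x y : M} (h : (TT O I).Adj x y) (hnv : ¬ vld x) (hne : x ≠ []) :
    y = [] := by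
  rcases h with ⟨z, rfl, hv⟩ | ⟨z, hz, hv⟩ | ⟨rfl, -, -⟩ | ⟨rfl, -, -⟩
  · exact absurd hv.tail hnv
  · exact absurd (hz ▸ hv) hnv
  · exact absurd rfl hne
  · rfl

lemma TT_rayless : Rayless (TT O I) := by
  rintro ⟨f, hinj, hadj⟩
  -- junk vertices appear at most at position 0
  have hjunk : ∀ n, 1 ≤ n → vld (f n) ∨ f n = [] := by
    intro n hn
    by_contra hc
    push_neg at hc
    obtain ⟨h1, h2⟩ := hc
    have e1 : f (n + 1) = [] := TT_junk_nbr (hadj n) h1 h2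
    have e2 : f (n - 1) = [] := by
      have h3 := hadj (n - 1)
      rw [Nat.sub_add_cancel hn] at h3
      exact TT_junk_nbr h3.symm h1 h2
    have := hinj (e1.trans e2.symm)
    omega
  obtain ⟨N, hN⟩ : ∃ N, ∀ n, N ≤ n → vld (f n) ∧ f n ≠ [] := by
    by_cases hr : ∃ r, f r = []
    · obtain ⟨r, hr⟩ := hr
      refine ⟨r + 1, fun n hn => ?_⟩
      have hne : f n ≠ [] := fun h => by
        have := hinj (h.trans hr.symm); omega
      rcases hjunk n (by omega) with h | h
      · exact ⟨h, hne⟩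
      · exact absurd h hne
    · push_neg at hr
      refine ⟨1, fun n hn => ?_⟩
      rcases hjunk n hn with h | h
      · exact ⟨h, hr n⟩
      · exact absurd h (hr n)
  have hstep : ∀ n, N ≤ n → (∃ x, f (n + 1) = x :: f n) ∨ (∃ x, f n = x :: f (n + 1)) := by
    intro n hn
    rcases hadj n with ⟨x, h1, h2⟩ | ⟨x, h1, h2⟩ | ⟨h1, -, -⟩ | ⟨h1, -, -⟩
    · exact Or.inl ⟨x, h1⟩
    · exact Or.inr ⟨x, h1⟩
    · exact absurd h1 (hN n hn).2
    · exact absurd h1 (hN (n + 1) (by omega)).2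
  by_cases hdown : ∃ n, N ≤ n ∧ ∃ x, f (n + 1) = x :: f n
  · obtain ⟨n0, hn0, hd0⟩ := hdown
    have hall : ∀ k, ∃ x, f (n0 + k + 1) = x :: f (n0 + k) := by
      intro k
      induction k with
      | zero => simpa using hd0
      | succ k ih =>
        obtain ⟨x, hx⟩ := ih
        rcases hstep (n0 + k + 1) (by omega) with h | ⟨y, hy⟩
        · exact h
        · exfalso
          rw [hx] at hy
          have := hinj (List.cons_eq_cons.mp hy).2.symm
          omega
    let a : ℕ → O := fun k => (Classical.choose (hall k)).1
    have ha : ∀ k, a (k + 1) < a k := by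
      intro k
      have h1 := Classical.choose_spec (hall k)
      have h2 := Classical.choose_spec (hall (k + 1))
      have hv := (hN (n0 + (k + 1) + 1) (by omega)).1
      rw [h2] at hv
      have h1' : f (n0 + (k + 1)) = Classical.choose (hall k) :: f (n0 + k) := h1
      have hhead : (f (n0 + (k + 1))).head? = some (Classical.choose (hall k)) := by
        rw [h1']; rfl
      exact (List.isChain_cons.mp hv).1 _ hhead
    have hwf : WellFounded ((· < ·) : O → O → Prop) := IsWellFounded.wf
    obtain ⟨m, ⟨k, hk⟩, hmin⟩ := hwf.has_min (Set.range a) ⟨a 0, ⟨0, rfl⟩⟩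
    exact hmin (a (k + 1)) ⟨k + 1, rfl⟩ (hk ▸ ha k)
  · push_neg at hdown
    have hup : ∀ k, (f (N + k + 1)).length < (f (N + k)).length := by
      intro k
      rcases hstep (N + k) (by omega) with ⟨x, hx⟩ | ⟨x, hx⟩
      · exact absurd hx (hdown (N + k) (by omega) x)
      · rw [hx]
        simp
    have hmono : ∀ k, (f (N + k)).length + k ≤ (f N).length := by
      intro k
      induction k with
      | zero => simp
      | succ k ih =>
        have h5 := hup k
        have e : N + (k + 1) = N + k + 1 := rfl
        rw [e]
        omega
    have := hmono ((f N).length + 1)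
    omega

end Trees4

section Trees5

open SimpleGraph

variable {O : Type u} [LinearOrder O] [IsWellOrder O (· < ·)] {I : Type u} [DecidableEq I]

local notation "M" => List (O × I)

lemma del_TT_eq : del (TT O I) ({[]} : Finset M) =
    del (RR (I := I) (⊤ : WithTop O)) ({[]} : Finset M) := by
  ext x y
  rw [del_adj, del_adj]
  constructor
  · rintro ⟨h, hx, hy⟩
    refine ⟨?_, hx, hy⟩
    rw [Finset.mem_singleton] at hx hy
    rcases h with ⟨z, h1, h2⟩ | ⟨z, h1, h2⟩ | ⟨h1, -, -⟩ | ⟨h1, -, -⟩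
    · exact Or.inl ⟨z, h1, h2, bnd_top _⟩
    · exact Or.inr ⟨z, h1, h2, bnd_top _⟩
    · exact absurd h1 hx
    · exact absurd h1 hy
  · rintro ⟨h, hx, hy⟩
    exact ⟨RR_top_le_TT h, hx, hy⟩

lemma comp_congr {W : Type u} {G1 G2 : SimpleGraph W} {S : Finset W} (h : del G1 S = del G2 S)
    (v : W) : comp G1 S v = comp G2 S v := by
  ext x y
  rw [comp_adj, comp_adj, h]

lemma TT_up (hpos : (0 : Ordinal.{u}) < ordOf (⊤ : WithTop O)) (i0 : I) :
    rankLE (ordOf (⊤ : WithTop O)) (TT O I) := by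
  obtain ⟨b, -, -⟩ := exists_ordOf hpos
  haveI : Infinite M := infinite_list ((b, i0) : O × I)
  refine rankLE_def.mpr (Or.inr ⟨{[]}, fun v hv => ?_⟩)
  rw [Finset.mem_singleton] at hv
  by_cases hvv : vld v
  · have hz := List.getLast?_eq_getLast_of_ne_nil hv
    have hbc : (((v.getLast hv).1 : O) : WithTop O) < ⊤ := WithTop.coe_lt_top _
    refine ⟨ordOf (some (v.getLast hv).1), ordOf_lt hbc, ?_⟩
    rw [comp_congr (del_TT_eq) v]
    exact rankLE_mono _ _ _ ⟨emb_comp_to_RR hvv (bnd_top v) hz⟩ (rr_up _ _ rfl)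
  · refine ⟨0, hpos, ?_⟩
    rw [comp_eq_bot_of_isolated ?_]
    · exact rankLE_bot
    · rintro x ⟨h, hv', hx'⟩
      rw [Finset.mem_singleton] at hv' hx'
      rcases h with ⟨z, h1, h2⟩ | ⟨z, h1, h2⟩ | ⟨h1, -, -⟩ | ⟨h1, -, -⟩
      · exact hvv (h1 ▸ h2).tail
      · exact hvv (h1 ▸ h2)
      · exact hv' h1
      · exact hx' h1

lemma TT_low [Infinite I] {β : Ordinal.{u}} (hβ : β < ordOf (⊤ : WithTop O)) :
    ¬ rankLE β (TT O I) := by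
  intro h
  obtain ⟨b, -, -⟩ := exists_ordOf (lt_of_le_of_lt zero_le hβ)
  obtain ⟨i0⟩ : Nonempty I := inferInstance
  haveI : Infinite M := infinite_list ((b, i0) : O × I)
  exact rr_low (ordOf (⊤ : WithTop O)) ⊤ rfl β hβ
    (rankLE_mono β _ _ ⟨TopMinorEmb.ofHom id (fun a b h => h) (fun a b h => RR_top_le_TT h)⟩ h)

/-- TT height conditions, extracted for transport. -/
lemma TT_ht_ne {x y : M} (h : (TT O I).Adj x y) : x.length ≠ y.length := by
  rcases h with ⟨z, rfl, -⟩ | ⟨z, rfl, -⟩ | ⟨rfl, hy, -⟩ | ⟨rfl, hx, -⟩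
  · simp
  · simp
  · exact fun h => hy (List.length_eq_zero_iff.mp h.symm)
  · exact fun h => hx (List.length_eq_zero_iff.mp h)

lemma TT_ht_uniq (v : M) : {w : M | (TT O I).Adj v w ∧ w.length < v.length}.Subsingleton := by
  classical
  intro x hx y hy
  rcases eq_or_ne v [] with rfl | hv
  · exact absurd hx.2 (by simp)
  have key : ∀ w : M, (TT O I).Adj v w → w.length < v.length →
      w = (if vld v then v.tail else []) := by
    intro w hw hlen
    rcases hw with ⟨z, rfl, -⟩ | ⟨z, hz, hvv⟩ | ⟨rfl, -, -⟩ | ⟨rfl, -, hnv⟩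
    · simp at hlen
    · rw [if_pos hvv, hz]; rfl
    · exact absurd rfl hv
    · rw [if_neg hnv]
  rw [key x hx.1 hx.2, key y hy.1 hy.2]

end Trees5

lemma exists_good_tree (o : Ordinal.{u}) (h1 : 1 ≤ o) (V : Type u) [Infinite V]
    (hcard : o.card ≤ Cardinal.mk V) :
    ∃ G : SimpleGraph V, G.IsTree ∧ Rayless G ∧ rankLE o G ∧ ∀ β < o, ¬ rankLE β G := by
  classical
  haveI : Nonempty o.ToType := Ordinal.nonempty_toType_iff.mpr (by
    intro h0; rw [h0] at h1; exact absurd h1 (by simp))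
  haveI hwo : IsWellOrder o.ToType (· < ·) := isWellOrder_lt
  have hord : ordOf (⊤ : WithTop o.ToType) = o := Ordinal.type_toType o
  have hpos : (0 : Ordinal) < ordOf (⊤ : WithTop o.ToType) := by
    rw [hord]; exact lt_of_lt_of_le zero_lt_one h1
  obtain ⟨i0⟩ : Nonempty V := inferInstance
  haveI : Infinite (List (o.ToType × V)) := infinite_list ((Classical.arbitrary o.ToType, i0) : o.ToType × V)
  -- cardinality of the list type
  have hMV : Cardinal.mk (List (o.ToType × V)) = Cardinal.mk V := by
    rw [Cardinal.mk_list_eq_mk]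
    have h2 : Cardinal.mk (o.ToType × V) = Cardinal.mk o.ToType * Cardinal.mk V := by simp
    have hle : Cardinal.mk (o.ToType × V) ≤ Cardinal.mk V := by
      rw [h2]
      calc Cardinal.mk o.ToType * Cardinal.mk V ≤ Cardinal.mk V * Cardinal.mk V :=
            mul_le_mul_left (by rw [Cardinal.mk_toType]; exact hcard) _
        _ = Cardinal.mk V := Cardinal.mul_eq_self (Cardinal.infinite_iff.mp inferInstance)
    have hge : Cardinal.mk V ≤ Cardinal.mk (o.ToType × V) :=
      Cardinal.mk_le_of_injective (f := fun v => ((Classical.arbitrary o.ToType : o.ToType), v))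
        (fun a b h => congrArg Prod.snd h)
    exact le_antisymm hle hge
  obtain ⟨e⟩ := Cardinal.eq.mp hMV
  -- transported graph
  set Tv : SimpleGraph V := SimpleGraph.comap (⇑e.symm) (TT o.ToType V) with hTv
  have hadj : ∀ {x y : V}, Tv.Adj x y ↔ (TT o.ToType V).Adj (e.symm x) (e.symm y) := Iff.rfl
  have E1 : TopMinorEmb Tv (TT o.ToType V) :=
    TopMinorEmb.ofHom (⇑e.symm) e.symm.injective (fun a b h => h)
  have E2 : TopMinorEmb (TT o.ToType V) Tv :=
    TopMinorEmb.ofHom (⇑e) e.injective (fun a b h => by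
      rw [hadj, Equiv.symm_apply_apply, Equiv.symm_apply_apply]; exact h)
  refine ⟨Tv, ⟨?_, ?_⟩, ?_, ?_, ?_⟩
  · -- connected
    let hom : (TT o.ToType V) →g Tv := ⟨⇑e, fun {a b} h => by
      rw [hadj, Equiv.symm_apply_apply, Equiv.symm_apply_apply]; exact h⟩
    exact (TT_connected).map hom (fun x => ⟨e.symm x, by exact e.apply_symm_apply x⟩)
  · -- acyclic
    apply acyclic_of_ht Tv (fun v => (e.symm v).length)
    · intro x y h
      exact TT_ht_ne h
    · intro v x hx y hy
      exact e.symm.injective (TT_ht_uniq (e.symm v) ⟨hx.1, hx.2⟩ ⟨hy.1, hy.2⟩)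
  · -- rayless
    rintro ⟨g, ginj, gadj⟩
    exact TT_rayless ⟨fun n => e.symm (g n), e.symm.injective.comp ginj, fun n => gadj n⟩
  · -- rank upper
    rw [← hord]
    exact rankLE_mono _ _ _ ⟨E1⟩ (TT_up hpos i0)
  · -- rank lower
    intro β hβ h
    exact TT_low (by rw [hord]; exact hβ) (rankLE_mono _ _ _ ⟨E2⟩ h)

/-- For every infinite cardinal `κ`, if `V` is a type of cardinality `κ`, then the quotient
of the set of rayless trees with vertex set `V` by the equivalence `≡` (same topological
type) has cardinality at least `κ⁺`. -/
theorem lower_bound_topological_types_of_rayless_trees (κ : Cardinal.{u})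
    (hκ : Cardinal.aleph0 ≤ κ) (V : Type u) (hV : Cardinal.mk V = κ) :
    Order.succ κ ≤
      Cardinal.mk (Quot fun (T S : {G : SimpleGraph V // G.IsTree ∧ Rayless G}) =>
        TopEquiv T.1 S.1) := by
  classical
  haveI : Infinite V := Cardinal.infinite_iff.mpr (hV ▸ hκ)
  set r : {G : SimpleGraph V // G.IsTree ∧ Rayless G} →
      {G : SimpleGraph V // G.IsTree ∧ Rayless G} → Prop :=
    fun T S => TopEquiv T.1 S.1 with hr
  have hinv : ∀ {T S}, Relation.EqvGen r T S → ∀ α, (rankLE α T.1 ↔ rankLE α S.1) := by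
    intro T S h
    induction h with
    | rel x y hxy => exact fun α => rankLE_iff_of_topEquiv hxy α
    | refl x => exact fun α => Iff.rfl
    | symm x y _ ih => exact fun α => (ih α).symm
    | trans x y z _ _ ih1 ih2 => exact fun α => (ih1 α).trans (ih2 α)
  haveI hwo : IsWellOrder (Order.succ κ).ord.ToType (· < ·) := isWellOrder_lt
  have hcard : ∀ x : (Order.succ κ).ord.ToType,
      (1 + Ordinal.typein ((· < ·) : _ → _ → Prop) x).card ≤ κ := by
    intro x
    have h1 : Ordinal.typein ((· < ·) : _ → _ → Prop) x < (Order.succ κ).ord := by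
      have := Ordinal.typein_lt_type ((· < ·) : _ → _ → Prop) x
      rwa [Ordinal.type_toType] at this
    have h2 : (Ordinal.typein ((· < ·) : _ → _ → Prop) x).card < Order.succ κ :=
      Cardinal.lt_ord.mp h1
    have h3 : (Ordinal.typein ((· < ·) : _ → _ → Prop) x).card ≤ κ := Order.lt_succ_iff.mp h2
    rw [Ordinal.card_add, Ordinal.card_one]
    calc (1 : Cardinal) + _ ≤ 1 + κ := add_le_add le_rfl h3
      _ = κ + 1 := by rw [add_comm]
      _ = κ := Cardinal.add_one_eq hκ
  have hsel : ∀ x : (Order.succ κ).ord.ToType, ∃ G : SimpleGraph V, G.IsTree ∧ Rayless G ∧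
      rankLE (1 + Ordinal.typein ((· < ·) : _ → _ → Prop) x) G ∧
      ∀ β < (1 + Ordinal.typein ((· < ·) : _ → _ → Prop) x), ¬ rankLE β G :=
    fun x => exists_good_tree _ (le_add_of_nonneg_right zero_le) V (by rw [hV]; exact hcard x)
  choose Gx h1x h2x h3x h4x using hsel
  have hFinj : Function.Injective
      (fun x : (Order.succ κ).ord.ToType => Quot.mk r ⟨Gx x, h1x x, h2x x⟩) := by
    intro x y hxy
    have h := hinv (Quot.eqvGen_exact hxy)
    have e1 : ¬ (1 + Ordinal.typein ((· < ·) : _ → _ → Prop) x <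
        1 + Ordinal.typein ((· < ·) : _ → _ → Prop) y) :=
      fun hlt => h4x y _ hlt ((h _).mp (h3x x))
    have e2 : ¬ (1 + Ordinal.typein ((· < ·) : _ → _ → Prop) y <
        1 + Ordinal.typein ((· < ·) : _ → _ → Prop) x) :=
      fun hlt => h4x x _ hlt ((h _).mpr (h3x y))
    have heq : (1 : Ordinal) + Ordinal.typein ((· < ·) : _ → _ → Prop) x =
        1 + Ordinal.typein ((· < ·) : _ → _ → Prop) y :=
      le_antisymm (not_lt.mp e2) (not_lt.mp e1)
    exact Ordinal.typein_injective _ ((add_right_inj (1 : Ordinal)).mp heq)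
  calc Order.succ κ = Cardinal.mk (Order.succ κ).ord.ToType := (Cardinal.mk_ord_toType _).symm
    _ ≤ _ := Cardinal.mk_le_of_injective hFinj
end

section
/- If H and G are rayless graphs that each have a Schmidt rank, and H is a topological minor of G, then the Schmidt rank of H is at most the Schmidt rank of G. -/
universe u v

/-- Graphs (on vertex types in universe `u`), bundled with their vertex type. -/
def GraphSig := Σ V : Type u, SimpleGraph V

/-- `HasSchmidtRankAux α ⟨V, G⟩` holds iff the graph `G` has Schmidt rank `α`:
`G` has rank `0` iff it is finite, and for `α > 0`, `G` has rank `α` iff it has no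
rank `< α` and there is a finite vertex set `X` such that every connected component
of `G - X` has some rank `< α`.  (For `α = 0` the clause below is equivalent to
finiteness of `G`, since no ordinal is `< 0`.) -/
def HasSchmidtRankAux : Ordinal.{u} → GraphSig.{u} → Prop :=
  WellFounded.fix Ordinal.lt_wf fun α ih p =>
    (∀ β (hβ : β < α), ¬ ih β hβ p) ∧
    ∃ X : Set p.1, X.Finite ∧
      ∀ C : (p.2.induce Xᶜ).ConnectedComponent,
        ∃ β, ∃ hβ : β < α, ih β hβ ⟨C.supp, (p.2.induce Xᶜ).induce C.supp⟩

/-- The graph `G` has Schmidt rank `α`. -/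
def HasSchmidtRank {V : Type u} (G : SimpleGraph V) (α : Ordinal.{u}) : Prop :=
  HasSchmidtRankAux α ⟨V, G⟩


/-! ### Auxiliary machinery for the proof -/

section Aux

open SimpleGraph

/-- The fixed-point equation for `HasSchmidtRankAux`. -/
lemma hasSchmidtRankAux_def (α : Ordinal.{u}) (p : GraphSig.{u}) :
    HasSchmidtRankAux α p ↔
      ((∀ β (_ : β < α), ¬ HasSchmidtRankAux β p) ∧
       ∃ X : Set p.1, X.Finite ∧
         ∀ C : (p.2.induce Xᶜ).ConnectedComponent,
           ∃ β, ∃ _ : β < α,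
             HasSchmidtRankAux β ⟨C.supp, (p.2.induce Xᶜ).induce C.supp⟩) := by
  conv_lhs => rw [HasSchmidtRankAux, WellFounded.fix_eq]
  rfl

/-- A finite set `X` witnessing that all components of `p − X` have rank `< α`. -/
def RankWitness (α : Ordinal.{u}) (p : GraphSig.{u}) : Prop :=
  ∃ X : Set p.1, X.Finite ∧
    ∀ C : (p.2.induce Xᶜ).ConnectedComponent,
      ∃ β, ∃ _ : β < α,
        HasSchmidtRankAux β ⟨C.supp, (p.2.induce Xᶜ).induce C.supp⟩

lemma rankWitness_of_rank {α : Ordinal.{u}} {p : GraphSig.{u}}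
    (h : HasSchmidtRankAux α p) : RankWitness α p :=
  ((hasSchmidtRankAux_def α p).mp h).2

lemma exists_rank_le {β : Ordinal.{u}} {p : GraphSig.{u}} (h : RankWitness β p) :
    ∃ α, α ≤ β ∧ HasSchmidtRankAux α p := by
  have hne : {α : Ordinal.{u} | RankWitness α p}.Nonempty := ⟨β, h⟩
  set α := Ordinal.lt_wf.min _ hne with hα
  have hmem : RankWitness α p := Ordinal.lt_wf.min_mem _ hne
  refine ⟨α, le_of_not_gt (Ordinal.lt_wf.not_lt_min {α : Ordinal.{u} | RankWitness α p} h), ?_⟩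
  rw [hasSchmidtRankAux_def]
  refine ⟨fun γ hγ hc => ?_, hmem⟩
  exact absurd hγ (Ordinal.lt_wf.not_lt_min {α : Ordinal.{u} | RankWitness α p} (rankWitness_of_rank hc))

lemma rank_unique {α β : Ordinal.{u}} {p : GraphSig.{u}}
    (hα : HasSchmidtRankAux α p) (hβ : HasSchmidtRankAux β p) : α = β := by
  rcases lt_trichotomy α β with h | h | h
  · exact absurd hα (((hasSchmidtRankAux_def β p).mp hβ).1 α h)
  · exact h
  · exact absurd hβ (((hasSchmidtRankAux_def α p).mp hα).1 β h)

/-- The homomorphism from an induced subgraph back to the ambient graph. -/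
def valHom {V : Type u} (G : SimpleGraph V) (s : Set V) : G.induce s →g G :=
  ⟨Subtype.val, fun {_ _} h => h⟩

/-- Lift a walk whose support stays in `s` to the induced subgraph on `s`. -/
def liftWalk {V : Type u} {G : SimpleGraph V} {s : Set V} :
    ∀ {u v : V} (p : G.Walk u v) (hu : u ∈ s) (hv : v ∈ s)
      (_ : ∀ w ∈ p.support, w ∈ s), (G.induce s).Walk ⟨u, hu⟩ ⟨v, hv⟩
  | _, _, Walk.nil, _, _, _ => Walk.nil
  | _, _, Walk.cons h q, _, hv, hp =>
      Walk.cons (by exact h)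
        (liftWalk q (hp _ (by simp)) hv (fun w hw => hp w (by simp [hw])))

lemma liftWalk_map_val {V : Type u} {G : SimpleGraph V} {s : Set V}
    {u v : V} (p : G.Walk u v) (hu : u ∈ s) (hv : v ∈ s)
    (hp : ∀ w ∈ p.support, w ∈ s) :
    (liftWalk p hu hv hp).map (valHom G s) = p := by
  induction p with
  | nil => rfl
  | cons h q ih => exact congrArg (Walk.cons h) (ih _ _ _)

lemma liftWalk_support {V : Type u} {G : SimpleGraph V} {s : Set V}
    {u v : V} (p : G.Walk u v) (hu : u ∈ s) (hv : v ∈ s)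
    (hp : ∀ w ∈ p.support, w ∈ s) :
    (liftWalk p hu hv hp).support.map Subtype.val = p.support := by
  conv_rhs => rw [← liftWalk_map_val p hu hv hp]
  exact (Walk.support_map (valHom G s) (liftWalk p hu hv hp)).symm

lemma mem_liftWalk_support {V : Type u} {G : SimpleGraph V} {s : Set V}
    {u v : V} (p : G.Walk u v) (hu : u ∈ s) (hv : v ∈ s)
    (hp : ∀ w ∈ p.support, w ∈ s) (x : s) :
    x ∈ (liftWalk p hu hv hp).support ↔ (x : V) ∈ p.support := by
  rw [← liftWalk_support p hu hv hp, List.mem_map]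
  constructor
  · exact fun h => ⟨x, h, rfl⟩
  · rintro ⟨y, hy, rfl'⟩
    rwa [Subtype.val_injective rfl'] at hy

lemma liftWalk_isPath {V : Type u} {G : SimpleGraph V} {s : Set V}
    {u v : V} (p : G.Walk u v) (hu : u ∈ s) (hv : v ∈ s)
    (hp : ∀ w ∈ p.support, w ∈ s) (h : p.IsPath) :
    (liftWalk p hu hv hp).IsPath := by
  rw [Walk.isPath_def]
  have := h.support_nodup
  rw [← liftWalk_support p hu hv hp] at this
  exact this.of_map _

lemma reachable_of_mem_support {V : Type u} {G : SimpleGraph V}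
    {u v w : V} (p : G.Walk u v) (hw : w ∈ p.support) : G.Reachable u w := by
  classical
  exact ⟨p.takeUntil w hw⟩

/-- Restrict a topological-minor embedding to induced subgraphs. -/
def TopMinorEmb.induceRestrict {V : Type u} {W : Type v}
    {H : SimpleGraph V} {G : SimpleGraph W} (φ : TopMinorEmb H G)
    (s : Set V) (t : Set W)
    (h1 : ∀ v ∈ s, φ.toFun v ∈ t)
    (h2 : ∀ ⦃a b : V⦄ (h : H.Adj a b), a ∈ s → b ∈ s →
      ∀ w ∈ (φ.path h).support, w ∈ t) :
    TopMinorEmb (H.induce s) (G.induce t) where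
  toFun := fun v => ⟨φ.toFun v.1, h1 v.1 v.2⟩
  inj := fun a b hab => Subtype.ext (φ.inj (congrArg Subtype.val hab))
  path := fun a b h =>
    liftWalk (φ.path (h : H.Adj a.1 b.1)) (h1 a.1 a.2) (h1 b.1 b.2)
      (h2 (h : H.Adj a.1 b.1) a.2 b.2)
  path_isPath := fun a b h =>
    liftWalk_isPath _ _ _ _ (φ.path_isPath (h : H.Adj a.1 b.1))
  path_symm := by
    intro a b h
    have hba : H.Adj b.1 a.1 := h.symm
    have e : φ.path hba = (φ.path (h : H.Adj a.1 b.1)).reverse :=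
      φ.path_symm (h : H.Adj a.1 b.1)
    apply Walk.map_injective_of_injective (f := valHom G t) Subtype.val_injective
    exact (liftWalk_map_val _ _ _ _).trans (e.trans
      ((congrArg Walk.reverse (liftWalk_map_val _ _ _ _).symm).trans (Walk.reverse_map _ _)))
  internal_avoid_image := by
    intro a b h w hw hwa hwb x
    have hsup : (w : W) ∈ (φ.path (h : H.Adj a.1 b.1)).support :=
      (mem_liftWalk_support _ _ _ _ _).mp hw
    have hwa' : (w : W) ≠ φ.toFun a.1 := fun e => hwa (Subtype.ext e)
    have hwb' : (w : W) ≠ φ.toFun b.1 := fun e => hwb (Subtype.ext e)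
    intro e
    have e' := Subtype.ext_iff.mp e
    exact φ.internal_avoid_image (h : H.Adj a.1 b.1) w.1 hsup hwa' hwb' x.1 e'
  internally_disjoint := by
    intro a b a' b' h h' hne w hw hw'
    have hne2 : s(a.1, b.1) ≠ s(a'.1, b'.1) := by
      intro e
      apply hne
      rcases Sym2.eq_iff.mp e with ⟨e1, e2⟩ | ⟨e1, e2⟩
      · rw [Sym2.eq_iff]; exact Or.inl ⟨Subtype.ext e1, Subtype.ext e2⟩
      · rw [Sym2.eq_iff]; exact Or.inr ⟨Subtype.ext e1, Subtype.ext e2⟩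
    rcases φ.internally_disjoint (h : H.Adj a.1 b.1) (h' : H.Adj a'.1 b'.1) hne2 w.1
        ((mem_liftWalk_support _ _ _ _ _).mp hw)
        ((mem_liftWalk_support _ _ _ _ _).mp hw') with e | e
    · exact Or.inl (Subtype.ext e)
    · exact Or.inr (Subtype.ext e)

/-- A topological-minor embedding transfers reachability. -/
lemma TopMinorEmb.reachable {V : Type u} {W : Type v}
    {H : SimpleGraph V} {G : SimpleGraph W} (φ : TopMinorEmb H G) {a b : V}
    (h : H.Reachable a b) : G.Reachable (φ.toFun a) (φ.toFun b) := by
  obtain ⟨p⟩ := h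
  induction p with
  | nil => exact Reachable.refl _
  | cons hadj q ih => exact Reachable.trans ⟨φ.path hadj⟩ ih

/-- Main lemma: a topological minor of a ranked graph has a rank, which is at most
the rank of the host graph. -/
lemma main_rank_lemma (β : Ordinal.{u}) :
    ∀ (V W : Type u) (H : SimpleGraph V) (G : SimpleGraph W),
      HasSchmidtRankAux β ⟨W, G⟩ → TopMinorLE H G →
      ∃ α, α ≤ β ∧ HasSchmidtRankAux α ⟨V, H⟩ := by
  induction β using Ordinal.induction with
  | h β IH =>
    rintro V W H G hG ⟨φ⟩
    classical
    obtain ⟨X, hXfin, hX⟩ := rankWitness_of_rank hG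
    set X' : Set V := {v | φ.toFun v ∈ X ∨ ∃ b, ∃ h : H.Adj v b, ∃ w ∈ X,
        w ∈ (φ.path h).support ∧ w ≠ φ.toFun v ∧ w ≠ φ.toFun b} with hX'
    have hX'fin : X'.Finite := by
      have hsub : X' ⊆ ⋃ w ∈ X, ({v | φ.toFun v = w} ∪
          {v | ∃ b, ∃ h : H.Adj v b,
            w ∈ (φ.path h).support ∧ w ≠ φ.toFun v ∧ w ≠ φ.toFun b}) := by
        rintro v (hv | ⟨b, h, w, hwX, hws, hwa, hwb⟩)
        · exact Set.mem_biUnion hv (Set.mem_union_left _ rfl)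
        · exact Set.mem_biUnion hwX (Set.mem_union_right _ ⟨b, h, hws, hwa, hwb⟩)
      refine Set.Finite.subset
        (Set.Finite.biUnion hXfin fun w _ => Set.Finite.union ?_ ?_) hsub
      · exact Set.Subsingleton.finite fun a ha b hb => φ.inj (ha.trans hb.symm)
      · by_cases hA : ({v | ∃ b, ∃ h : H.Adj v b,
            w ∈ (φ.path h).support ∧ w ≠ φ.toFun v ∧ w ≠ φ.toFun b} : Set V).Nonempty
        · obtain ⟨v0, b0, h0, hs0, ha0, hb0⟩ := hA
          refine Set.Finite.subset
            ((Set.finite_singleton b0).insert v0) ?_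
          rintro v ⟨b, h, hs, ha, hb⟩
          by_cases he : s(v, b) = s(v0, b0)
          · rcases Sym2.eq_iff.mp he with ⟨rfl, rfl⟩ | ⟨rfl, rfl⟩
            · exact Set.mem_insert _ _
            · exact Set.mem_insert_of_mem _ rfl
          · rcases φ.internally_disjoint h h0 he w hs hs0 with h' | h'
            · exact absurd h' ha
            · exact absurd h' hb
        · rw [Set.not_nonempty_iff_eq_empty] at hA
          rw [hA]; exact Set.finite_empty
    have f1 : ∀ v ∈ (X'ᶜ : Set V), φ.toFun v ∈ (Xᶜ : Set W) :=
      fun v hv hw => hv (Or.inl hw)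
    have f2 : ∀ ⦃a b : V⦄ (h : H.Adj a b), a ∈ (X'ᶜ : Set V) → b ∈ (X'ᶜ : Set V) →
        ∀ w ∈ (φ.path h).support, w ∈ (Xᶜ : Set W) := by
      intro a b h ha hb w hws hwX
      by_cases hwa : w = φ.toFun a
      · exact ha (Or.inl (hwa ▸ hwX))
      · by_cases hwb : w = φ.toFun b
        · exact hb (Or.inl (hwb ▸ hwX))
        · exact ha (Or.inr ⟨b, h, w, hwX, hws, hwa, hwb⟩)
    set φ' : TopMinorEmb (H.induce (X'ᶜ : Set V)) (G.induce (Xᶜ : Set W)) :=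
      φ.induceRestrict (X'ᶜ : Set V) (Xᶜ : Set W) f1 f2 with hφ'
    refine exists_rank_le ⟨X', hX'fin, fun C => ?_⟩
    obtain ⟨v0, hv0⟩ := C.exists_rep
    set D := (G.induce (Xᶜ : Set W)).connectedComponentMk (φ'.toFun v0) with hD0
    obtain ⟨γ, hγ, hD⟩ := hX D
    have memD : ∀ a : (X'ᶜ : Set V), a ∈ C.supp → φ'.toFun a ∈ D.supp := by
      intro a ha
      have h1 : (H.induce (X'ᶜ : Set V)).connectedComponentMk a = C :=
        (ConnectedComponent.mem_supp_iff _ _).mp ha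
      have hr : (H.induce (X'ᶜ : Set V)).Reachable v0 a :=
        ConnectedComponent.exact (hv0.trans h1.symm)
      rw [ConnectedComponent.mem_supp_iff]
      exact (ConnectedComponent.sound (φ'.reachable hr)).symm
    have f4 : ∀ ⦃a b : (X'ᶜ : Set V)⦄ (h : (H.induce (X'ᶜ : Set V)).Adj a b),
        a ∈ C.supp → b ∈ C.supp → ∀ w ∈ (φ'.path h).support, w ∈ D.supp := by
      intro a b h ha hb w hw
      have hr : (G.induce (Xᶜ : Set W)).Reachable (φ'.toFun a) w :=
        reachable_of_mem_support _ hw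
      have h1 : φ'.toFun a ∈ D.supp := memD a ha
      rw [ConnectedComponent.mem_supp_iff] at h1 ⊢
      rw [← h1]
      exact (ConnectedComponent.sound hr).symm
    have ψ : TopMinorEmb ((H.induce (X'ᶜ : Set V)).induce C.supp)
        ((G.induce (Xᶜ : Set W)).induce D.supp) :=
      φ'.induceRestrict C.supp D.supp memD f4
    obtain ⟨α, hαγ, hα⟩ := IH γ hγ C.supp D.supp _ _ hD ⟨ψ⟩
    exact ⟨α, lt_of_le_of_lt hαγ hγ, hα⟩

end Aux

/-- If `H` and `G` are rayless graphs that each have a Schmidt rank, and `H` is a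
topological minor of `G`, then the Schmidt rank of `H` is at most that of `G`. -/
theorem schmidtRank_le_of_topMinor {V W : Type u} {H : SimpleGraph V} {G : SimpleGraph W}
    (hH : Rayless H) (hG : Rayless G) {α β : Ordinal.{u}}
    (hα : HasSchmidtRank H α) (hβ : HasSchmidtRank G β)
    (hle : TopMinorLE H G) : α ≤ β := by
  obtain ⟨α', hle', hα'⟩ := main_rank_lemma β V W H G hβ hle
  have heq : α = α' := rank_unique hα hα'
  exact heq ▸ hle'
end

section
/- Let Q be a well-quasi-ordered quasi-order and κ an infinite cardinal. Then the set of elements of Q which are not κ-embeddable in Q has cardinality strictly less than κ. -/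
universe u v

/-- In a well-quasi-order `Q`, for any infinite cardinal `κ`, the set of elements which
are not `κ`-embeddable in `Q` (i.e. which lie below fewer than `κ` elements) has
cardinality strictly less than `κ`. -/
theorem card_not_kappa_embeddable_lt {Q : Type u} (le : Q → Q → Prop)
    (hrefl : Reflexive le) (htrans : Transitive le)
    (hwqo : ∀ f : ℕ → Q, ∃ n m : ℕ, n < m ∧ le (f n) (f m))
    (κ : Cardinal.{u}) (hκ : Cardinal.aleph0 ≤ κ) :
    Cardinal.mk {q : Q // ¬ κ ≤ Cardinal.mk {q' : Q // le q q'}} < κ := by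
  classical
  by_contra hcon
  rw [not_lt] at hcon
  -- the union of finitely many small up-sets is small
  have hT : ∀ s : Finset Q, (∀ x ∈ s, ¬ κ ≤ Cardinal.mk {q' : Q // le x q'}) →
      Cardinal.mk {q : Q | ∃ x ∈ s, le x q} < κ := by
    intro s
    induction s using Finset.induction with
    | empty =>
      intro _
      have h0 : {q : Q | ∃ x ∈ (∅ : Finset Q), le x q} = ∅ := by ext q; simp
      rw [h0, Cardinal.mk_emptyCollection]
      exact lt_of_lt_of_le Cardinal.aleph0_pos hκ
    | @insert a s' ha ih =>
      intro hP
      have hset : {q : Q | ∃ x ∈ insert a s', le x q} =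
          {q : Q | le a q} ∪ {q : Q | ∃ x ∈ s', le x q} := by
        ext q
        constructor
        · rintro ⟨x, hx, hxq⟩
          rcases Finset.mem_insert.mp hx with h | h
          · exact Or.inl (h ▸ hxq)
          · exact Or.inr ⟨x, h, hxq⟩
        · rintro (h | ⟨x, hx, hxq⟩)
          · exact ⟨a, Finset.mem_insert_self a s', h⟩
          · exact ⟨x, Finset.mem_insert_of_mem hx, hxq⟩
      rw [hset]
      refine lt_of_le_of_lt (Cardinal.mk_union_le _ _) ?_
      refine Cardinal.add_lt_of_lt hκ ?_ ?_
      · exact not_le.mp (hP a (Finset.mem_insert_self a s'))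
      · exact ih fun x hx => hP x (Finset.mem_insert_of_mem hx)
  -- greedy construction of a bad sequence
  set P : Q → Prop := fun q => ¬ κ ≤ Cardinal.mk {q' : Q // le q q'} with hP
  have key : ∀ s : Finset Q, (∀ x ∈ s, P x) → ∃ y, P y ∧ ∀ x ∈ s, ¬ le x y := by
    intro s hs
    by_contra hbad
    push_neg at hbad
    have hsub : {q : Q | P q} ⊆ {q : Q | ∃ x ∈ s, le x q} := by
      intro q hq
      obtain ⟨x, hx, hxq⟩ := hbad q hq
      exact ⟨x, hx, hxq⟩
    have := (Cardinal.mk_le_mk_of_subset hsub).trans_lt (hT s hs)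
    exact absurd hcon (not_le.mpr this)
  obtain ⟨f, hfP, hf⟩ := exists_seq_of_forall_finset_exists P (fun x y => ¬ le x y) key
  obtain ⟨n, m, hnm, hle⟩ := hwqo f
  exact hf n m hnm hle
end

section
/- Let μ be an infinite cardinal and Q a quasi-order with |Q|_≡ = μ such that P_{≤κ}(Q) is well-quasi-ordered under the domination order, where κ is a cardinal with κ < ℵ_{μ⁺}. Then |P_κ(Q)|_≡ ≤ μ, i.e. the quotient of P_κ(Q) under the equivalence A ≡ B (meaning A ≤ B and B ≤ A in the domination order) has cardinality at most μ. -/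
universe u v

def Dominates {Q : Type*} (le : Q → Q → Prop) (A B : Set Q) : Prop :=
  ∃ f : A → B, Function.Injective f ∧ ∀ a : A, le a.1 (f a).1

namespace CardQuotAux

open Cardinal Set

variable {Q : Type u} {le : Q → Q → Prop}

section
variable (le)

/-- number of elements of `A` above `q` -/
noncomputable def nu (A : Set Q) (q : Q) : Cardinal.{u} := #(↥(A ∩ {x | le q x}))

/-- the equivalence setoid -/
def QS (hrefl : Reflexive le) (htrans : Transitive le) : Setoid Q :=
  ⟨fun a b => le a b ∧ le b a,
    ⟨fun a => ⟨hrefl a, hrefl a⟩, fun h => ⟨h.2, h.1⟩,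
      fun h h' => ⟨htrans h.1 h'.1, htrans h'.2 h.2⟩⟩⟩

end

theorem nu_le_of_dominates (htrans : Transitive le) {A B : Set Q}
    (h : Dominates le A B) (q : Q) : nu le A q ≤ nu le B q := by
  obtain ⟨f, hfi, hfl⟩ := h
  refine Cardinal.mk_le_of_injective (f := fun x : ↥(A ∩ {x | le q x}) =>
    (⟨(f ⟨x.1, x.2.1⟩).1, (f ⟨x.1, x.2.1⟩).2, htrans x.2.2 (hfl ⟨x.1, x.2.1⟩)⟩ :
      ↥(B ∩ {x | le q x}))) ?_
  intro x y hxy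
  apply Subtype.ext
  have h1 : (f ⟨x.1, x.2.1⟩).1 = (f ⟨y.1, y.2.1⟩).1 := by
    simpa using congrArg Subtype.val hxy
  simpa using congrArg Subtype.val (hfi (Subtype.ext h1))

theorem nu_antitone (htrans : Transitive le) {A : Set Q} {q q' : Q} (h : le q q') :
    nu le A q' ≤ nu le A q :=
  Cardinal.mk_le_mk_of_subset (fun x hx => ⟨hx.1, htrans h hx.2⟩)

/-- every upward closed set is finitely generated -/
theorem exists_gen (hw : ∀ f : ℕ → Q, ∃ n m : ℕ, n < m ∧ le (f n) (f m))
    (U : Set Q) (hU : ∀ x ∈ U, ∀ y, le x y → y ∈ U) :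
    ∃ F : Finset Q, ∀ x, x ∈ U ↔ ∃ a ∈ F, le a x := by
  classical
  by_contra hcon
  push_neg at hcon
  have step : ∀ F : Finset Q, ∃ x, (↑F ⊆ U) → (x ∈ U ∧ ∀ a ∈ F, ¬ le a x) := by
    intro F
    by_cases hF : (↑F : Set Q) ⊆ U
    · obtain ⟨x, hx⟩ := hcon F
      rcases hx with hx | hx
      · exact ⟨x, fun _ => hx⟩
      · obtain ⟨hxU, a, ha, hle⟩ := hx
        exact absurd (hU a (hF ha) x hle) hxU
    · obtain ⟨a, ha, _⟩ := Set.not_subset.mp hF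
      exact ⟨a, fun h => absurd h hF⟩
  choose pick hpick using step
  let g : ℕ → Finset Q := fun n => Nat.rec (motive := fun _ => Finset Q) (∅ : Finset Q)
    (fun _ F => insert (pick F) F) n
  have hgs : ∀ n, g (n+1) = insert (pick (g n)) (g n) := fun n => rfl
  have hgsub : ∀ n, (↑(g n) : Set Q) ⊆ U := by
    intro n
    induction n with
    | zero => simp [g]
    | succ n ih =>
      rw [hgs n]
      intro x hx
      rcases Finset.mem_insert.mp hx with h | h
      · exact h ▸ (hpick (g n) ih).1
      · exact ih h
  have hmono : ∀ {n m : ℕ}, n ≤ m → g n ⊆ g m := by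
    intro n m h
    induction h with
    | refl => exact Finset.Subset.refl _
    | @step m h ih =>
      rw [hgs m]
      exact fun x hx => Finset.mem_insert_of_mem (ih hx)
  set f : ℕ → Q := fun n => pick (g n) with hf
  obtain ⟨n, m, hnm, hle⟩ := hw f
  have hfn : f n ∈ g m := hmono hnm (by rw [hgs n]; exact Finset.mem_insert_self _ _)
  exact (hpick (g m) (hgsub m)).2 (f n) hfn hle

/-- the range of `nu A` is finite when `le` is wqo -/
theorem nu_range_finite (htrans : Transitive le)
    (hw : ∀ f : ℕ → Q, ∃ n m : ℕ, n < m ∧ le (f n) (f m))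
    (A : Set Q) : (Set.range (nu le A)).Finite := by
  by_contra hinf
  have hinf : (Set.range (nu le A)).Infinite := hinf
  have e : ℕ ↪ ↥(Set.range (nu le A)) := Set.Infinite.natEmbedding _ hinf
  set f : ℕ → Cardinal.{u} := fun n => (e n).1 with hfdef
  have hfinj : Function.Injective f := fun a b h =>
    e.injective (Subtype.ext h)
  have hWF : Set.IsWF (Set.range f) := WellFounded.wellFoundedOn wellFounded_lt
  have hpwo : (Set.range f).IsPWO := hWF.isPWO
  obtain ⟨g, hg⟩ := hpwo.exists_monotone_subseq (f := f) (fun n => Set.mem_range_self n)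
  have hsm : StrictMono (f ∘ g) := by
    have hmono : Monotone (f ∘ g) := fun a b h => hg h
    exact hmono.strictMono_of_injective (hfinj.comp g.injective)
  have hmem : ∀ n, f (g n) ∈ Set.range (nu le A) := fun n => (e (g n)).2
  choose p hp using hmem
  obtain ⟨n, m, hnm, hle⟩ := hw p
  have h1 : nu le A (p m) ≤ nu le A (p n) := nu_antitone htrans hle
  rw [hp n, hp m] at h1
  exact absurd h1 (not_le.mpr (hsm hnm))


/-- transfinite greedy matching: if `X` has at most `c` elements and each `x` has at
least `c` candidates `T x`, then there is an injective choice. -/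
theorem greedy (c : Cardinal.{u}) (hc : Cardinal.aleph0 ≤ c) (X : Set Q) (T : ↥X → Set Q)
    (hX : #(↥X) ≤ c) (hT : ∀ x, c ≤ #(↥(T x))) :
    ∃ f : ↥X → Q, Function.Injective f ∧ ∀ x, f x ∈ T x := by
  classical
  by_cases hne : Nonempty Q
  swap
  · exact ⟨fun x => (hne ⟨x.1⟩).elim, fun x => (hne ⟨x.1⟩).elim, fun x => (hne ⟨x.1⟩).elim⟩
  obtain ⟨e⟩ : Nonempty (↥X ↪ c.ord.ToType) := by
    rw [← Cardinal.le_def, Cardinal.mk_ord_toType]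
    exact hX
  set r : ↥X → ↥X → Prop := fun x y => e x < e y with hr
  have hwf : WellFounded r := InvImage.wf e (IsWellFounded.wf)
  set body : ∀ x : ↥X, (∀ y : ↥X, r y x → Q) → Q := fun x ih =>
    Classical.epsilon (fun q => q ∈ T x ∧ ∀ (y) (h : r y x), q ≠ ih y h) with hbody
  set f : ↥X → Q := hwf.fix body with hfdef
  have hfix : ∀ x, f x = Classical.epsilon
      (fun q => q ∈ T x ∧ ∀ (y) (h : r y x), q ≠ f y) := by
    intro x
    rw [hfdef, WellFounded.fix_eq]
  have hkey : ∀ x, f x ∈ T x ∧ ∀ (y) (_ : r y x), f x ≠ f y := by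
    intro x
    rw [hfix x]
    apply Classical.epsilon_spec
      (p := fun q => q ∈ T x ∧ ∀ (y) (h : r y x), q ≠ f y)
    -- nonemptiness
    by_contra hno
    push_neg at hno
    -- T x is covered by the previous values
    have hsub : T x ⊆ f '' {y : ↥X | r y x} := by
      intro q hq
      obtain ⟨y, hy, hqy⟩ := hno q hq
      exact ⟨y, hy, hqy.symm⟩
    have h1 : #(↥(T x)) ≤ #(↥(f '' {y : ↥X | r y x})) := Cardinal.mk_le_mk_of_subset hsub
    have h2 : #(↥(f '' {y : ↥X | r y x})) ≤ #(↥{y : ↥X | r y x}) := Cardinal.mk_image_le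
    have h3 : #(↥{y : ↥X | r y x}) ≤ #(↥(Set.Iio (e x))) := by
      refine Cardinal.mk_le_of_injective (f := fun y : ↥{y : ↥X | r y x} =>
        (⟨e y.1, y.2⟩ : ↥(Set.Iio (e x)))) ?_
      intro a b hab
      have : e a.1 = e b.1 := by simpa using congrArg Subtype.val hab
      exact Subtype.ext (e.injective this)
    have h4 : #(↥(Set.Iio (e x))) < c := Cardinal.mk_Iio_ord_toType (e x)
    exact absurd (hT x) (not_le.mpr (lt_of_le_of_lt (h1.trans (h2.trans h3)) h4))
  refine ⟨f, ?_, fun x => (hkey x).1⟩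
  intro a b hab
  by_contra hne'
  have : e a ≠ e b := fun h => hne' (e.injective h)
  rcases lt_or_gt_of_ne this with h | h
  · exact (hkey b).2 a h hab.symm
  · exact (hkey a).2 b h hab


section FinitePart

open Finset
open scoped Classical

variable (le)

noncomputable def aboveF (q : Q) (s : Finset Q) : Finset Q :=
  s.filter (fun x => le q x)

noncomputable def clsF (q : Q) (s : Finset Q) : Finset Q :=
  s.filter (fun x => le q x ∧ le x q)

noncomputable def strictF (q : Q) (s : Finset Q) : Finset Q :=
  s.filter (fun x => le q x ∧ ¬ le x q)

variable {le}

theorem mem_aboveF {q x : Q} {s : Finset Q} : x ∈ aboveF le q s ↔ x ∈ s ∧ le q x := by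
  simp [aboveF]

theorem mem_clsF {q x : Q} {s : Finset Q} :
    x ∈ clsF le q s ↔ x ∈ s ∧ le q x ∧ le x q := by
  simp [clsF, and_assoc]

theorem mem_strictF {q x : Q} {s : Finset Q} :
    x ∈ strictF le q s ↔ x ∈ s ∧ le q x ∧ ¬ le x q := by
  simp [strictF, and_assoc]


theorem split_card (q : Q) (s : Finset Q) :
    (clsF le q s).card + (strictF le q s).card = (aboveF le q s).card := by
  classical
  have h1 : clsF le q s = (aboveF le q s).filter (fun x => le x q) := by
    ext x
    simp only [mem_clsF, Finset.mem_filter, mem_aboveF]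
    tauto
  have h2 : strictF le q s = (aboveF le q s).filter (fun x => ¬ le x q) := by
    ext x
    simp only [mem_strictF, Finset.mem_filter, mem_aboveF]
    tauto
  rw [h1, h2]
  exact Finset.card_filter_add_card_filter_not (fun x => le x q)

variable (hrefl : Reflexive le) (htrans : Transitive le)

theorem mkq_eq (hrefl : Reflexive le) (htrans : Transitive le) (x y : Q) :
    Quotient.mk (QS le hrefl htrans) x = Quotient.mk (QS le hrefl htrans) y ↔
      le x y ∧ le y x :=
  ⟨fun h => Quotient.exact h, fun h => Quotient.sound h⟩

theorem claimM (hrefl : Reflexive le) (htrans : Transitive le) (A B : Finset Q)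
    (hAB : ∀ q ∈ A ∪ B, (aboveF le q A).card = (aboveF le q B).card) :
    ∀ (n : ℕ) (q : Q), q ∈ A ∪ B → (strictF le q (A ∪ B)).card ≤ n →
      (clsF le q A).card = (clsF le q B).card := by
  classical
  set mkq := Quotient.mk (QS le hrefl htrans) with hmkq
  intro n
  induction n with
  | zero =>
    intro q hq hn
    have hstrict : ∀ s : Finset Q, s ⊆ A ∪ B → strictF le q s = ∅ := by
      intro s hs
      have h0 : strictF le q (A ∪ B) = ∅ := Finset.card_eq_zero.mp (Nat.le_zero.mp hn)
      apply Finset.eq_empty_of_forall_notMem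
      intro x hx
      have : x ∈ strictF le q (A ∪ B) := by
        rw [mem_strictF] at hx ⊢
        exact ⟨hs hx.1, hx.2⟩
      simp [h0] at this
    have hA := split_card (le := le) q A
    have hB := split_card (le := le) q B
    rw [hstrict A Finset.subset_union_left] at hA
    rw [hstrict B Finset.subset_union_right] at hB
    simp only [Finset.card_empty, Nat.add_zero] at hA hB
    rw [hA, hB, hAB q hq]
  | succ n ih =>
    intro q hq hn
    -- key: equal strict counts via class decomposition
    have hstricteq : (strictF le q A).card = (strictF le q B).card := by
      have hsum : ∀ s : Finset Q, s ⊆ A ∪ B →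
          (strictF le q s).card = ∑ b ∈ (strictF le q (A ∪ B)).image mkq,
            ((strictF le q s).filter (fun x => mkq x = b)).card := by
        intro s hs
        rw [Finset.card_eq_sum_card_image mkq (strictF le q s)]
        apply Finset.sum_subset
        · apply Finset.image_subset_image
          intro x hx
          rw [mem_strictF] at hx ⊢
          exact ⟨hs hx.1, hx.2⟩
        · intro b _ hb
          rw [Finset.card_eq_zero]
          apply Finset.eq_empty_of_forall_notMem
          intro x hx
          rw [Finset.mem_filter] at hx
          obtain ⟨hx1, hx2⟩ := hx
          apply hb
          rw [← hx2]
          exact Finset.mem_image_of_mem mkq hx1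
      rw [hsum A Finset.subset_union_left, hsum B Finset.subset_union_right]
      apply Finset.sum_congr rfl
      intro b hb
      obtain ⟨x₀, hx₀mem, hx₀⟩ := Finset.mem_image.mp hb
      rw [mem_strictF] at hx₀mem
      have hfilter : ∀ s : Finset Q, (strictF le q s).filter (fun x => mkq x = b) =
          clsF le x₀ s := by
        intro s
        ext x
        rw [Finset.mem_filter, mem_strictF, mem_clsF, ← hx₀, hmkq, mkq_eq]
        constructor
        · rintro ⟨⟨hxs, -, -⟩, hxx₀, hx₀x⟩
          exact ⟨hxs, hx₀x, hxx₀⟩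
        · rintro ⟨hxs, hx₀x, hxx₀⟩
          refine ⟨⟨hxs, htrans hx₀mem.2.1 hx₀x, fun hxq => ?_⟩, hxx₀, hx₀x⟩
          exact hx₀mem.2.2 (htrans hx₀x hxq)
      rw [hfilter A, hfilter B]
      -- apply IH at x₀
      apply ih x₀ (Finset.mem_union.mpr (Finset.mem_union.mp hx₀mem.1))
      -- measure decreases
      have hss : strictF le x₀ (A ∪ B) ⊂ strictF le q (A ∪ B) := by
        constructor
        · intro z hz
          rw [mem_strictF] at hz ⊢
          refine ⟨hz.1, htrans hx₀mem.2.1 hz.2.1, fun hzq => ?_⟩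
          exact hx₀mem.2.2 (htrans hz.2.1 hzq)
        · intro hsub
          have : x₀ ∈ strictF le x₀ (A ∪ B) := hsub (by
            rw [mem_strictF]; exact ⟨hx₀mem.1, hx₀mem.2.1, hx₀mem.2.2⟩)
          rw [mem_strictF] at this
          exact this.2.2 (hrefl x₀)
      have := Finset.card_lt_card hss
      omega
    have hA := split_card (le := le) q A
    have hB := split_card (le := le) q B
    have := hAB q hq
    omega

theorem finmatch (hrefl : Reflexive le) (htrans : Transitive le) (A B : Finset Q)
    (hAB : ∀ q ∈ A ∪ B, (aboveF le q A).card = (aboveF le q B).card) :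
    ∃ f : {x // x ∈ A} → Q, Function.Injective f ∧ ∀ a, f a ∈ B ∧ le a.1 (f a) := by
  classical
  set mkq := Quotient.mk (QS le hrefl htrans) with hmkq
  have hcard : ∀ c : Quotient (QS le hrefl htrans),
      (A.filter (fun x => mkq x = c)).card ≤ (B.filter (fun x => mkq x = c)).card := by
    intro c
    rcases (A.filter (fun x => mkq x = c)).eq_empty_or_nonempty with h | h
    · simp [h]
    · obtain ⟨a, ha⟩ := h
      rw [Finset.mem_filter] at ha
      have hfil : ∀ s : Finset Q, s.filter (fun x => mkq x = c) = clsF le a s := by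
        intro s
        ext x
        rw [Finset.mem_filter, mem_clsF, ← ha.2, hmkq, mkq_eq]
        exact ⟨fun ⟨h1, h2⟩ => ⟨h1, h2.2, h2.1⟩, fun ⟨h1, h2, h3⟩ => ⟨h1, h3, h2⟩⟩
      rw [hfil A, hfil B]
      exact le_of_eq (claimM hrefl htrans A B hAB
        (strictF le a (A ∪ B)).card a (Finset.mem_union_left _ ha.1) le_rfl)
  have hemb : ∀ c : Quotient (QS le hrefl htrans),
      Nonempty ({x // x ∈ A.filter (fun x => mkq x = c)} ↪
        {x // x ∈ B.filter (fun x => mkq x = c)}) := by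
    intro c
    apply Function.Embedding.nonempty_of_card_le
    simpa [Fintype.card_coe] using hcard c
  have E : ∀ c : Quotient (QS le hrefl htrans),
      {x // x ∈ A.filter (fun x => mkq x = c)} ↪ {x // x ∈ B.filter (fun x => mkq x = c)} :=
    fun c => Classical.choice (hemb c)
  -- uniform per-class function
  set E' : Quotient (QS le hrefl htrans) → Q → Q := fun c x =>
    if h : x ∈ A.filter (fun x => mkq x = c) then (E c ⟨x, h⟩).1 else x with hE'
  have hE'mem : ∀ (c) (x : Q) (h : x ∈ A.filter (fun x => mkq x = c)),
      E' c x ∈ B.filter (fun x => mkq x = c) := by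
    intro c x h
    simp only [hE', dif_pos h]
    exact (E c ⟨x, h⟩).2
  have hE'inj : ∀ (c) (x y : Q) (hx : x ∈ A.filter (fun x => mkq x = c))
      (hy : y ∈ A.filter (fun x => mkq x = c)), E' c x = E' c y → x = y := by
    intro c x y hx hy hxy
    simp only [hE', dif_pos hx, dif_pos hy] at hxy
    have := (E c).injective (Subtype.ext hxy)
    exact congrArg Subtype.val this
  refine ⟨fun a => E' (mkq a.1) a.1, ?_, ?_⟩
  · intro a b hab
    have hab2 : E' (mkq a.1) a.1 = E' (mkq b.1) b.1 := hab
    have hma : a.1 ∈ A.filter (fun x => mkq x = mkq a.1) :=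
      Finset.mem_filter.mpr ⟨a.2, rfl⟩
    have hmb : b.1 ∈ A.filter (fun x => mkq x = mkq b.1) :=
      Finset.mem_filter.mpr ⟨b.2, rfl⟩
    have hva := hE'mem (mkq a.1) a.1 hma
    have hvb := hE'mem (mkq b.1) b.1 hmb
    rw [Finset.mem_filter] at hva hvb
    have hc : mkq a.1 = mkq b.1 := by
      rw [← hva.2, ← hvb.2]
      exact congrArg mkq hab2
    have hab' : E' (mkq a.1) a.1 = E' (mkq a.1) b.1 := by
      conv_rhs => rw [hc]
      exact hab2
    have hmb' : b.1 ∈ A.filter (fun x => mkq x = mkq a.1) :=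
      Finset.mem_filter.mpr ⟨b.2, hc.symm⟩
    exact Subtype.ext (hE'inj (mkq a.1) a.1 b.1 hma hmb' hab')
  · intro a
    have hma : a.1 ∈ A.filter (fun x => mkq x = mkq a.1) :=
      Finset.mem_filter.mpr ⟨a.2, rfl⟩
    have hv := hE'mem (mkq a.1) a.1 hma
    rw [Finset.mem_filter] at hv
    refine ⟨hv.1, ?_⟩
    have := (mkq_eq hrefl htrans _ _).mp hv.2
    exact this.2

end FinitePart

section Hall

variable (hrefl : Reflexive le) (htrans : Transitive le)
  (hw : ∀ f : ℕ → Q, ∃ n m : ℕ, n < m ∧ le (f n) (f m))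

/-- the set of points of `X` with finitely many elements of `X` above them is finite -/
theorem finreg (hrefl : Reflexive le) (htrans : Transitive le)
    (hw : ∀ f : ℕ → Q, ∃ n m : ℕ, n < m ∧ le (f n) (f m)) (X : Set Q) :
    {x | x ∈ X ∧ nu le X x < Cardinal.aleph0}.Finite := by
  letI : IsRefl Q le := ⟨hrefl⟩
  letI : IsTrans Q le := ⟨fun a b c hab hbc => htrans hab hbc⟩
  letI : IsPreorder Q le := { refl := hrefl, trans := fun a b c hab hbc => htrans hab hbc }
  by_contra hinf
  have hinf : {x | x ∈ X ∧ nu le X x < Cardinal.aleph0}.Infinite := hinf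
  have e := hinf.natEmbedding
  have hpwo : Set.PartiallyWellOrderedOn (Set.univ : Set Q) le := by
    intro f
    obtain ⟨n, m, hnm, hle⟩ := hw (fun n => (f n).1)
    exact ⟨n, m, hnm, hle⟩
  obtain ⟨g, hg⟩ := hpwo.exists_monotone_subseq (f := fun n => (e n).1)
    (fun n => Set.mem_univ _)
  set d : ℕ → Q := fun n => (e (g n)).1 with hd
  have hdinj : Function.Injective d := fun a b hab => by
    have := e.injective (Subtype.ext hab)
    exact g.injective this
  have hinf2 : Infinite ↥(X ∩ {y | le (d 0) y}) := by
    apply Infinite.of_injective (f := fun n : ℕ =>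
      (⟨d n, (e (g n)).2.1, hg 0 n (Nat.zero_le n)⟩ : ↥(X ∩ {y | le (d 0) y})))
    intro a b hab
    have : d a = d b := by simpa using congrArg Subtype.val hab
    exact hdinj this
  have h1 : Cardinal.aleph0 ≤ nu le X (d 0) := Cardinal.aleph0_le_mk _
  exact absurd h1 (not_le.mpr (e (g 0)).2.2)

/-- level sets have cardinality at most their level -/
theorem boundAc (hrefl : Reflexive le) (htrans : Transitive le)
    (hw : ∀ f : ℕ → Q, ∃ n m : ℕ, n < m ∧ le (f n) (f m)) (X : Set Q)
    (c : Cardinal.{u}) (hc : Cardinal.aleph0 ≤ c) :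
    #(↥{x | x ∈ X ∧ nu le X x = c}) ≤ c := by
  classical
  set Xc := {x | x ∈ X ∧ nu le X x = c} with hXc
  set U := {y | ∃ a, a ∈ Xc ∧ le a y} with hU
  have hUup : ∀ y ∈ U, ∀ z, le y z → z ∈ U := by
    rintro y ⟨a, ha, hay⟩ z hyz
    exact ⟨a, ha, htrans hay hyz⟩
  obtain ⟨F, hF⟩ := exists_gen hw U hUup
  have hFU : ∀ f : ↥F, ∃ a, a ∈ Xc ∧ le a f.1 := by
    intro f
    have : f.1 ∈ U := (hF f.1).mpr ⟨f.1, f.2, hrefl f.1⟩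
    exact this
  choose af haf1 haf2 using hFU
  have hsub : Xc ⊆ ⋃ (f : ↥F), (X ∩ {y | le (af f) y}) := by
    intro a ha
    have haU : a ∈ U := ⟨a, ha, hrefl a⟩
    obtain ⟨b, hb, hba⟩ := (hF a).mp haU
    exact Set.mem_iUnion.mpr ⟨⟨b, hb⟩, ha.1, htrans (haf2 ⟨b, hb⟩) hba⟩
  rcases isEmpty_or_nonempty ↥F with hF0 | hF1
  · have : Xc ⊆ ∅ := by
      rw [Set.iUnion_of_empty] at hsub
      exact hsub
    have h0 : #(↥Xc) ≤ #(↥(∅ : Set Q)) := Cardinal.mk_le_mk_of_subset this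
    rw [Cardinal.mk_emptyCollection] at h0
    exact h0.trans (le_trans Cardinal.aleph0_pos.le hc)
  · have h1 : #(↥Xc) ≤ #(↥(⋃ (f : ↥F), (X ∩ {y | le (af f) y}))) :=
      Cardinal.mk_le_mk_of_subset hsub
    have h2 := Cardinal.mk_iUnion_le (fun f : ↥F => X ∩ {y | le (af f) y})
    have h3 : ∀ f : ↥F, #(↥(X ∩ {y | le (af f) y})) = c := fun f => (haf1 f).2
    have h4 : ⨆ f : ↥F, #(↥(X ∩ {y | le (af f) y})) = c := by
      simp only [h3]
      exact ciSup_const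
    rw [h4] at h2
    have h5 : #(↥F) ≤ Cardinal.aleph0 := by
      rw [Cardinal.mk_coe_finset]
      exact (Cardinal.nat_lt_aleph0 _).le
    calc #(↥Xc) ≤ #(↥F) * c := h1.trans h2
      _ ≤ c * c := mul_le_mul' (h5.trans hc) le_rfl
      _ = c := Cardinal.mul_eq_self hc

theorem bigUnion_lt (c : Cardinal.{u}) (hc : Cardinal.aleph0 ≤ c) (P : Cardinal.{u} → Set Q) :
    ∀ S : Finset Cardinal.{u}, (∀ c' ∈ S, #(↥(P c')) < c) →
      #(↥(⋃ c' ∈ (↑S : Set Cardinal.{u}), P c')) < c := by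
  classical
  intro S
  induction S using Finset.induction with
  | empty =>
    intro _
    simp only [Finset.coe_empty, Set.biUnion_empty, Cardinal.mk_emptyCollection]
    exact lt_of_lt_of_le Cardinal.aleph0_pos hc
  | @insert a s ha ih =>
    intro hall'
    have h1 : (⋃ c' ∈ (↑(insert a s) : Set Cardinal.{u}), P c') =
        P a ∪ ⋃ c' ∈ (↑s : Set Cardinal.{u}), P c' := by
      rw [Finset.coe_insert, Set.biUnion_insert]
    rw [h1]
    have h2 := Cardinal.mk_union_le (P a) (⋃ c' ∈ (↑s : Set Cardinal.{u}), P c')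
    apply lt_of_le_of_lt h2
    apply Cardinal.add_lt_of_lt hc
    · exact hall' a (Finset.mem_insert_self _ _)
    · exact ih (fun c' hc' => hall' c' (Finset.mem_insert_of_mem hc'))


theorem hall (hrefl : Reflexive le) (htrans : Transitive le)
    (hw : ∀ f : ℕ → Q, ∃ n m : ℕ, n < m ∧ le (f n) (f m))
    (A B : Set Q) (h : ∀ q, nu le A q = nu le B q) :
    Dominates le A B := by
  classical
  set v : Q → Cardinal.{u} := nu le A with hv
  have hSAf : {x | x ∈ A ∧ v x < Cardinal.aleph0}.Finite := finreg hrefl htrans hw A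
  have hSBf : {x | x ∈ B ∧ v x < Cardinal.aleph0}.Finite := by
    have hfin := finreg hrefl htrans hw B
    have hset : {x | x ∈ B ∧ nu le B x < Cardinal.aleph0} =
        {x | x ∈ B ∧ v x < Cardinal.aleph0} := by
      ext x
      simp only [Set.mem_setOf_eq, ← h x]
    rwa [hset] at hfin
  set FA := hSAf.toFinset with hFA
  set FB := hSBf.toFinset with hFB
  have hcounts : ∀ q ∈ FA ∪ FB, (aboveF le q FA).card = (aboveF le q FB).card := by
    intro q hq
    have hqfin : v q < Cardinal.aleph0 := by
      rcases Finset.mem_union.mp hq with hq | hq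
      · exact (hSAf.mem_toFinset.mp hq).2
      · exact (hSBf.mem_toFinset.mp hq).2
    have hAq : A ∩ {x | le q x} = (↑(aboveF le q FA) : Set Q) := by
      ext x
      constructor
      · rintro ⟨hxA, hxq⟩
        have hvx : v x < Cardinal.aleph0 :=
          lt_of_le_of_lt (nu_antitone htrans hxq) hqfin
        exact Finset.mem_coe.mpr (mem_aboveF.mpr ⟨hSAf.mem_toFinset.mpr ⟨hxA, hvx⟩, hxq⟩)
      · intro hx
        have hx' := mem_aboveF.mp (Finset.mem_coe.mp hx)
        exact ⟨(hSAf.mem_toFinset.mp hx'.1).1, hx'.2⟩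
    have hBq : B ∩ {x | le q x} = (↑(aboveF le q FB) : Set Q) := by
      ext x
      constructor
      · rintro ⟨hxB, hxq⟩
        have hvx : v x < Cardinal.aleph0 := by
          have h1 : nu le B x ≤ nu le B q := nu_antitone htrans hxq
          rw [← h x, ← h q] at h1
          exact lt_of_le_of_lt h1 hqfin
        exact Finset.mem_coe.mpr (mem_aboveF.mpr ⟨hSBf.mem_toFinset.mpr ⟨hxB, hvx⟩, hxq⟩)
      · intro hx
        have hx' := mem_aboveF.mp (Finset.mem_coe.mp hx)
        exact ⟨(hSBf.mem_toFinset.mp hx'.1).1, hx'.2⟩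
    have h1 : v q = ((aboveF le q FA).card : Cardinal) := by
      show #(↥(A ∩ {x | le q x})) = ((aboveF le q FA).card : Cardinal)
      rw [hAq]
      exact Cardinal.mk_coe_finset
    have h2 : (nu le B q) = ((aboveF le q FB).card : Cardinal) := by
      show #(↥(B ∩ {x | le q x})) = ((aboveF le q FB).card : Cardinal)
      rw [hBq]
      exact Cardinal.mk_coe_finset
    have h3 := h q
    rw [h1, h2] at h3
    exact_mod_cast h3
  obtain ⟨ffin, hffini, hffin⟩ := finmatch hrefl htrans FA FB hcounts
  -- infinite levels
  have gc : ∀ c : Cardinal.{u}, ∃ g : ↥{x | x ∈ A ∧ v x = c} → Q,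
      Cardinal.aleph0 ≤ c → Function.Injective g ∧
        ∀ x, (g x ∈ B ∧ v (g x) = c) ∧ le x.1 (g x) := by
    intro c
    by_cases hc : Cardinal.aleph0 ≤ c
    · have hX : #(↥{x | x ∈ A ∧ v x = c}) ≤ c := boundAc hrefl htrans hw A c hc
      have hT : ∀ x : ↥{x | x ∈ A ∧ v x = c},
          c ≤ #(↥{y | (y ∈ B ∧ v y = c) ∧ le x.1 y}) := by
        intro x
        obtain ⟨haA, hac⟩ := x.2
        set a := x.1 with hax
        have hrngf : (Set.range v).Finite := nu_range_finite htrans hw A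
        set Rv := hrngf.toFinset with hRv
        set S := Rv.filter (fun c' => Cardinal.aleph0 ≤ c' ∧ c' < c) with hS
        set Bc : Cardinal.{u} → Set Q := fun c' => {y | y ∈ B ∧ v y = c'} with hBc
        set T : Set Q := {y | (y ∈ B ∧ v y = c) ∧ le a y} with hT0
        set J1 : Set Q := {y | y ∈ B ∧ v y < Cardinal.aleph0} with hJ1def
        set J2 : Set Q := ⋃ c' ∈ (↑S : Set Cardinal.{u}), Bc c' with hJ2def
        have hsplit : B ∩ {y | le a y} ⊆ T ∪ (J1 ∪ J2) := by
          rintro y ⟨hyB, hyle⟩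
          have hvy : v y ≤ c := by
            rw [← hac]
            exact nu_antitone htrans hyle
          by_cases h1 : v y < Cardinal.aleph0
          · exact Or.inr (Or.inl ⟨hyB, h1⟩)
          by_cases h2 : v y = c
          · exact Or.inl ⟨⟨hyB, h2⟩, hyle⟩
          · refine Or.inr (Or.inr ?_)
            have hmemS : v y ∈ S := by
              rw [hS, Finset.mem_filter]
              exact ⟨hrngf.mem_toFinset.mpr ⟨y, rfl⟩, not_lt.mp h1, lt_of_le_of_ne hvy h2⟩
            exact Set.mem_biUnion (Finset.mem_coe.mpr hmemS) ⟨hyB, rfl⟩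
        have hJ1 : #(↥J1) < c := lt_of_lt_of_le hSBf.lt_aleph0 hc
        have hJ2 : #(↥J2) < c := by
          apply bigUnion_lt c hc
          intro c' hc'
          rw [hS, Finset.mem_filter] at hc'
          have hb := boundAc hrefl htrans hw B c' hc'.2.1
          have hset : {x | x ∈ B ∧ nu le B x = c'} = Bc c' := by
            ext z
            simp only [Set.mem_setOf_eq, hBc, ← h z]
          rw [hset] at hb
          exact lt_of_le_of_lt hb hc'.2.2
        have hBa : #(↥(B ∩ {y | le a y})) = c := by
          have h4 : nu le B a = c := by rw [← h a]; exact hac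
          exact h4
        by_contra hT0'
        push_neg at hT0'
        have hle1 : #(↥(B ∩ {y | le a y})) ≤ #(↥(T ∪ (J1 ∪ J2))) :=
          Cardinal.mk_le_mk_of_subset hsplit
        have hle2 := Cardinal.mk_union_le T (J1 ∪ J2)
        have hle3 := Cardinal.mk_union_le J1 J2
        have hlt : #(↥(T ∪ (J1 ∪ J2))) < c := by
          apply lt_of_le_of_lt hle2
          apply Cardinal.add_lt_of_lt hc hT0'
          apply lt_of_le_of_lt hle3
          exact Cardinal.add_lt_of_lt hc hJ1 hJ2
        rw [hBa] at hle1
        exact absurd (lt_of_le_of_lt hle1 hlt) (lt_irrefl c)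
      obtain ⟨g, hgi, hgm⟩ := greedy c hc _ _ hX hT
      exact ⟨g, fun _ => ⟨hgi, fun x => hgm x⟩⟩
    · exact ⟨fun x => x.1, fun hc' => absurd hc' hc⟩
  choose G hG using gc
  -- uniform version of G
  set G' : Cardinal.{u} → Q → Q := fun c x =>
    if hx : x ∈ {x | x ∈ A ∧ v x = c} then G c ⟨x, hx⟩ else x with hG'
  have hG'mem : ∀ (c) (_ : Cardinal.aleph0 ≤ c) (x) (hx : x ∈ {x | x ∈ A ∧ v x = c}),
      (G' c x ∈ B ∧ v (G' c x) = c) ∧ le x (G' c x) := by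
    intro c hc x hx
    simp only [hG', dif_pos hx]
    exact (hG c hc).2 ⟨x, hx⟩
  have hG'inj : ∀ (c) (_ : Cardinal.aleph0 ≤ c) (x y)
      (hx : x ∈ {x | x ∈ A ∧ v x = c}) (hy : y ∈ {x | x ∈ A ∧ v x = c}),
      G' c x = G' c y → x = y := by
    intro c hc x y hx hy hxy
    simp only [hG', dif_pos hx, dif_pos hy] at hxy
    exact congrArg Subtype.val ((hG c hc).1 hxy)
  -- global function
  set fbig : ↥A → Q := fun a =>
    if hfin : v a.1 < Cardinal.aleph0 then ffin ⟨a.1, hSAf.mem_toFinset.mpr ⟨a.2, hfin⟩⟩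
    else G' (v a.1) a.1 with hfbig
  have hprop : ∀ a : ↥A, (fbig a ∈ B) ∧ le a.1 (fbig a) ∧
      ((v a.1 < Cardinal.aleph0 ∧ v (fbig a) < Cardinal.aleph0) ∨
       (Cardinal.aleph0 ≤ v a.1 ∧ v (fbig a) = v a.1)) := by
    intro a
    by_cases hfin : v a.1 < Cardinal.aleph0
    · have heq : fbig a = ffin ⟨a.1, hSAf.mem_toFinset.mpr ⟨a.2, hfin⟩⟩ := by
        rw [hfbig]; exact dif_pos hfin
      obtain ⟨hmem, hle⟩ := hffin ⟨a.1, hSAf.mem_toFinset.mpr ⟨a.2, hfin⟩⟩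
      have hmem' := hSBf.mem_toFinset.mp hmem
      rw [heq]
      exact ⟨hmem'.1, hle, Or.inl ⟨hfin, hmem'.2⟩⟩
    · have hc := not_lt.mp hfin
      have heq : fbig a = G' (v a.1) a.1 := by
        rw [hfbig]; exact dif_neg hfin
      obtain ⟨⟨hB', hveq⟩, hle⟩ := hG'mem (v a.1) hc a.1 ⟨a.2, rfl⟩
      rw [heq]
      exact ⟨hB', hle, Or.inr ⟨hc, hveq⟩⟩
  refine ⟨fun a => ⟨fbig a, (hprop a).1⟩, ?_, fun a => (hprop a).2.1⟩
  intro a b hab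
  have hab' : fbig a = fbig b := congrArg Subtype.val hab
  apply Subtype.ext
  by_cases hfa : v a.1 < Cardinal.aleph0 <;> by_cases hfb : v b.1 < Cardinal.aleph0
  · -- both finite
    have heqa : fbig a = ffin ⟨a.1, hSAf.mem_toFinset.mpr ⟨a.2, hfa⟩⟩ := by
      rw [hfbig]; exact dif_pos hfa
    have heqb : fbig b = ffin ⟨b.1, hSAf.mem_toFinset.mpr ⟨b.2, hfb⟩⟩ := by
      rw [hfbig]; exact dif_pos hfb
    rw [heqa, heqb] at hab'
    simpa using congrArg Subtype.val (hffini hab')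
  · -- a finite, b infinite : impossible
    exfalso
    have h1 := ((hprop a).2.2.resolve_right (fun hh => absurd hfa (not_lt.mpr hh.1))).2
    have h2 := ((hprop b).2.2.resolve_left (fun hh => absurd hh.1 (not_lt.mpr (not_lt.mp hfb)))).2
    rw [hab'] at h1
    rw [h2] at h1
    exact absurd h1 (not_lt.mpr (not_lt.mp hfb))
  · exfalso
    have h1 := ((hprop b).2.2.resolve_right (fun hh => absurd hfb (not_lt.mpr hh.1))).2
    have h2 := ((hprop a).2.2.resolve_left (fun hh => absurd hh.1 (not_lt.mpr (not_lt.mp hfa)))).2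
    rw [← hab'] at h1
    rw [h2] at h1
    exact absurd h1 (not_lt.mpr (not_lt.mp hfa))
  · -- both infinite
    have hca := not_lt.mp hfa
    have hcb := not_lt.mp hfb
    have heqa : fbig a = G' (v a.1) a.1 := by rw [hfbig]; exact dif_neg hfa
    have heqb : fbig b = G' (v b.1) b.1 := by rw [hfbig]; exact dif_neg hfb
    have h1 := ((hprop a).2.2.resolve_left (fun hh => absurd hh.1 (not_lt.mpr hca))).2
    have h2 := ((hprop b).2.2.resolve_left (fun hh => absurd hh.1 (not_lt.mpr hcb))).2
    have hveq : v a.1 = v b.1 := by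
      rw [← h1, ← h2, hab']
    have hab2 : G' (v a.1) a.1 = G' (v a.1) b.1 := by
      conv_rhs => rw [hveq]
      rw [← heqa, ← heqb]
      exact hab'
    exact hG'inj (v a.1) hca a.1 b.1 ⟨a.2, rfl⟩ ⟨b.2, hveq.symm⟩ hab2

end Hall

section Encode

variable (le) (hrefl : Reflexive le) (htrans : Transitive le) (κ : Cardinal.{u})

/-- functions that arise as `nu` of a small set -/
def GoodFun (w : Q → Cardinal.{u}) : Prop :=
  (Set.range w).Finite ∧ (∀ q, w q ≤ κ) ∧
    ∀ c ∈ Set.range w, ∃ F : Finset (Quotient (QS le hrefl htrans)),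
      ∀ x, (∃ p ∈ F, le p.out x) ↔ w x < c

open scoped Classical in
noncomputable def code (w : Q → Cardinal.{u}) :
    Finset ({c : Cardinal.{u} // c ≤ κ} ×
      ULift.{u+1} (Finset (Quotient (QS le hrefl htrans)))) :=
  if h : GoodFun le hrefl htrans κ w then
    h.1.toFinset.attach.image (fun c =>
      (⟨c.1, by obtain ⟨q, hq⟩ := h.1.mem_toFinset.mp c.2; exact hq ▸ h.2.1 q⟩,
       ULift.up (Classical.choose (h.2.2 c.1 (h.1.mem_toFinset.mp c.2)))))
  else ∅

theorem code_inj {w₁ w₂ : Q → Cardinal.{u}} (h₁ : GoodFun le hrefl htrans κ w₁)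
    (h₂ : GoodFun le hrefl htrans κ w₂)
    (hc : code le hrefl htrans κ w₁ = code le hrefl htrans κ w₂) : w₁ = w₂ := by
  classical
  have key : ∀ wa wb (ha : GoodFun le hrefl htrans κ wa) (hb : GoodFun le hrefl htrans κ wb),
      code le hrefl htrans κ wa = code le hrefl htrans κ wb → ∀ q, ¬ wb q < wa q := by
    intro wa wb ha hb hcode q hlt
    have hmem : wa q ∈ Set.range wa := ⟨q, rfl⟩
    have hspec₁ := Classical.choose_spec (ha.2.2 (wa q) hmem)
    set F₁ := Classical.choose (ha.2.2 (wa q) hmem) with hF₁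
    have hpair : ((⟨wa q, by exact hmem.choose_spec ▸ ha.2.1 hmem.choose⟩ :
        {c : Cardinal.{u} // c ≤ κ}), ULift.up F₁) ∈ code le hrefl htrans κ wa := by
      rw [code, dif_pos ha]
      apply Finset.mem_image.mpr
      refine ⟨⟨wa q, ha.1.mem_toFinset.mpr hmem⟩, Finset.mem_attach _ _, ?_⟩
      rfl
    rw [hcode, code, dif_pos hb] at hpair
    obtain ⟨d, -, hd⟩ := Finset.mem_image.mp hpair
    have hd1 : (d.1 : Cardinal.{u}) = wa q := congrArg (fun t => t.1.1) hd
    have hd2 : Classical.choose (hb.2.2 d.1 (hb.1.mem_toFinset.mp d.2)) = F₁ :=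
      congrArg (fun t => t.2.down) hd
    have hspec₂ := Classical.choose_spec (hb.2.2 d.1 (hb.1.mem_toFinset.mp d.2))
    rw [hd2] at hspec₂
    have hq1 : ¬ (∃ p ∈ F₁, le p.out q) := fun hex => lt_irrefl _ ((hspec₁ q).mp hex)
    apply hq1
    apply (hspec₂ q).mpr
    rw [hd1]
    exact hlt
  funext q
  exact le_antisymm (not_lt.mp (key w₁ w₂ h₁ h₂ hc q)) (not_lt.mp (key w₂ w₁ h₂ h₁ hc.symm q))

theorem good_nu (hw : ∀ f : ℕ → Q, ∃ n m : ℕ, n < m ∧ le (f n) (f m))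
    (A : Set Q) (hA : #(↥A) ≤ κ) : GoodFun le hrefl htrans κ (nu le A) := by
  refine ⟨nu_range_finite htrans hw A,
    fun q => le_trans (Cardinal.mk_le_mk_of_subset Set.inter_subset_left) hA, ?_⟩
  intro c _
  have hU : ∀ x ∈ {x | nu le A x < c}, ∀ y, le x y → y ∈ {x | nu le A x < c} :=
    fun x hx y hxy => lt_of_le_of_lt (nu_antitone htrans hxy) hx
  obtain ⟨F₀, hF₀⟩ := exists_gen hw _ hU
  classical
  refine ⟨F₀.image (Quotient.mk (QS le hrefl htrans)), ?_⟩
  intro x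
  constructor
  · rintro ⟨p, hp, hpx⟩
    obtain ⟨a, ha, hap⟩ := Finset.mem_image.mp hp
    subst hap
    have hout := Quotient.mk_out (s := QS le hrefl htrans) a
    have hax : le a x := htrans hout.2 hpx
    exact (hF₀ x).mpr ⟨a, ha, hax⟩
  · intro hx
    obtain ⟨a, ha, hax⟩ := (hF₀ x).mp hx
    refine ⟨Quotient.mk (QS le hrefl htrans) a, Finset.mem_image_of_mem _ ha, ?_⟩
    have hout := Quotient.mk_out (s := QS le hrefl htrans) a
    exact htrans hout.1 hax

end Encode

end CardQuotAux

/-- Let `μ` be an infinite cardinal and `Q` a quasi-order with `|Q|_≡ = μ` such that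
`P_{≤κ}(Q)` is well-quasi-ordered under the domination order, where `κ < ℵ_{μ⁺}`.
Then `|P_κ(Q)|_≡ ≤ μ`. -/
theorem card_quot_powersetCard_le {Q : Type u} (le : Q → Q → Prop)
    (hrefl : Reflexive le) (htrans : Transitive le)
    (μ : Cardinal.{u}) (hμ : Cardinal.aleph0 ≤ μ)
    (hQ : Cardinal.mk (Quot fun a b : Q => le a b ∧ le b a) = μ)
    (κ : Cardinal.{u}) (hκ : κ < Cardinal.aleph (Order.succ μ).ord)
    (hwqo : ∀ f : ℕ → {A : Set Q // Cardinal.mk A ≤ κ},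
      ∃ n m : ℕ, n < m ∧ Dominates le (f n).1 (f m).1) :
    Cardinal.mk (Quot fun A B : {A : Set Q // Cardinal.mk A = κ} =>
      Dominates le A.1 B.1 ∧ Dominates le B.1 A.1) ≤ μ := by
  classical
  by_cases hempty : IsEmpty {A : Set Q // Cardinal.mk A = κ}
  · refine le_trans Cardinal.mk_quot_le ?_
    rw [Cardinal.mk_eq_zero]
    exact le_trans zero_le (le_refl μ)
  by_cases hκ0 : κ = 0
  · have hsub : Subsingleton {A : Set Q // Cardinal.mk A = κ} := by
      constructor
      rintro ⟨A, hA⟩ ⟨B, hB⟩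
      apply Subtype.ext
      have hA' : A = ∅ := Cardinal.mk_emptyCollection_iff.mp (hκ0 ▸ hA)
      have hB' : B = ∅ := Cardinal.mk_emptyCollection_iff.mp (hκ0 ▸ hB)
      show A = B
      rw [hA', hB']
    refine le_trans Cardinal.mk_quot_le ?_
    refine le_trans (Cardinal.le_one_iff_subsingleton.mpr hsub) ?_
    exact le_trans Cardinal.one_lt_aleph0.le hμ
  -- main case
  have hone : (1 : Cardinal.{u}) ≤ κ := Cardinal.one_le_iff_ne_zero.mpr hκ0
  have hwQ : ∀ f : ℕ → Q, ∃ n m : ℕ, n < m ∧ le (f n) (f m) := by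
    intro f
    have hmk : ∀ n, Cardinal.mk (↥({f n} : Set Q)) ≤ κ := fun n => by
      rw [Cardinal.mk_singleton]; exact hone
    obtain ⟨n, m, hnm, hdom⟩ := hwqo (fun n => ⟨{f n}, hmk n⟩)
    obtain ⟨g, -, hgl⟩ := hdom
    refine ⟨n, m, hnm, ?_⟩
    have hle := hgl ⟨f n, rfl⟩
    have hmem := (g ⟨f n, rfl⟩).2
    rw [Set.mem_singleton_iff] at hmem
    rwa [hmem] at hle
  -- the invariant
  set w : {A : Set Q // Cardinal.mk A = κ} → Q → Cardinal.{u} := fun A => CardQuotAux.nu le A.1 with hwdef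
  have hgood : ∀ A, CardQuotAux.GoodFun le hrefl htrans κ (w A) := fun A =>
    CardQuotAux.good_nu le hrefl htrans κ hwQ A.1 (le_of_eq A.2)
  have hsound : ∀ A B : {A : Set Q // Cardinal.mk A = κ},
      (Dominates le A.1 B.1 ∧ Dominates le B.1 A.1) → w A = w B := fun A B hAB =>
    funext fun q => le_antisymm (CardQuotAux.nu_le_of_dominates htrans hAB.1 q)
      (CardQuotAux.nu_le_of_dominates htrans hAB.2 q)
  set Φ : (Quot fun A B : {A : Set Q // Cardinal.mk A = κ} =>
      Dominates le A.1 B.1 ∧ Dominates le B.1 A.1) →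
      Finset ({c : Cardinal.{u} // c ≤ κ} ×
        ULift.{u+1} (Finset (Quotient (CardQuotAux.QS le hrefl htrans)))) :=
    Quot.lift (fun A => CardQuotAux.code le hrefl htrans κ (w A))
      (fun A B hAB => congrArg (CardQuotAux.code le hrefl htrans κ) (hsound A B hAB)) with hΦ
  have hΦinj : Function.Injective Φ := by
    intro x y
    induction x using Quot.ind with | _ A =>
    induction y using Quot.ind with | _ B =>
    intro hxy
    have hw' : w A = w B := CardQuotAux.code_inj le hrefl htrans κ (hgood A) (hgood B) hxy
    apply Quot.sound
    constructor
    · exact CardQuotAux.hall hrefl htrans hwQ A.1 B.1 (fun q => congrFun hw' q)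
    · exact CardQuotAux.hall hrefl htrans hwQ B.1 A.1 (fun q => (congrFun hw' q).symm)
  -- cardinal arithmetic
  have hQ' : Cardinal.mk (Quotient (CardQuotAux.QS le hrefl htrans)) = μ := hQ
  have hNQ' : Nonempty (Quotient (CardQuotAux.QS le hrefl htrans)) := by
    rw [← Cardinal.mk_ne_zero_iff, hQ']
    exact ne_of_gt (lt_of_lt_of_le Cardinal.aleph0_pos hμ)
  have hFinsetQ' : Cardinal.mk (Finset (Quotient (CardQuotAux.QS le hrefl htrans))) ≤ μ := by
    have h1 : Cardinal.mk (Finset (Quotient (CardQuotAux.QS le hrefl htrans))) ≤ Cardinal.mk (Multiset (Quotient (CardQuotAux.QS le hrefl htrans))) :=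
      Cardinal.mk_le_of_injective Finset.val_injective
    have h2 : Cardinal.mk (Multiset (Quotient (CardQuotAux.QS le hrefl htrans))) ≤ Cardinal.mk (List (Quotient (CardQuotAux.QS le hrefl htrans))) := Cardinal.mk_quot_le
    have h3 : Cardinal.mk (List (Quotient (CardQuotAux.QS le hrefl htrans))) = Cardinal.mk (Quotient (CardQuotAux.QS le hrefl htrans)) ⊔ Cardinal.aleph0 :=
      Cardinal.mk_list_eq_max_mk_aleph0 (Quotient (CardQuotAux.QS le hrefl htrans))
    rw [hQ'] at h3
    have h4 : μ ⊔ Cardinal.aleph0 = μ := sup_eq_left.mpr hμ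
    rw [h4] at h3
    exact (h1.trans h2).trans (le_of_eq h3)
  have hCd : Cardinal.mk {c : Cardinal.{u} // c ≤ κ} ≤ Cardinal.lift.{u+1} μ := by
    have haleph0 : Cardinal.aleph0 ≤ Cardinal.lift.{u+1} μ := by
      rw [← Cardinal.lift_aleph0.{u+1, u}]
      exact Cardinal.lift_le.mpr hμ
    by_cases hκω : Cardinal.aleph0 ≤ κ
    · obtain ⟨β₀, hβ₀⟩ := Exists.imp (fun _ h => h.symm) (Set.mem_range.mp (Cardinal.mem_range_aleph_iff.mpr hκω))
      set enc : {c : Cardinal.{u} // c ≤ κ} → (ULift.{u+1} ℕ) ⊕ (↥(Set.Iic β₀)) := fun c =>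
        if hc : c.1 < Cardinal.aleph0 then Sum.inl (ULift.up c.1.toNat)
        else Sum.inr ⟨Classical.choose (Exists.imp (fun _ h => h.symm) (Set.mem_range.mp (Cardinal.mem_range_aleph_iff.mpr (not_lt.mp hc)))), by
          have hspec := Classical.choose_spec (Exists.imp (fun _ h => h.symm) (Set.mem_range.mp (Cardinal.mem_range_aleph_iff.mpr (not_lt.mp hc))))
          rw [Set.mem_Iic]
          apply Cardinal.aleph_le_aleph.mp
          rw [← hspec, ← hβ₀]
          exact c.2⟩ with henc
      have hencinj : Function.Injective enc := by
        intro c d hcd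
        simp only [henc] at hcd
        apply Subtype.ext
        by_cases hc : c.1 < Cardinal.aleph0 <;> by_cases hd : d.1 < Cardinal.aleph0
        · rw [dif_pos hc, dif_pos hd] at hcd
          have h5 : c.1.toNat = d.1.toNat := congrArg ULift.down (Sum.inl.inj hcd)
          rw [← Cardinal.cast_toNat_of_lt_aleph0 hc, ← Cardinal.cast_toNat_of_lt_aleph0 hd, h5]
        · rw [dif_pos hc, dif_neg hd] at hcd
          simp at hcd
        · rw [dif_neg hc, dif_pos hd] at hcd
          simp at hcd
        · rw [dif_neg hc, dif_neg hd] at hcd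
          have h6 := Sum.inr.inj hcd
          rw [Subtype.mk.injEq] at h6
          have hs1 := Classical.choose_spec (Exists.imp (fun _ h => h.symm) (Set.mem_range.mp (Cardinal.mem_range_aleph_iff.mpr (not_lt.mp hc))))
          have hs2 := Classical.choose_spec (Exists.imp (fun _ h => h.symm) (Set.mem_range.mp (Cardinal.mem_range_aleph_iff.mpr (not_lt.mp hd))))
          rw [hs1, hs2, h6]
      have h1 := Cardinal.mk_le_of_injective hencinj
      refine h1.trans ?_
      rw [Cardinal.mk_sum]
      have hℕ : Cardinal.lift.{u+1} (Cardinal.mk (ULift.{u+1} ℕ)) ≤ Cardinal.lift.{u+1} μ := by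
        rw [Cardinal.mk_uLift, Cardinal.mk_nat]
        simp only [Cardinal.lift_aleph0]
        exact haleph0
      have hIic : Cardinal.mk (↥(Set.Iic β₀)) ≤ Cardinal.lift.{u+1} μ := by
        rw [← Order.Iio_succ, Ordinal.mk_Iio_ordinal]
        apply Cardinal.lift_le.mpr
        have hβlt : β₀ < (Order.succ μ).ord := by
          apply Cardinal.aleph_lt_aleph.mp
          rw [← hβ₀]
          exact hκ
        have hlim : Order.IsSuccLimit ((Order.succ μ).ord) :=
          Cardinal.isSuccLimit_ord (hμ.trans (Order.le_succ μ))
        have hsucclt : Order.succ β₀ < (Order.succ μ).ord := hlim.succ_lt hβlt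
        have hcard := Cardinal.lt_ord.mp hsucclt
        exact Order.lt_succ_iff.mp hcard
      have hIic' : Cardinal.lift.{u+1} (Cardinal.mk (↥(Set.Iic β₀))) ≤ Cardinal.lift.{u+1} μ := by
        rw [Cardinal.lift_id'.{u+1, u+1}]  -- might need adjusting
        exact hIic
      calc Cardinal.lift.{u+1} (Cardinal.mk (ULift.{u+1} ℕ)) +
            Cardinal.lift.{u+1} (Cardinal.mk (↥(Set.Iic β₀)))
          ≤ Cardinal.lift.{u+1} μ + Cardinal.lift.{u+1} μ := add_le_add hℕ hIic'
        _ = Cardinal.lift.{u+1} μ := Cardinal.add_eq_self haleph0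
    · -- κ finite
      have hinj : Function.Injective
          (fun c : {c : Cardinal.{u} // c ≤ κ} => ULift.up.{u+1} c.1.toNat) := by
        intro c d hcd
        have hc : c.1 < Cardinal.aleph0 := lt_of_le_of_lt c.2 (not_le.mp hκω)
        have hd : d.1 < Cardinal.aleph0 := lt_of_le_of_lt d.2 (not_le.mp hκω)
        apply Subtype.ext
        have h5 : c.1.toNat = d.1.toNat := congrArg ULift.down hcd
        rw [← Cardinal.cast_toNat_of_lt_aleph0 hc, ← Cardinal.cast_toNat_of_lt_aleph0 hd, h5]
      have h1 := Cardinal.mk_le_of_injective hinj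
      refine h1.trans ?_
      rw [Cardinal.mk_uLift, Cardinal.mk_nat]
      simpa only [Cardinal.lift_aleph0] using haleph0
  -- assemble the bound on the target type
  have hFs : Cardinal.mk (Finset ({c : Cardinal.{u} // c ≤ κ} ×
      ULift.{u+1} (Finset (Quotient (CardQuotAux.QS le hrefl htrans))))) ≤ Cardinal.lift.{u+1} μ := by
    have haleph0 : Cardinal.aleph0 ≤ Cardinal.lift.{u+1} μ := by
      rw [← Cardinal.lift_aleph0.{u+1, u}]
      exact Cardinal.lift_le.mpr hμ
    have hpair : Cardinal.mk ({c : Cardinal.{u} // c ≤ κ} × ULift.{u+1} (Finset (Quotient (CardQuotAux.QS le hrefl htrans)))) ≤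
        Cardinal.lift.{u+1} μ := by
      rw [Cardinal.mk_prod]
      have h1 : Cardinal.lift.{u+1} (Cardinal.mk {c : Cardinal.{u} // c ≤ κ}) ≤
          Cardinal.lift.{u+1} μ := by
        rw [Cardinal.lift_id'.{u+1, u+1}]
        exact hCd
      have h2 : Cardinal.lift.{u+1} (Cardinal.mk (ULift.{u+1} (Finset (Quotient (CardQuotAux.QS le hrefl htrans))))) ≤
          Cardinal.lift.{u+1} μ := by
        rw [Cardinal.lift_id'.{u+1, u+1}, Cardinal.mk_uLift]
        exact Cardinal.lift_le.mpr hFinsetQ'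
      calc Cardinal.lift.{u+1} (Cardinal.mk {c : Cardinal.{u} // c ≤ κ}) *
            Cardinal.lift.{u+1} (Cardinal.mk (ULift.{u+1} (Finset (Quotient (CardQuotAux.QS le hrefl htrans)))))
          ≤ Cardinal.lift.{u+1} μ * Cardinal.lift.{u+1} μ := mul_le_mul' h1 h2
        _ = Cardinal.lift.{u+1} μ := Cardinal.mul_eq_self haleph0
    have h1 : Cardinal.mk (Finset ({c : Cardinal.{u} // c ≤ κ} × ULift.{u+1} (Finset (Quotient (CardQuotAux.QS le hrefl htrans))))) ≤
        Cardinal.mk (List ({c : Cardinal.{u} // c ≤ κ} × ULift.{u+1} (Finset (Quotient (CardQuotAux.QS le hrefl htrans))))) :=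
      le_trans (Cardinal.mk_le_of_injective Finset.val_injective) Cardinal.mk_quot_le
    have hNE : Nonempty ({c : Cardinal.{u} // c ≤ κ} × ULift.{u+1} (Finset (Quotient (CardQuotAux.QS le hrefl htrans)))) :=
      ⟨⟨⟨0, zero_le⟩, ULift.up ∅⟩⟩
    have h2 := Cardinal.mk_list_eq_max_mk_aleph0
      ({c : Cardinal.{u} // c ≤ κ} × ULift.{u+1} (Finset (Quotient (CardQuotAux.QS le hrefl htrans))))
    rw [h2] at h1
    exact h1.trans (sup_le hpair haleph0)
  have hfinal := Cardinal.lift_mk_le'.mpr ⟨⟨Φ, hΦinj⟩⟩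
  rw [Cardinal.lift_id'.{u, u+1}] at hfinal
  exact Cardinal.lift_le.mp (hfinal.trans hFs)
end

section
/- Let μ be an infinite cardinal and Q a quasi-order with |Q|_≡ = μ such that P_{≤κ}(Q) is well-quasi-ordered under the domination order, where κ is a cardinal with κ < ℵ_{μ⁺}. Then |P_{≤κ}(Q)|_≡ ≤ μ, i.e. the quotient of P_{≤κ}(Q) under the equivalence A ≡ B (meaning A ≤ B and B ≤ A in the domination order) has cardinality at most μ. -/
universe u v

namespace CardQuotAux

open Cardinal Set Ordinal

/-- well-quasi-order property for a relation -/
def Wqo {α : Type v} (r : α → α → Prop) : Prop :=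
  ∀ f : ℕ → α, ∃ n m : ℕ, n < m ∧ r (f n) (f m)

theorem dom_refl {Q : Type u} {le : Q → Q → Prop} (hrefl : Reflexive le) (A : Set Q) :
    Dominates le A A :=
  ⟨id, fun _ _ h => h, fun a => hrefl a.1⟩

theorem dom_trans {Q : Type u} {le : Q → Q → Prop} (htrans : Transitive le) {A B C : Set Q}
    (h1 : Dominates le A B) (h2 : Dominates le B C) : Dominates le A C := by
  obtain ⟨f, hf, hf2⟩ := h1
  obtain ⟨g, hg, hg2⟩ := h2
  exact ⟨g ∘ f, hg.comp hf, fun a => htrans (hf2 a) (hg2 (f a))⟩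

/-- upward closed set -/
def IsUp {Q : Type u} (le : Q → Q → Prop) (U : Set Q) : Prop :=
  ∀ ⦃a b⦄, a ∈ U → le a b → b ∈ U

theorem mk_inter_le_of_dom {Q : Type u} {le : Q → Q → Prop} {A B : Set Q}
    (hdom : Dominates le A B) {U : Set Q} (hU : IsUp le U) :
    #(A ∩ U : Set Q) ≤ #(B ∩ U : Set Q) := by
  obtain ⟨f, hf, hf2⟩ := hdom
  refine mk_le_of_injective (f := fun x : (A ∩ U : Set Q) =>
    (⟨(f ⟨x.1, x.2.1⟩).1, (f ⟨x.1, x.2.1⟩).2, hU x.2.2 (hf2 ⟨x.1, x.2.1⟩)⟩ : (B ∩ U : Set Q))) ?_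
  intro x y hxy
  simp only [Subtype.mk.injEq] at hxy
  have h3 : (⟨x.1, x.2.1⟩ : A) = ⟨y.1, y.2.1⟩ := hf (Subtype.ext (by have h0 := congrArg Subtype.val hxy; exact h0))
  simp only [Subtype.mk.injEq] at h3
  exact Subtype.ext h3

theorem Wqo.strict_wf {α : Type v} {r : α → α → Prop} (htrans : Transitive r) (hr : Wqo r) :
    WellFounded (fun a b => r a b ∧ ¬ r b a) := by
  set s := fun a b => r a b ∧ ¬ r b a with hs
  by_contra hwf
  have hex : ∃ a, ¬ Acc s a := by
    by_contra h
    push_neg at h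
    exact hwf ⟨h⟩
  obtain ⟨a0, ha0⟩ := hex
  have step : ∀ a : {a // ¬ Acc s a}, ∃ b : {a // ¬ Acc s a}, s b.1 a.1 := by
    intro a
    by_contra h
    push_neg at h
    apply a.2
    constructor
    intro b hb
    by_contra hb'
    exact h ⟨b, hb'⟩ hb
  choose nxt hnxt using step
  let f : ℕ → {a // ¬ Acc s a} := fun n => nxt^[n] ⟨a0, ha0⟩
  have hdesc : ∀ n, s (f (n + 1)).1 (f n).1 := by
    intro n
    have : f (n + 1) = nxt (f n) := Function.iterate_succ_apply' _ _ _
    rw [this]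
    exact hnxt (f n)
  have hdown : ∀ m n, n < m → r (f m).1 (f n).1 := by
    intro m
    induction m with
    | zero => intro n hn; omega
    | succ m ih =>
      intro n hn
      rcases Nat.lt_succ_iff_lt_or_eq.mp hn with h | h
      · exact htrans (hdesc m).1 (ih n h)
      · subst h; exact (hdesc n).1
  obtain ⟨n, m, hnm, hrel⟩ := hr fun n => (f n).1
  rcases Nat.lt_iff_add_one_le.mp hnm |>.lt_or_eq with h | h
  · exact (hdesc n).2 (htrans hrel (hdown m (n + 1) h))
  · rw [← h] at hrel
    exact (hdesc n).2 hrel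

section Q
variable {Q : Type u} {le : Q → Q → Prop}

theorem exists_max_upset (hQw : Wqo le) (F : Set (Set Q)) (hne : F.Nonempty)
    (hup : ∀ U ∈ F, IsUp le U) (hu : ∀ U ∈ F, ∀ V ∈ F, U ∪ V ∈ F) :
    ∃ M ∈ F, ∀ U ∈ F, U ⊆ M := by
  by_contra h
  push_neg at h
  have step : ∀ M : F, ∃ N : F, M.1 ⊆ N.1 ∧ ∃ q, q ∈ N.1 ∧ q ∉ M.1 := by
    intro M
    obtain ⟨U, hU, hsub⟩ := h M.1 M.2
    obtain ⟨q, hq, hq2⟩ := Set.not_subset.mp hsub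
    exact ⟨⟨M.1 ∪ U, hu _ M.2 _ hU⟩, Set.subset_union_left, q, Or.inr hq, hq2⟩
  choose nxt hsub hexq using step
  choose qf hq1 hq2 using hexq
  obtain ⟨M0, hM0⟩ := hne
  let seq : ℕ → F := fun n => nxt^[n] ⟨M0, hM0⟩
  have hseqsucc : ∀ n, seq (n + 1) = nxt (seq n) := fun n =>
    Function.iterate_succ_apply' _ _ _
  have hmono : ∀ n m, n ≤ m → (seq n).1 ⊆ (seq m).1 := by
    intro n m hnm
    induction hnm with
    | refl => exact fun _ h => h
    | step _ ih =>
      rename_i k hk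
      rw [hseqsucc k]
      exact fun x hx => hsub (seq k) (ih hx)
  obtain ⟨n, m, hnm, hrel⟩ := hQw fun n => qf (seq n)
  have h1 : qf (seq n) ∈ (seq m).1 := by
    have : qf (seq n) ∈ (seq (n + 1)).1 := by rw [hseqsucc n]; exact hq1 (seq n)
    exact hmono (n + 1) m hnm this
  have h2 : qf (seq m) ∈ (seq m).1 := hup _ (seq m).2 h1 hrel
  exact hq2 (seq m) h2

theorem exists_maxV (hQw : Wqo le) (X : Set Q) {ν : Cardinal.{u}} (hν : ℵ₀ ≤ ν) :
    ∃ V, IsUp le V ∧ #(X ∩ V : Set Q) < ν ∧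
      ∀ U, IsUp le U → #(X ∩ U : Set Q) < ν → U ⊆ V := by
  have hne : (∅ : Set Q) ∈ {U | IsUp le U ∧ #(X ∩ U : Set Q) < ν} := by
    constructor
    · intro a b ha _; exact absurd ha (Set.notMem_empty a)
    · have : (X ∩ ∅ : Set Q) = ∅ := Set.inter_empty X
      rw [this]
      simpa using lt_of_lt_of_le aleph0_pos hν
  have hcl : ∀ U ∈ {U | IsUp le U ∧ #(X ∩ U : Set Q) < ν},
      ∀ V ∈ {U | IsUp le U ∧ #(X ∩ U : Set Q) < ν},
      U ∪ V ∈ {U | IsUp le U ∧ #(X ∩ U : Set Q) < ν} := by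
    rintro U ⟨hU1, hU2⟩ V ⟨hV1, hV2⟩
    constructor
    · intro a b ha hab
      rcases ha with h | h
      · exact Or.inl (hU1 h hab)
      · exact Or.inr (hV1 h hab)
    · have : (X ∩ (U ∪ V) : Set Q) = (X ∩ U) ∪ (X ∩ V) := Set.inter_union_distrib_left X U V
      rw [this]
      exact lt_of_le_of_lt (mk_union_le _ _) (Cardinal.add_lt_of_lt hν hU2 hV2)
  obtain ⟨M, hM, hmax⟩ := exists_max_upset hQw {U | IsUp le U ∧ #(X ∩ U : Set Q) < ν}
    ⟨∅, hne⟩ (fun U hU => hU.1) hcl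
  exact ⟨M, hM.1, hM.2, fun U h1 h2 => hmax U ⟨h1, h2⟩⟩

/-- Finite Hall's theorem adapted to our setting. -/
theorem hall_finite (htrans : Transitive le) {X Y₀ : Set Q} (hY₀ : Y₀.Finite)
    (hN : ∀ y ∈ Y₀, (X ∩ {b | le y b}).Finite)
    (hhall : ∀ S : Set Q, S ⊆ Y₀ → #S ≤ #(X ∩ {b | ∃ a ∈ S, le a b} : Set Q)) :
    ∃ g : Q → Q, Set.InjOn g Y₀ ∧ ∀ y ∈ Y₀, g y ∈ X ∧ le y (g y) := by
  classical
  haveI : Finite ↥Y₀ := hY₀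
  set t : ↥Y₀ → Finset Q := fun y => (hN y.1 y.2).toFinset with ht
  have hcond : ∀ s : Finset ↥Y₀, s.card ≤ (s.biUnion t).card := by
    intro s
    set S : Set Q := ↑(s.image Subtype.val) with hS
    have hSsub : S ⊆ Y₀ := by
      intro q hq
      simp only [hS, Finset.coe_image, Set.mem_image, Finset.mem_coe] at hq
      obtain ⟨y, _, rfl⟩ := hq
      exact y.2
    have heq : (X ∩ {b | ∃ a ∈ S, le a b} : Set Q) = ↑(s.biUnion t) := by
      ext q
      simp only [Set.mem_inter_iff, Set.mem_setOf_eq, Finset.coe_biUnion, Set.mem_iUnion,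
        Finset.mem_coe, Set.Finite.mem_toFinset, ht, hS, Finset.coe_image, Set.mem_image]
      constructor
      · rintro ⟨hqX, a, ⟨⟨y, hy, rfl⟩, hle⟩⟩
        exact ⟨y, hy, hqX, hle⟩
      · rintro ⟨y, hy, hqX, hle⟩
        exact ⟨hqX, y.1, ⟨y, hy, rfl⟩, hle⟩
    have h1 : #S ≤ #(X ∩ {b | ∃ a ∈ S, le a b} : Set Q) := hhall S hSsub
    rw [heq] at h1
    have h2 : #S = ((s.image Subtype.val).card : Cardinal) := by
      rw [hS]; exact mk_coe_finset
    have h3 : #(↑(s.biUnion t) : Set Q) = ((s.biUnion t).card : Cardinal) := mk_coe_finset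
    rw [h2, h3] at h1
    have h4 : (s.image Subtype.val).card = s.card :=
      Finset.card_image_of_injective s Subtype.val_injective
    rw [h4] at h1
    exact_mod_cast h1
  obtain ⟨f, hfinj, hft⟩ := (Finset.all_card_le_biUnion_card_iff_existsInjective' t).mp hcond
  refine ⟨fun q => if h : q ∈ Y₀ then f ⟨q, h⟩ else q, ?_, ?_⟩
  · intro a ha b hb hab
    simp only [dif_pos ha, dif_pos hb] at hab
    exact congrArg Subtype.val (hfinj hab)
  · intro y hy
    simp only [dif_pos hy]
    have := hft ⟨y, hy⟩
    simp only [ht, Set.Finite.mem_toFinset, Set.mem_inter_iff, Set.mem_setOf_eq] at this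
    exact this

/-- The infinite Hall-type theorem for wqo: if every upward closed set meets `Y` in at
most as many elements as it meets `X`, then `Y` is dominated by `X`. -/
theorem hall_s8 (hrefl : Reflexive le) (htrans : Transitive le) (hQw : Wqo le)
    (X Y : Set Q) (hc : ∀ U, IsUp le U → #(Y ∩ U : Set Q) ≤ #(X ∩ U : Set Q)) :
    Dominates le Y X := by
  classical
  set up : Q → Set Q := fun y => {b | le y b} with hup
  have upIsUp : ∀ y, IsUp le (up y) := fun y a b ha hab => htrans ha hab
  have upself : ∀ y, y ∈ up y := fun y => hrefl y
  choose V hVup hVlt hVmax using fun (ν : Cardinal.{u}) (hν : ℵ₀ ≤ ν) =>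
    exists_maxV hQw X hν
  set U₀ : Set Q := V ℵ₀ le_rfl with hU₀
  have hXU₀fin : (X ∩ U₀).Finite := lt_aleph0_iff_set_finite.mp (hVlt ℵ₀ le_rfl)
  have hY₀fin : (Y ∩ U₀).Finite := lt_aleph0_iff_set_finite.mp
    (lt_of_le_of_lt (hc U₀ (hVup ℵ₀ le_rfl)) (hVlt ℵ₀ le_rfl))
  have hNfin : ∀ y ∈ Y ∩ U₀, (X ∩ up y).Finite := by
    intro y hy
    apply hXU₀fin.subset
    intro b hb
    exact ⟨hb.1, hVup ℵ₀ le_rfl hy.2 hb.2⟩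
  have hhall0 : ∀ S : Set Q, S ⊆ Y ∩ U₀ → #S ≤ #(X ∩ {b | ∃ a ∈ S, le a b} : Set Q) := by
    intro S hS
    have hupS : IsUp le {b | ∃ a ∈ S, le a b} := by
      rintro a b ⟨a', ha', haa⟩ hab
      exact ⟨a', ha', htrans haa hab⟩
    have h1 : S ⊆ Y ∩ {b | ∃ a ∈ S, le a b} := fun a ha => ⟨(hS ha).1, a, ha, hrefl a⟩
    exact le_trans (mk_le_mk_of_subset h1) (hc _ hupS)
  obtain ⟨g₀, hg₀inj, hg₀mem⟩ := hall_finite htrans hY₀fin hNfin hhall0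
  -- the infinite part
  set Y' : Set Q := Y \ U₀ with hY'
  let c : Q → Cardinal.{u} := fun y => #(X ∩ up y : Set Q)
  have hcY' : ∀ y ∈ Y', ℵ₀ ≤ c y := by
    intro y hy
    by_contra h
    push_neg at h
    exact hy.2 (hVmax ℵ₀ le_rfl (up y) (upIsUp y) h (upself y))
  have hU₀subV : ∀ (ν) (hν : ℵ₀ ≤ ν), U₀ ⊆ V ν hν := fun ν hν =>
    hVmax ν hν U₀ (hVup ℵ₀ le_rfl) (lt_of_lt_of_le (hVlt ℵ₀ le_rfl) hν)
  -- levels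
  let L : Cardinal.{u} → Set Q := fun ν => {z | z ∈ Y' ∧ c z = ν}
  have hLcard : ∀ (ν : Cardinal.{u}), ℵ₀ ≤ ν → #(L ν) ≤ ν := by
    intro ν hν
    have hν' : ℵ₀ ≤ Order.succ ν := le_trans hν (Order.le_succ ν)
    have hsub : L ν ⊆ Y ∩ V (Order.succ ν) hν' := by
      intro z hz
      refine ⟨hz.1.1, ?_⟩
      have h1 : #(X ∩ up z : Set Q) < Order.succ ν := by
        have : c z = ν := hz.2
        calc #(X ∩ up z : Set Q) = ν := this
        _ < Order.succ ν := Order.lt_succ ν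
      exact hVmax _ hν' (up z) (upIsUp z) h1 (upself z)
    refine le_trans (mk_le_mk_of_subset hsub) ?_
    exact Order.lt_succ_iff.mp (lt_of_le_of_lt (hc _ (hVup _ hν')) (hVlt _ hν'))
  -- well-orders on levels
  choose rr rwo rtype using fun ν : Cardinal.{u} => Cardinal.ord_eq ↥(L ν)
  let ι : ∀ y, y ∈ Y' → Ordinal.{u} := fun y h =>
    @Ordinal.typein _ (rr (c y)) (rwo (c y)) ⟨y, h, rfl⟩
  have ι_def : ∀ (ν) (y) (h : y ∈ Y') (hy : c y = ν),
      ι y h = @Ordinal.typein _ (rr ν) (rwo ν) ⟨y, h, hy⟩ := by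
    intro ν y h hy
    subst hy
    rfl
  let ψ : ↥Y' → Cardinal.{u} × Ordinal.{u} := fun a => (c a.1, ι a.1 a.2)
  let prec : ↥Y' → ↥Y' → Prop := InvImage (Prod.Lex (· < ·) (· < ·)) ψ
  have precwf : WellFounded prec :=
    InvImage.wf ψ (WellFounded.prod_lex Cardinal.lt_wf Ordinal.lt_wf)
  have prec_iff : ∀ a b : ↥Y', prec a b ↔
      (c a.1 < c b.1 ∨ (c a.1 = c b.1 ∧ ι a.1 a.2 < ι b.1 b.2)) := by
    intro a b
    exact Prod.lex_def
  have ψinj : Function.Injective ψ := by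
    intro a b hab
    have h1 : c a.1 = c b.1 := congrArg Prod.fst hab
    have h2 : ι a.1 a.2 = ι b.1 b.2 := congrArg Prod.snd hab
    rw [ι_def (c b.1) a.1 a.2 h1, ι_def (c b.1) b.1 b.2 rfl] at h2
    letI := rwo (c b.1)
    have h3 := Ordinal.typein_injective (rr (c b.1)) h2
    simp only [Subtype.mk.injEq] at h3
    exact Subtype.ext h3
  have prectot : ∀ a b : ↥Y', a ≠ b → prec a b ∨ prec b a := by
    intro a b hab
    rcases lt_trichotomy (c a.1) (c b.1) with h | h | h
    · exact Or.inl ((prec_iff a b).mpr (Or.inl h))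
    · rcases lt_trichotomy (ι a.1 a.2) (ι b.1 b.2) with h' | h' | h'
      · exact Or.inl ((prec_iff a b).mpr (Or.inr ⟨h, h'⟩))
      · exact absurd (ψinj (Prod.ext_iff.mpr ⟨h, h'⟩)) hab
      · exact Or.inr ((prec_iff b a).mpr (Or.inr ⟨h.symm, h'⟩))
    · exact Or.inr ((prec_iff b a).mpr (Or.inl h))
  -- predecessors are few
  have hpred : ∀ y : ↥Y', #{z : ↥Y' | prec z y} < c y.1 := by
    intro y
    have hν : ℵ₀ ≤ c y.1 := hcY' y.1 y.2
    have hsplit : {z : ↥Y' | prec z y} ⊆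
        {z : ↥Y' | c z.1 < c y.1} ∪ {z : ↥Y' | c z.1 = c y.1 ∧ ι z.1 z.2 < ι y.1 y.2} := by
      intro z hz
      rcases (prec_iff z y).mp hz with h | h
      · exact Or.inl h
      · exact Or.inr h
    have hS1 : #({z : ↥Y' | c z.1 < c y.1}) ≤ #(Y ∩ V (c y.1) hν : Set Q) := by
      refine mk_le_of_injective (f := fun z : {z : ↥Y' | c z.1 < c y.1} =>
        (⟨z.1.1, z.1.2.1, hVmax _ hν (up z.1.1) (upIsUp _) z.2 (upself z.1.1)⟩ :
          (Y ∩ V (c y.1) hν : Set Q))) ?_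
      intro w1 w2 h
      have h' : (w1.1.1 : Q) = w2.1.1 :=
        congrArg (fun t : (Y ∩ V (c y.1) hν : Set Q) => (t : Q)) h
      exact Subtype.ext (Subtype.ext h')
    have hS1' : #({z : ↥Y' | c z.1 < c y.1}) < c y.1 :=
      lt_of_le_of_lt (le_trans hS1 (hc _ (hVup _ hν))) (hVlt _ hν)
    have hS2 : #({z : ↥Y' | c z.1 = c y.1 ∧ ι z.1 z.2 < ι y.1 y.2}) < c y.1 := by
      have key2 : ∀ z : {z : ↥Y' | c z.1 = c y.1 ∧ ι z.1 z.2 < ι y.1 y.2},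
          rr (c y.1) ⟨z.1.1, z.1.2, z.2.1⟩ ⟨y.1, y.2, rfl⟩ := by
        intro z
        have h1 : ι z.1.1 z.1.2 = @Ordinal.typein _ (rr (c y.1)) (rwo (c y.1)) ⟨z.1.1, z.1.2, z.2.1⟩ :=
          ι_def (c y.1) z.1.1 z.1.2 z.2.1
        have h2 : ι y.1 y.2 = @Ordinal.typein _ (rr (c y.1)) (rwo (c y.1)) ⟨y.1, y.2, rfl⟩ :=
          ι_def (c y.1) y.1 y.2 rfl
        have h3 := z.2.2
        exact (@Ordinal.typein_lt_typein _ (rr (c y.1)) (rwo (c y.1)) _ _).mp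
          (lt_of_eq_of_lt h1.symm (lt_of_lt_of_eq h3 h2))
      have hinj : #({z : ↥Y' | c z.1 = c y.1 ∧ ι z.1 z.2 < ι y.1 y.2}) ≤
          #{w : ↥(L (c y.1)) // rr (c y.1) w ⟨y.1, y.2, rfl⟩} := by
        refine mk_le_of_injective (f := fun z => ⟨⟨z.1.1, z.1.2, z.2.1⟩, key2 z⟩) ?_
        intro w1 w2 h
        have := congrArg (fun t => (t.1 : Q)) h
        exact Subtype.ext (Subtype.ext this)
      have hcard : #{w : ↥(L (c y.1)) // rr (c y.1) w ⟨y.1, y.2, rfl⟩} < c y.1 := by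
        have h1 : (@Ordinal.typein _ (rr (c y.1)) (rwo (c y.1)) ⟨y.1, y.2, rfl⟩).card =
            #{w : ↥(L (c y.1)) // rr (c y.1) w ⟨y.1, y.2, rfl⟩} :=
          @Ordinal.card_typein _ (rr (c y.1)) (rwo (c y.1)) _
        have h2 : @Ordinal.typein _ (rr (c y.1)) (rwo (c y.1)) ⟨y.1, y.2, rfl⟩ <
            Ordinal.type (rr (c y.1)) := Ordinal.typein_lt_type _ _
        rw [← rtype (c y.1)] at h2
        have h3 := Cardinal.lt_ord.mp h2
        rw [h1] at h3
        exact lt_of_lt_of_le h3 (hLcard (c y.1) hν)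
      exact lt_of_le_of_lt hinj hcard
    calc #({z : ↥Y' | prec z y}) ≤
        #(({z : ↥Y' | c z.1 < c y.1} ∪ {z : ↥Y' | c z.1 = c y.1 ∧ ι z.1 z.2 < ι y.1 y.2} : Set ↥Y')) :=
          mk_le_mk_of_subset hsplit
      _ ≤ #({z : ↥Y' | c z.1 < c y.1}) + #({z : ↥Y' | c z.1 = c y.1 ∧ ι z.1 z.2 < ι y.1 y.2}) :=
          mk_union_le _ _
      _ < c y.1 := Cardinal.add_lt_of_lt hν hS1' hS2
  -- greedy recursion along prec
  have key : ∀ (y : ↥Y') (rec : ∀ z : ↥Y', prec z y → Q),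
      ((X ∩ up y.1) \ (V (c y.1) (hcY' y.1 y.2) ∪ g₀ '' (Y ∩ U₀) ∪
        {w | ∃ z : ↥Y', ∃ hz : prec z y, rec z hz = w})).Nonempty := by
    intro y rec
    by_contra hemp
    rw [Set.not_nonempty_iff_eq_empty, Set.diff_eq_empty] at hemp
    have hν : ℵ₀ ≤ c y.1 := hcY' y.1 y.2
    have himg : #({w | ∃ z : ↥Y', ∃ hz : prec z y, rec z hz = w} : Set Q) < c y.1 := by
      have heq : ({w | ∃ z : ↥Y', ∃ hz : prec z y, rec z hz = w} : Set Q) =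
          Set.range (fun p : {z : ↥Y' // prec z y} => rec p.1 p.2) := by
        ext w
        constructor
        · rintro ⟨z, hz, rfl⟩; exact ⟨⟨z, hz⟩, rfl⟩
        · rintro ⟨p, rfl⟩; exact ⟨p.1, p.2, rfl⟩
      rw [heq]
      exact lt_of_le_of_lt mk_range_le (hpred y)
    have hG₀ : #((g₀ '' (Y ∩ U₀)) : Set Q) < c y.1 :=
      lt_of_lt_of_le (hY₀fin.image g₀).lt_aleph0 hν
    have hVc : #(X ∩ V (c y.1) (hcY' y.1 y.2) : Set Q) < c y.1 := hVlt _ _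
    have hsub2 : (X ∩ up y.1 : Set Q) ⊆
        (X ∩ V (c y.1) (hcY' y.1 y.2)) ∪ ((g₀ '' (Y ∩ U₀)) ∪
          {w | ∃ z : ↥Y', ∃ hz : prec z y, rec z hz = w}) := by
      intro x hx
      rcases hemp hx with (h | h) | h
      · exact Or.inl ⟨hx.1, h⟩
      · exact Or.inr (Or.inl h)
      · exact Or.inr (Or.inr h)
    have hle : c y.1 ≤ #(X ∩ V (c y.1) (hcY' y.1 y.2) : Set Q) +
        (#((g₀ '' (Y ∩ U₀)) : Set Q) + #({w | ∃ z : ↥Y', ∃ hz : prec z y, rec z hz = w} : Set Q)) := by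
      calc c y.1 = #(X ∩ up y.1 : Set Q) := rfl
        _ ≤ #(((X ∩ V (c y.1) (hcY' y.1 y.2)) ∪ ((g₀ '' (Y ∩ U₀)) ∪
            {w | ∃ z : ↥Y', ∃ hz : prec z y, rec z hz = w}) : Set Q)) := mk_le_mk_of_subset hsub2
        _ ≤ _ := le_trans (mk_union_le _ _) (by
            exact add_le_add le_rfl (mk_union_le _ _))
    have : c y.1 < c y.1 :=
      lt_of_le_of_lt hle (Cardinal.add_lt_of_lt hν hVc (Cardinal.add_lt_of_lt hν hG₀ himg))
    exact lt_irrefl _ this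
  let g : ↥Y' → Q := precwf.fix (fun y rec => (key y rec).some)
  have gdef : ∀ y : ↥Y', g y = (key y (fun z _ => g z)).some := fun y =>
    precwf.fix_eq _ y
  have gmem : ∀ y : ↥Y', g y ∈ (X ∩ up y.1) \ (V (c y.1) (hcY' y.1 y.2) ∪ g₀ '' (Y ∩ U₀) ∪
      {w | ∃ z : ↥Y', ∃ hz : prec z y, g z = w}) := by
    intro y
    rw [gdef y]
    exact (key y (fun z _ => g z)).some_mem
  have ginj : Function.Injective g := by
    intro a b hab
    by_contra hne
    rcases prectot a b hne with h | h
    · exact (gmem b).2 (Or.inr ⟨a, h, hab⟩)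
    · exact (gmem a).2 (Or.inr ⟨b, h, hab.symm⟩)
  have gnotU₀ : ∀ y : ↥Y', g y ∉ U₀ := by
    intro y hy
    exact (gmem y).2 (Or.inl (Or.inl (hU₀subV (c y.1) (hcY' y.1 y.2) hy)))
  -- assemble
  refine ⟨fun a => if h : a.1 ∈ U₀ then ⟨g₀ a.1, (hg₀mem a.1 ⟨a.2, h⟩).1⟩
    else ⟨g ⟨a.1, a.2, h⟩, (gmem ⟨a.1, a.2, h⟩).1.1⟩, ?_, ?_⟩
  · intro a b hab
    by_cases ha : a.1 ∈ U₀ <;> by_cases hb : b.1 ∈ U₀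
    · simp only [dif_pos ha, dif_pos hb] at hab
      exact Subtype.ext (hg₀inj ⟨a.2, ha⟩ ⟨b.2, hb⟩ (congrArg Subtype.val hab))
    · simp only [dif_pos ha, dif_neg hb] at hab
      have h1 : g₀ a.1 = g ⟨b.1, b.2, hb⟩ := congrArg Subtype.val hab
      exact absurd (Or.inl (Or.inr ⟨a.1, ⟨a.2, ha⟩, h1⟩)) (gmem ⟨b.1, b.2, hb⟩).2
    · simp only [dif_neg ha, dif_pos hb] at hab
      have h1 : g₀ b.1 = g ⟨a.1, a.2, ha⟩ := (congrArg Subtype.val hab).symm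
      exact absurd (Or.inl (Or.inr ⟨b.1, ⟨b.2, hb⟩, h1⟩)) (gmem ⟨a.1, a.2, ha⟩).2
    · simp only [dif_neg ha, dif_neg hb] at hab
      have h1 : g ⟨a.1, a.2, ha⟩ = g ⟨b.1, b.2, hb⟩ := congrArg Subtype.val hab
      have h2 := ginj h1
      exact Subtype.ext (by have h3 := congrArg Subtype.val h2; exact h3)
  · intro a
    by_cases ha : a.1 ∈ U₀
    · simp only [dif_pos ha]
      exact (hg₀mem a.1 ⟨a.2, ha⟩).2
    · simp only [dif_neg ha]
      exact (gmem ⟨a.1, a.2, ha⟩).1.2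

/-- In a wqo, there are at most `max ℵ₀ |Q/≡|` upward closed sets. -/
theorem mk_upsets_le (hrefl : Reflexive le) (htrans : Transitive le) (hQw : Wqo le)
    [Infinite (Quot fun a b : Q => le a b ∧ le b a)] :
    #{U : Set Q // IsUp le U} ≤ #(Quot fun a b : Q => le a b ∧ le b a) := by
  classical
  set qm : Q → Quot (fun a b : Q => le a b ∧ le b a) := Quot.mk _ with hqm
  have hequiv : Equivalence (fun a b : Q => le a b ∧ le b a) := by
    constructor
    · exact fun a => ⟨hrefl a, hrefl a⟩
    · exact fun h => ⟨h.2, h.1⟩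
    · exact fun h1 h2 => ⟨htrans h1.1 h2.1, htrans h2.2 h1.2⟩
  have hqm_rel : ∀ a b, qm a = qm b → le a b ∧ le b a := by
    intro a b h
    exact hequiv.eqvGen_iff.mp (Quot.eqvGen_exact h)
  set Min : Set Q → Set Q := fun U => {a | a ∈ U ∧ ∀ b ∈ U, le b a → le a b} with hMin
  have swf : WellFounded (fun a b : Q => le a b ∧ ¬ le b a) := Wqo.strict_wf htrans hQw
  have hmin : ∀ U, IsUp le U → ∀ u ∈ U, ∃ m ∈ Min U, le m u := by
    intro U hU u hu
    set S : Set Q := {a | a ∈ U ∧ le a u} with hS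
    have hSne : S.Nonempty := ⟨u, hu, hrefl u⟩
    set m := swf.min S hSne with hm
    have hmS : m ∈ S := swf.min_mem S hSne
    refine ⟨m, ⟨hmS.1, ?_⟩, hmS.2⟩
    intro b hb hbm
    have hbS : b ∈ S := ⟨hb, htrans hbm hmS.2⟩
    have := swf.not_lt_min S hbS
    by_contra hmb
    exact this ⟨hbm, hmb⟩
  have hrecon : ∀ U, IsUp le U → U = {b | ∃ a, qm a ∈ qm '' Min U ∧ le a b} := by
    intro U hU
    ext b
    constructor
    · intro hb
      obtain ⟨m, hm, hmb⟩ := hmin U hU b hb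
      exact ⟨m, ⟨m, hm, rfl⟩, hmb⟩
    · rintro ⟨a, ⟨m, hmMin, hqm⟩, hab⟩
      have hrel := hqm_rel m a hqm
      have haU : a ∈ U := hU hmMin.1 hrel.1
      exact hU haU hab
  have hfin : ∀ U, IsUp le U → (qm '' Min U).Finite := by
    intro U hU
    by_contra hinf
    have hinf' : (qm '' Min U).Infinite := hinf
    obtain ⟨e⟩ : Nonempty (ℕ ↪ ↥(qm '' Min U)) := ⟨hinf'.natEmbedding _⟩
    have hrep : ∀ n : ℕ, ∃ m ∈ Min U, qm m = (e n).1 := by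
      intro n
      obtain ⟨m, hm, hqm⟩ := (e n).2
      exact ⟨m, hm, hqm⟩
    choose mf hmf hqmf using hrep
    obtain ⟨n, k, hnk, hle⟩ := hQw mf
    have h1 : le (mf k) (mf n) := (hmf k).2 (mf n) (hmf n).1 hle
    have h2 : qm (mf n) = qm (mf k) := Quot.sound ⟨hle, h1⟩
    have h3 : e n = e k := Subtype.ext (by rw [← hqmf n, ← hqmf k, h2])
    exact (Nat.ne_of_lt hnk) (e.injective h3)
  set J : {U : Set Q // IsUp le U} → Finset (Quot fun a b : Q => le a b ∧ le b a) :=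
    fun U => (hfin U.1 U.2).toFinset with hJ
  have hJinj : Function.Injective J := by
    intro U1 U2 h
    have himg : qm '' Min U1.1 = qm '' Min U2.1 :=
      (Set.Finite.toFinset_inj (hs := hfin U1.1 U1.2) (ht := hfin U2.1 U2.2)).mp h
    apply Subtype.ext
    rw [hrecon U1.1 U1.2, hrecon U2.1 U2.2, himg]
  calc #{U : Set Q // IsUp le U} ≤ #(Finset (Quot fun a b : Q => le a b ∧ le b a)) :=
        mk_le_of_injective hJinj
    _ = #(Quot fun a b : Q => le a b ∧ le b a) := mk_finset_of_infinite _

end Q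

/-- Coding the cardinals `≤ κ` into a type of size at most `μ`. -/
theorem exists_code {μ κ : Cardinal.{u}} (hμ : ℵ₀ ≤ μ)
    (hκ : κ < Cardinal.aleph (Order.succ μ).ord) :
    ∃ (T : Type u) (code : Cardinal.{u} → T), #T ≤ μ ∧
      ∀ c c', c ≤ κ → c' ≤ κ → code c = code c' → c = c' := by
  classical
  by_cases hfin : κ < ℵ₀
  · refine ⟨ULift ℕ, fun c => ⟨c.toNat⟩, ?_, ?_⟩
    · have : #(ULift.{u} ℕ) = ℵ₀ := mk_eq_aleph0 _
      rw [this]; exact hμ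
    · intro c c' hc hc' h
      have h1 : c = (c.toNat : Cardinal) :=
        (Cardinal.cast_toNat_of_lt_aleph0 (lt_of_le_of_lt hc hfin)).symm
      have h2 : c' = (c'.toNat : Cardinal) :=
        (Cardinal.cast_toNat_of_lt_aleph0 (lt_of_le_of_lt hc' hfin)).symm
      have h3 : c.toNat = c'.toNat := congrArg ULift.down h
      rw [h1, h2, h3]
  · push_neg at hfin
    obtain ⟨β₀, hβ₀⟩ : ∃ o, κ = Cardinal.aleph o :=
      let ⟨o, h⟩ := Cardinal.mem_range_aleph_iff.mpr hfin; ⟨o, h.symm⟩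
    have hβ₀lt : β₀ < (Order.succ μ).ord := by
      apply Cardinal.aleph_lt_aleph.mp
      rw [← hβ₀]
      exact hκ
    have hord_lim : Order.IsSuccLimit ((Order.succ μ : Cardinal.{u}).ord) :=
      Cardinal.isSuccLimit_ord (le_trans hμ (Order.le_succ μ))
    have hsucclt : Order.succ β₀ < (Order.succ μ : Cardinal.{u}).ord :=
      hord_lim.succ_lt hβ₀lt
    have htypeW := Ordinal.type_toType (Order.succ β₀ : Ordinal.{u})
    have hmkW : #((Order.succ β₀ : Ordinal.{u}).ToType) ≤ μ := by
      rw [Cardinal.mk_toType]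
      exact Order.lt_succ_iff.mp (Cardinal.lt_ord.mp hsucclt)
    have hidx : ∀ c : Cardinal.{u}, ¬ c < ℵ₀ → ∃ o, c = Cardinal.aleph o := fun c hc =>
      let ⟨o, h⟩ := Cardinal.mem_range_aleph_iff.mpr (not_lt.mp hc); ⟨o, h.symm⟩
    letI iwo : IsWellOrder (Order.succ β₀ : Ordinal.{u}).ToType
      ((· < ·) : (Order.succ β₀ : Ordinal.{u}).ToType →
        (Order.succ β₀ : Ordinal.{u}).ToType → Prop) := isWellOrder_lt
    have hidxlt : ∀ (c : Cardinal.{u}) (h : ¬ c < ℵ₀), c ≤ κ →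
        (hidx c h).choose < Ordinal.type ((· < ·) : (Order.succ β₀ : Ordinal.{u}).ToType →
          (Order.succ β₀ : Ordinal.{u}).ToType → Prop) := by
      intro c h hc
      rw [htypeW]
      apply Order.lt_succ_iff.mpr
      apply Cardinal.aleph_le_aleph.mp
      rw [← (hidx c h).choose_spec, ← hβ₀]
      exact hc
    refine ⟨(Order.succ β₀ : Ordinal.{u}).ToType ⊕ ULift ℕ, fun c =>
      if h : c < ℵ₀ then Sum.inr ⟨c.toNat⟩
      else if h2 : (hidx c h).choose < Ordinal.type ((· < ·) :
          (Order.succ β₀ : Ordinal.{u}).ToType → (Order.succ β₀ : Ordinal.{u}).ToType → Prop)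
        then Sum.inl (@Ordinal.enum _ _ iwo ⟨(hidx c h).choose, h2⟩)
        else Sum.inr ⟨0⟩, ?_, ?_⟩
    · have h1 : #((Order.succ β₀ : Ordinal.{u}).ToType ⊕ ULift ℕ) =
          #((Order.succ β₀ : Ordinal.{u}).ToType) + #(ULift.{u} ℕ) := by
        rw [Cardinal.mk_sum, Cardinal.lift_id, Cardinal.lift_id]
      rw [h1, mk_eq_aleph0 (ULift.{u} ℕ)]
      calc #((Order.succ β₀ : Ordinal.{u}).ToType) + ℵ₀ ≤ μ + μ := add_le_add hmkW hμ
        _ = μ := Cardinal.add_eq_self hμ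
    · intro c c' hc hc' h
      by_cases h1 : c < ℵ₀ <;> by_cases h2 : c' < ℵ₀
      · simp only [dif_pos h1, dif_pos h2] at h
        have h3 : c.toNat = c'.toNat := congrArg (fun t => match t with
          | Sum.inr n => n.down
          | Sum.inl _ => 0) h
        rw [← Cardinal.cast_toNat_of_lt_aleph0 h1, ← Cardinal.cast_toNat_of_lt_aleph0 h2, h3]
      · exfalso
        simp only [dif_pos h1, dif_neg h2, dif_pos (hidxlt c' h2 hc')] at h
        exact Sum.inr_ne_inl h
      · exfalso
        simp only [dif_neg h1, dif_pos h2, dif_pos (hidxlt c h1 hc)] at h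
        exact Sum.inl_ne_inr h
      · simp only [dif_neg h1, dif_neg h2, dif_pos (hidxlt c h1 hc),
          dif_pos (hidxlt c' h2 hc')] at h
        have h3 := Sum.inl_injective h
        have h4 := Ordinal.enum_inj.mp h3
        have h5 : (hidx c h1).choose = (hidx c' h2).choose := congrArg Subtype.val h4
        rw [(hidx c h1).choose_spec, (hidx c' h2).choose_spec, h5]

section Q2
variable {Q : Type u} {le : Q → Q → Prop}

/-- There is no strictly increasing domination chain of length `μ⁺`. -/
theorem no_long_chain (hrefl : Reflexive le) (htrans : Transitive le) (hQw : Wqo le)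
    {μ κ : Cardinal.{u}} (hμ : ℵ₀ ≤ μ)
    (hQQ : #(Quot fun a b : Q => le a b ∧ le b a) = μ)
    (hκ : κ < Cardinal.aleph (Order.succ μ).ord)
    (cseq : (Order.succ μ : Cardinal.{u}).ord.ToType → Set Q)
    (hbd : ∀ ξ, #(cseq ξ) ≤ κ)
    (hmono : ∀ ⦃ξ η⦄, ξ < η → Dominates le (cseq ξ) (cseq η))
    (hstrict : ∀ ⦃ξ η⦄, ξ < η → ¬ Dominates le (cseq η) (cseq ξ)) : False := by
  classical
  haveI : Infinite (Quot fun a b : Q => le a b ∧ le b a) := by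
    rw [Cardinal.infinite_iff, hQQ]
    exact hμ
  have hmkθ : #((Order.succ μ : Cardinal.{u}).ord.ToType) = Order.succ μ := by
    rw [Cardinal.mk_toType, Cardinal.card_ord]
  haveI : NoMaxOrder ((Order.succ μ : Cardinal.{u}).ord.ToType) :=
    Cardinal.noMaxOrder (le_trans hμ (Order.le_succ μ))
  have θwf : WellFounded ((· < ·) : (Order.succ μ : Cardinal.{u}).ord.ToType →
      (Order.succ μ : Cardinal.{u}).ord.ToType → Prop) :=
    wellFounded_lt
  have hSuccEx : ∀ ξ : (Order.succ μ : Cardinal.{u}).ord.ToType, ({η | ξ < η}).Nonempty :=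
    fun ξ => exists_gt ξ
  let Succ : (Order.succ μ : Cardinal.{u}).ord.ToType →
      (Order.succ μ : Cardinal.{u}).ord.ToType :=
    fun ξ => θwf.min {η | ξ < η} (hSuccEx ξ)
  have hSucclt : ∀ ξ, ξ < Succ ξ := fun ξ => θwf.min_mem {η | ξ < η} (hSuccEx ξ)
  have hSuccle : ∀ ξ η, ξ < η → Succ ξ ≤ η := by
    intro ξ η h
    by_contra h'
    exact θwf.not_lt_min {η | ξ < η} h (not_le.mp h')
  have hwit : ∀ ξ, ∃ U, IsUp le U ∧
      #(cseq ξ ∩ U : Set Q) < #(cseq (Succ ξ) ∩ U : Set Q) := by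
    intro ξ
    by_contra h
    push_neg at h
    exact hstrict (hSucclt ξ) (hall_s8 hrefl htrans hQw (cseq ξ) (cseq (Succ ξ))
      (fun U hU => h U hU))
  choose Uf hUup hUlt using hwit
  obtain ⟨T, code, hT, hcode⟩ := exists_code hμ hκ
  have hcount_le : ∀ ξ (U : Set Q), #(cseq ξ ∩ U : Set Q) ≤ κ := fun ξ U =>
    le_trans (mk_le_mk_of_subset Set.inter_subset_left) (hbd ξ)
  have main : ∀ ξ η, ξ < η → Uf ξ = Uf η →
      #(cseq ξ ∩ Uf ξ : Set Q) = #(cseq η ∩ Uf η : Set Q) → False := by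
    intro ξ η hlt hU hcnt
    have h1 : #(cseq ξ ∩ Uf ξ : Set Q) < #(cseq (Succ ξ) ∩ Uf ξ : Set Q) := hUlt ξ
    have h2 : #(cseq (Succ ξ) ∩ Uf ξ : Set Q) ≤ #(cseq η ∩ Uf ξ : Set Q) := by
      rcases eq_or_lt_of_le (hSuccle ξ η hlt) with he | hlt'
      · rw [he]
      · exact mk_inter_le_of_dom (hmono hlt') (hUup ξ)
    have h4 : #(cseq η ∩ Uf ξ : Set Q) = #(cseq η ∩ Uf η : Set Q) := by rw [hU]
    have h5 : #(cseq ξ ∩ Uf ξ : Set Q) < #(cseq η ∩ Uf η : Set Q) :=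
      lt_of_lt_of_le (lt_of_lt_of_le h1 h2) (le_of_eq h4)
    exact absurd hcnt (ne_of_lt h5)
  let Φ : (Order.succ μ : Cardinal.{u}).ord.ToType → {U : Set Q // IsUp le U} × T :=
    fun ξ => (⟨Uf ξ, hUup ξ⟩, code (#(cseq ξ ∩ Uf ξ : Set Q)))
  have hΦinj : Function.Injective Φ := by
    intro ξ η h
    by_contra hne
    have hU : Uf ξ = Uf η := congrArg (fun t => t.1.1) h
    have hcd : code (#(cseq ξ ∩ Uf ξ : Set Q)) = code (#(cseq η ∩ Uf η : Set Q)) :=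
      congrArg Prod.snd h
    have hcnt : #(cseq ξ ∩ Uf ξ : Set Q) = #(cseq η ∩ Uf η : Set Q) :=
      hcode _ _ (hcount_le ξ _) (hcount_le η _) hcd
    rcases lt_trichotomy ξ η with hlt | he | hlt
    · exact main ξ η hlt hU hcnt
    · exact hne he
    · exact main η ξ hlt hU.symm hcnt.symm
  have hbig : Order.succ μ ≤ μ := by
    have h1 : #((Order.succ μ : Cardinal.{u}).ord.ToType) ≤
        #({U : Set Q // IsUp le U} × T) := mk_le_of_injective hΦinj
    have h2 : #({U : Set Q // IsUp le U} × T) = #{U : Set Q // IsUp le U} * #T := by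
      rw [Cardinal.mk_prod, Cardinal.lift_id, Cardinal.lift_id]
    have h3 : #{U : Set Q // IsUp le U} ≤ μ := by
      have := mk_upsets_le hrefl htrans hQw (le := le)
      rwa [hQQ] at this
    calc Order.succ μ = #((Order.succ μ : Cardinal.{u}).ord.ToType) := hmkθ.symm
      _ ≤ #({U : Set Q // IsUp le U} × T) := h1
      _ = #{U : Set Q // IsUp le U} * #T := h2
      _ ≤ μ * μ := mul_le_mul' h3 hT
      _ = μ := Cardinal.mul_eq_self hμ
  exact absurd hbig (not_le.mpr (Order.lt_succ μ))

end Q2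
end CardQuotAux

open Cardinal CardQuotAux in
/-- Let `μ` be an infinite cardinal and `Q` a quasi-order with `|Q|_≡ = μ` such that
`P_{≤κ}(Q)` is well-quasi-ordered under the domination order, where `κ < ℵ_{μ⁺}`.
Then `|P_{≤κ}(Q)|_≡ ≤ μ`. -/
theorem card_quot_powersetCardLE_le {Q : Type u} (le : Q → Q → Prop)
    (hrefl : Reflexive le) (htrans : Transitive le)
    (μ : Cardinal.{u}) (hμ : Cardinal.aleph0 ≤ μ)
    (hQ : Cardinal.mk (Quot fun a b : Q => le a b ∧ le b a) = μ)
    (κ : Cardinal.{u}) (hκ : κ < Cardinal.aleph (Order.succ μ).ord)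
    (hwqo : ∀ f : ℕ → {A : Set Q // Cardinal.mk A ≤ κ},
      ∃ n m : ℕ, n < m ∧ Dominates le (f n).1 (f m).1) :
    Cardinal.mk (Quot fun A B : {A : Set Q // Cardinal.mk A ≤ κ} =>
      Dominates le A.1 B.1 ∧ Dominates le B.1 A.1) ≤ μ := by
  classical
  by_cases hκ0 : κ = 0
  · haveI hsub : Subsingleton {A : Set Q // Cardinal.mk A ≤ κ} := by
      constructor
      rintro ⟨A, hA⟩ ⟨B, hB⟩
      have hempty : ∀ C : Set Q, Cardinal.mk C ≤ κ → C = ∅ := by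
        intro C hC
        rw [hκ0] at hC
        have h0 : Cardinal.mk C = 0 := le_zero_iff.mp hC
        have : IsEmpty ↥C := Cardinal.mk_eq_zero_iff.mp h0
        exact Set.isEmpty_coe_sort.mp this
      exact Subtype.ext ((hempty A hA).trans (hempty B hB).symm)
    calc Cardinal.mk (Quot fun A B : {A : Set Q // Cardinal.mk A ≤ κ} =>
        Dominates le A.1 B.1 ∧ Dominates le B.1 A.1) ≤
          #{A : Set Q // Cardinal.mk A ≤ κ} := mk_quot_le
      _ ≤ 1 := Cardinal.le_one_iff_subsingleton.mpr hsub
      _ ≤ μ := le_trans Cardinal.one_le_aleph0 hμ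
  · have hκ1 : 1 ≤ κ := Cardinal.one_le_iff_ne_zero.mpr hκ0
    have hQw : Wqo le := by
      intro fq
      obtain ⟨n, m, hnm, hd⟩ := hwqo (fun n =>
        ⟨{fq n}, by rw [Cardinal.mk_singleton]; exact hκ1⟩)
      obtain ⟨F, hFinj, hFle⟩ := hd
      refine ⟨n, m, hnm, ?_⟩
      have h1 := hFle ⟨fq n, rfl⟩
      have h2 : ((F ⟨fq n, rfl⟩ : ↥({fq m} : Set Q)) : Q) = fq m := (F ⟨fq n, rfl⟩).2
      rwa [h2] at h1
    by_contra hcon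
    have hsucc : Order.succ μ ≤ Cardinal.mk (Quot fun A B : {A : Set Q // Cardinal.mk A ≤ κ} =>
        Dominates le A.1 B.1 ∧ Dominates le B.1 A.1) := Order.succ_le_of_lt (not_le.mp hcon)
    have hmkθ : #((Order.succ μ : Cardinal.{u}).ord.ToType) = Order.succ μ := by
      rw [Cardinal.mk_toType, Cardinal.card_ord]
    have hle : #((Order.succ μ : Cardinal.{u}).ord.ToType) ≤ Cardinal.mk (Quot fun A B : {A : Set Q // Cardinal.mk A ≤ κ} =>
        Dominates le A.1 B.1 ∧ Dominates le B.1 A.1) := by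
      rw [hmkθ]; exact hsucc
    obtain ⟨emb⟩ := (Cardinal.le_def _ _).mp hle
    set ρ : (Order.succ μ : Cardinal.{u}).ord.ToType → {A : Set Q // Cardinal.mk A ≤ κ} := fun i => (emb i).out with hρdef
    have hρ : ∀ i j, i ≠ j →
        ¬(Dominates le (ρ i).1 (ρ j).1 ∧ Dominates le (ρ j).1 (ρ i).1) := by
      intro i j hne hd
      apply hne
      apply emb.injective
      have h1 : Quot.mk _ (ρ i) = emb i := Quot.out_eq _
      have h2 : Quot.mk _ (ρ j) = emb j := Quot.out_eq _
      rw [← h1, ← h2]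
      exact Quot.sound hd
    set Inc : (Order.succ μ : Cardinal.{u}).ord.ToType → (Order.succ μ : Cardinal.{u}).ord.ToType → Prop := fun i j =>
      ¬ Dominates le (ρ i).1 (ρ j).1 ∧ ¬ Dominates le (ρ j).1 (ρ i).1 with hIncdef
    have θwf : WellFounded ((· < ·) : (Order.succ μ : Cardinal.{u}).ord.ToType → (Order.succ μ : Cardinal.{u}).ord.ToType → Prop) :=
      wellFounded_lt
    by_cases hcase : ∀ S : Set ((Order.succ μ : Cardinal.{u}).ord.ToType), ¬(#S ≤ μ) →
        ∃ i, i ∈ S ∧ ¬(#({j | j ∈ S ∧ Inc i j}) ≤ μ)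
    · -- build an infinite antichain, contradicting wqo
      have hbiguniv : ¬(#(Set.univ : Set ((Order.succ μ : Cardinal.{u}).ord.ToType)) ≤ μ) := by
        rw [Cardinal.mk_univ, hmkθ]
        exact not_le.mpr (Order.lt_succ μ)
      choose pick hpickmem hpickbig using hcase
      let nxt : {S : Set ((Order.succ μ : Cardinal.{u}).ord.ToType) // ¬(#S ≤ μ)} → {S : Set ((Order.succ μ : Cardinal.{u}).ord.ToType) // ¬(#S ≤ μ)} :=
        fun S => ⟨{j | j ∈ S.1 ∧ Inc (pick S.1 S.2) j}, hpickbig S.1 S.2⟩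
      let seq : ℕ → {S : Set ((Order.succ μ : Cardinal.{u}).ord.ToType) // ¬(#S ≤ μ)} := fun n => nxt^[n] ⟨Set.univ, hbiguniv⟩
      have hseqsucc : ∀ n, seq (n + 1) = nxt (seq n) := fun n =>
        Function.iterate_succ_apply' _ _ _
      let xs : ℕ → (Order.succ μ : Cardinal.{u}).ord.ToType := fun n => pick (seq n).1 (seq n).2
      have hsub : ∀ n m, n ≤ m → (seq m).1 ⊆ (seq n).1 := by
        intro n m hnm
        induction hnm with
        | refl => exact fun _ h => h
        | step _ ih =>
          rename_i k hk
          refine fun x hx => ih ?_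
          rw [hseqsucc k] at hx
          exact hx.1
      have hinc : ∀ n m, n < m → Inc (xs n) (xs m) := by
        intro n m hnm
        have h1 : xs m ∈ (seq m).1 := hpickmem _ _
        have h3 := hsub (n + 1) m hnm h1
        rw [hseqsucc n] at h3
        exact h3.2
      obtain ⟨n, m, hnm, hd⟩ := hwqo (fun n => ρ (xs n))
      exact (hinc n m hnm).1 hd
    · push_neg at hcase
      obtain ⟨S, hSbig, hSsm⟩ := hcase
      have sPwf : WellFounded (fun A B : {A : Set Q // Cardinal.mk A ≤ κ} =>
          Dominates le A.1 B.1 ∧ ¬ Dominates le B.1 A.1) :=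
        Wqo.strict_wf (fun A B C h1 h2 => dom_trans htrans h1 h2) hwqo
      have sθwf : WellFounded (fun i j : (Order.succ μ : Cardinal.{u}).ord.ToType =>
          Dominates le (ρ i).1 (ρ j).1 ∧ ¬ Dominates le (ρ j).1 (ρ i).1) :=
        InvImage.wf ρ sPwf
      set Bad : (Order.succ μ : Cardinal.{u}).ord.ToType → Set ((Order.succ μ : Cardinal.{u}).ord.ToType) := fun i =>
        if i ∈ S then {j | j ∈ S ∧ Inc i j} ∪ {i} else {i} with hBaddef
      have hBad : ∀ i, #(Bad i) ≤ μ := by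
        intro i
        by_cases h : i ∈ S
        · simp only [hBaddef, if_pos h]
          calc #(({j | j ∈ S ∧ Inc i j} ∪ {i} : Set ((Order.succ μ : Cardinal.{u}).ord.ToType))) ≤
              #({j | j ∈ S ∧ Inc i j} : Set ((Order.succ μ : Cardinal.{u}).ord.ToType)) + #({i} : Set ((Order.succ μ : Cardinal.{u}).ord.ToType)) := mk_union_le _ _
            _ ≤ μ + μ := add_le_add (hSsm i h) (by
                rw [Cardinal.mk_singleton]
                exact le_trans Cardinal.one_le_aleph0 hμ)
            _ = μ := Cardinal.add_eq_self hμ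
        · simp only [hBaddef, if_neg h]
          rw [Cardinal.mk_singleton]
          exact le_trans Cardinal.one_le_aleph0 hμ
      letI iwo : IsWellOrder ((Order.succ μ : Cardinal.{u}).ord.ToType) ((· < ·) : (Order.succ μ : Cardinal.{u}).ord.ToType → (Order.succ μ : Cardinal.{u}).ord.ToType → Prop) := isWellOrder_lt
      have hIio : ∀ ξ : (Order.succ μ : Cardinal.{u}).ord.ToType, #{η : (Order.succ μ : Cardinal.{u}).ord.ToType // η < ξ} ≤ μ := by
        intro ξ
        have h1 : (Ordinal.typein ((· < ·) : (Order.succ μ : Cardinal.{u}).ord.ToType → (Order.succ μ : Cardinal.{u}).ord.ToType → Prop) ξ).card =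
            #{η : (Order.succ μ : Cardinal.{u}).ord.ToType // η < ξ} := Ordinal.card_typein ξ
        have h2 : Ordinal.typein ((· < ·) : (Order.succ μ : Cardinal.{u}).ord.ToType → (Order.succ μ : Cardinal.{u}).ord.ToType → Prop) ξ <
            Ordinal.type ((· < ·) : (Order.succ μ : Cardinal.{u}).ord.ToType → (Order.succ μ : Cardinal.{u}).ord.ToType → Prop) := Ordinal.typein_lt_type _ ξ
        rw [Ordinal.type_toType] at h2
        have h3 := Cardinal.lt_ord.mp h2
        rw [h1] at h3
        exact Order.lt_succ_iff.mp h3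
      have keyA : ∀ (ξ : (Order.succ μ : Cardinal.{u}).ord.ToType) (rec : ∀ η : (Order.succ μ : Cardinal.{u}).ord.ToType, η < ξ → (Order.succ μ : Cardinal.{u}).ord.ToType),
          (S \ ⋃ (p : {η : (Order.succ μ : Cardinal.{u}).ord.ToType // η < ξ}), Bad (rec p.1 p.2)).Nonempty := by
        intro ξ rec
        have hrem : #(⋃ (p : {η : (Order.succ μ : Cardinal.{u}).ord.ToType // η < ξ}), Bad (rec p.1 p.2)) ≤ μ := by
          calc #(⋃ (p : {η : (Order.succ μ : Cardinal.{u}).ord.ToType // η < ξ}), Bad (rec p.1 p.2)) ≤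
              #{η : (Order.succ μ : Cardinal.{u}).ord.ToType // η < ξ} * ⨆ (p : {η : (Order.succ μ : Cardinal.{u}).ord.ToType // η < ξ}), #(Bad (rec p.1 p.2)) :=
                mk_iUnion_le _
            _ ≤ μ * μ := mul_le_mul' (hIio ξ) (ciSup_le' fun p => hBad _)
            _ = μ := Cardinal.mul_eq_self hμ
        by_contra hemp
        rw [Set.not_nonempty_iff_eq_empty, Set.diff_eq_empty] at hemp
        exact absurd (le_trans (mk_le_mk_of_subset hemp) hrem) (not_le.mpr hSbig)
      let F : (Order.succ μ : Cardinal.{u}).ord.ToType → (Order.succ μ : Cardinal.{u}).ord.ToType := θwf.fix (fun ξ rec =>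
        sθwf.min (S \ ⋃ (p : {η : (Order.succ μ : Cardinal.{u}).ord.ToType // η < ξ}), Bad (rec p.1 p.2)) (keyA ξ rec))
      have Fdef : ∀ ξ, F ξ =
          sθwf.min (S \ ⋃ (p : {η : (Order.succ μ : Cardinal.{u}).ord.ToType // η < ξ}), Bad (F p.1))
            (keyA ξ (fun η _ => F η)) := fun ξ => θwf.fix_eq _ ξ
      have hFmem : ∀ ξ, F ξ ∈ S \ ⋃ (p : {η : (Order.succ μ : Cardinal.{u}).ord.ToType // η < ξ}), Bad (F p.1) := by
        intro ξ
        rw [Fdef ξ]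
        exact sθwf.min_mem _ _
      have hFS : ∀ ξ, F ξ ∈ S := fun ξ => (hFmem ξ).1
      have hFnotbad : ∀ ξ η, η < ξ → F ξ ∉ Bad (F η) := by
        intro ξ η h hmem
        exact (hFmem ξ).2 (Set.mem_iUnion.mpr ⟨⟨η, h⟩, hmem⟩)
      have hFmin : ∀ ξ η, η < ξ →
          ¬(Dominates le (ρ (F ξ)).1 (ρ (F η)).1 ∧ ¬ Dominates le (ρ (F η)).1 (ρ (F ξ)).1) := by
        intro ξ η h
        have hsubav : (S \ ⋃ (p : {η' : (Order.succ μ : Cardinal.{u}).ord.ToType // η' < ξ}), Bad (F p.1)) ⊆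
            (S \ ⋃ (p : {η' : (Order.succ μ : Cardinal.{u}).ord.ToType // η' < η}), Bad (F p.1)) := by
          apply Set.diff_subset_diff_right
          apply Set.iUnion_subset
          intro p
          exact Set.subset_iUnion (fun p : {η' : (Order.succ μ : Cardinal.{u}).ord.ToType // η' < ξ} => Bad (F p.1))
            ⟨p.1, lt_trans p.2 h⟩
        have hmem : F ξ ∈ (S \ ⋃ (p : {η' : (Order.succ μ : Cardinal.{u}).ord.ToType // η' < η}), Bad (F p.1)) :=
          hsubav (hFmem ξ)
        have h2 := sθwf.not_lt_min _ hmem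
        rw [← Fdef η] at h2
        exact h2
      have hchain : ∀ η ξ : (Order.succ μ : Cardinal.{u}).ord.ToType, η < ξ →
          Dominates le (ρ (F η)).1 (ρ (F ξ)).1 ∧ ¬ Dominates le (ρ (F ξ)).1 (ρ (F η)).1 := by
        intro η ξ h
        have hne : F ξ ≠ F η := by
          intro he
          apply hFnotbad ξ η h
          by_cases hS' : F η ∈ S
          · simp only [hBaddef, if_pos hS']
            exact Or.inr (by rw [he]; rfl)
          · simp only [hBaddef, if_neg hS']
            rw [he]; rfl
        have hninc : ¬ Inc (F η) (F ξ) := by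
          intro hinc
          apply hFnotbad ξ η h
          simp only [hBaddef, if_pos (hFS η)]
          exact Or.inl ⟨hFS ξ, hinc⟩
        have hnboth := hρ (F η) (F ξ) (fun he => hne he.symm)
        rcases not_and_or.mp hninc with h1 | h1
        · have hD : Dominates le (ρ (F η)).1 (ρ (F ξ)).1 := not_not.mp h1
          exact ⟨hD, fun hD' => hnboth ⟨hD, hD'⟩⟩
        · have hD : Dominates le (ρ (F ξ)).1 (ρ (F η)).1 := not_not.mp h1
          by_cases hD2 : Dominates le (ρ (F η)).1 (ρ (F ξ)).1
          · exact ⟨hD2, fun hD' => hnboth ⟨hD2, hD'⟩⟩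
          · exact absurd ⟨hD, hD2⟩ (hFmin ξ η h)
      exact no_long_chain hrefl htrans hQw hμ hQ hκ (fun ξ => (ρ (F ξ)).1)
        (fun ξ => (ρ (F ξ)).2) (fun ξ η h => (hchain ξ η h).1) (fun ξ η h => (hchain ξ η h).2)
end
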